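/- arXiv:2210.11868 — 3 statements merged into one kernel-verified Lean document; each statement's English description precedes it below -/
import Mathlib

section
/- Let d ≥ 3, let ψ be a d-monotone Archimedean generator with pseudo-inverse φ and Williamson measure γ, let C = C_ψ and μ_C the associated measure. Then: (i) for every t ∈ (0,1), μ_C(L_t) = γ({1/φ(t)}); (ii) if ψ is strict then μ_C(L_0) = 0, and if ψ is non-strict (φ(0) < ∞) then μ_C(L_0) = γ({1/φ(0)}); (iii) the Kendall distribution function satisfies F_K^d(t) := μ_C({x ∈ [0,1]^d : C_ψ(x) ≤ t}) = γ([0, 1/φ(t)]) for every t ∈ (0,1). -/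
open MeasureTheory Set Filter Topology
open scoped ENNReal NNReal Classical

noncomputable section

/-- Extension of a generator `ψ` to `[0,∞]` with the convention `ψ(∞) := 0`. -/
def psiExt (ψ : ℝ → ℝ) (z : ℝ≥0∞) : ℝ := if z = ∞ then 0 else ψ z.toReal

/-- The pseudo-inverse `φ(y) = inf {z ∈ [0,∞] : ψ(z) = y}` of a generator. -/
def pseudoInv (ψ : ℝ → ℝ) (y : ℝ) : ℝ≥0∞ := sInf {z : ℝ≥0∞ | psiExt ψ z = y}

/-- An Archimedean generator: `ψ : [0,∞) → [0,1]` is continuous, non-increasing,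
satisfies `ψ 0 = 1` and `ψ(z) → 0` as `z → ∞`, and is strictly decreasing on
`[0, inf {z ∈ [0,∞] : ψ z = 0}]`. -/
structure IsGenerator (ψ : ℝ → ℝ) : Prop where
  continuousOn : ContinuousOn ψ (Ici 0)
  mem_Icc : ∀ z : ℝ, 0 ≤ z → ψ z ∈ Icc (0 : ℝ) 1
  map_zero : ψ 0 = 1
  tendsto_atTop : Tendsto ψ atTop (𝓝 0)
  antitoneOn : AntitoneOn ψ (Ici 0)
  strictAnti : ∀ ⦃x y : ℝ⦄, 0 ≤ x → x < y → ENNReal.ofReal y ≤ pseudoInv ψ 0 → ψ y < ψ x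

/-- The left-hand derivative `D⁻f`. -/
def leftDeriv (f : ℝ → ℝ) (z : ℝ) : ℝ := derivWithin f (Iio z) z

/-- The right-hand derivative `D⁺f`. -/
def rightDeriv (f : ℝ → ℝ) (z : ℝ) : ℝ := derivWithin f (Ioi z) z

/-- A `d`-monotone Archimedean generator: the derivatives `ψ⁽ᵏ⁾` exist on `(0,∞)` for
`k = 1,…,d-2`, and `(-1)^(d-2) · ψ^(d-2)` is non-negative, non-increasing and convex
on `(0,∞)`. -/
structure IsdMonotoneGenerator (d : ℕ) (ψ : ℝ → ℝ) : Prop where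
  toIsGenerator : IsGenerator ψ
  differentiable : ∀ k : ℕ, k < d - 2 → ∀ z : ℝ, 0 < z → DifferentiableAt ℝ (deriv^[k] ψ) z
  nonneg : ∀ z : ℝ, 0 < z → 0 ≤ (-1 : ℝ) ^ (d - 2) * deriv^[d - 2] ψ z
  antitoneOn : AntitoneOn (fun z => (-1 : ℝ) ^ (d - 2) * deriv^[d - 2] ψ z) (Ioi 0)
  convexOn : ConvexOn ℝ (Ioi 0) (fun z => (-1 : ℝ) ^ (d - 2) * deriv^[d - 2] ψ z)

/-- The `d`-dimensional Archimedean copula generated by `ψ`: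
`C_ψ(x) = ψ(φ(x₁) + ⋯ + φ(x_d))` (with `ψ(∞) := 0`). -/
def archCopula (d : ℕ) (ψ : ℝ → ℝ) (x : Fin d → ℝ) : ℝ :=
  psiExt ψ (∑ i, pseudoInv ψ (x i))

/-- A generator is strict if `ψ(z) > 0` for all `z ≥ 0`. -/
def IsStrictGenerator (ψ : ℝ → ℝ) : Prop := ∀ z : ℝ, 0 ≤ z → 0 < ψ z

/-- The level set `L_t = {x ∈ [0,1]^d : C_ψ(x) = t}`. -/
def levelSet (d : ℕ) (ψ : ℝ → ℝ) (t : ℝ) : Set (Fin d → ℝ) :=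
  {x | (∀ i, x i ∈ Icc (0 : ℝ) 1) ∧ archCopula d ψ x = t}

/-- The Williamson transform `(W_d γ)(z) = ∫ (1 - tz)₊^(d-1) dγ(t)`. -/
def williamson (d : ℕ) (γ : Measure ℝ) (z : ℝ) : ℝ :=
  ∫ t, max (1 - t * z) 0 ^ (d - 1) ∂γ

/-- The class `P_{W_d}`: Borel probability measures on `[0,∞)` with `γ({0}) = 0` and
`∫_{[0,1]} (1-t)^(d-1) dγ(t) = 1/2`. -/
def memPW (d : ℕ) (γ : Measure ℝ) : Prop :=
  IsProbabilityMeasure γ ∧ γ (Iio 0) = 0 ∧ γ {0} = 0 ∧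
    ∫ t in Icc (0 : ℝ) 1, (1 - t) ^ (d - 1) ∂γ = 1 / 2


open scoped Pointwise

section ArchAux
namespace ArchProof

variable {ψ : ℝ → ℝ}

lemma psiExt_coe (ψ : ℝ → ℝ) {u : ℝ≥0∞} (hu : u ≠ ∞) : psiExt ψ u = ψ u.toReal := by
  simp [psiExt, hu]

lemma psiExt_top (ψ : ℝ → ℝ) : psiExt ψ ∞ = 0 := by simp [psiExt]

lemma psiExt_nonneg (hg : IsGenerator ψ) (u : ℝ≥0∞) : 0 ≤ psiExt ψ u := by
  unfold psiExt; split
  · exact le_refl 0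
  · exact (hg.mem_Icc _ ENNReal.toReal_nonneg).1

lemma psiExt_le_one (hg : IsGenerator ψ) (u : ℝ≥0∞) : psiExt ψ u ≤ 1 := by
  unfold psiExt; split
  · exact zero_le_one
  · exact (hg.mem_Icc _ ENNReal.toReal_nonneg).2

lemma psiExt_zero (hg : IsGenerator ψ) : psiExt ψ 0 = 1 := by
  simp [psiExt, hg.map_zero]

lemma psiExt_antitone (hg : IsGenerator ψ) : Antitone (psiExt ψ) := by
  intro u v huv
  rcases eq_or_ne v ∞ with rfl | hv
  · rw [psiExt_top]; exact psiExt_nonneg hg u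
  · have hu : u ≠ ∞ := fun h => hv (top_le_iff.mp (h ▸ huv))
    rw [psiExt_coe ψ hu, psiExt_coe ψ hv]
    exact hg.antitoneOn ENNReal.toReal_nonneg ENNReal.toReal_nonneg
      ((ENNReal.toReal_le_toReal hu hv).mpr huv)

lemma pseudoInv_spec (hg : IsGenerator ψ) {t : ℝ}
    (h : ∃ v : ℝ≥0∞, v ≠ ∞ ∧ psiExt ψ v = t) :
    pseudoInv ψ t ≠ ∞ ∧ psiExt ψ (pseudoInv ψ t) = t := by
  obtain ⟨v, hv, hvt⟩ := h
  set A : Set ℝ := {z : ℝ | 0 ≤ z ∧ ψ z = t} with hA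
  have hvA : v.toReal ∈ A := ⟨ENNReal.toReal_nonneg, by rwa [psiExt_coe ψ hv] at hvt⟩
  have hclosed : IsClosed A := by
    have : A = Ici 0 ∩ ψ ⁻¹' {t} := by ext z; simp [hA]
    rw [this]
    exact hg.continuousOn.preimage_isClosed_of_isClosed isClosed_Ici isClosed_singleton
  have hbdd : BddBelow A := ⟨0, fun x hx => hx.1⟩
  have hmem : sInf A ∈ A := hclosed.csInf_mem ⟨_, hvA⟩ hbdd
  have key : pseudoInv ψ t = ENNReal.ofReal (sInf A) := by
    apply le_antisymm
    · apply sInf_le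
      show psiExt ψ _ = t
      rw [psiExt_coe ψ ENNReal.ofReal_ne_top, ENNReal.toReal_ofReal hmem.1]
      exact hmem.2
    · apply le_sInf; intro w hw
      rcases eq_or_ne w ∞ with rfl | hw'
      · exact le_top
      · have hwA : w.toReal ∈ A := ⟨ENNReal.toReal_nonneg, by
          simpa [psiExt_coe ψ hw'] using hw⟩
        calc ENNReal.ofReal (sInf A) ≤ ENNReal.ofReal w.toReal :=
              ENNReal.ofReal_le_ofReal (csInf_le hbdd hwA)
          _ = w := ENNReal.ofReal_toReal hw'
  refine ⟨key ▸ ENNReal.ofReal_ne_top, ?_⟩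
  rw [key, psiExt_coe ψ ENNReal.ofReal_ne_top, ENNReal.toReal_ofReal hmem.1]
  exact hmem.2

lemma pseudoInv_mem (hg : IsGenerator ψ) {t : ℝ} (ht : 0 < t) (ht1 : t ≤ 1) :
    pseudoInv ψ t ≠ ∞ ∧ psiExt ψ (pseudoInv ψ t) = t := by
  apply pseudoInv_spec hg
  obtain ⟨M, hM0, hM⟩ : ∃ M : ℝ, 0 ≤ M ∧ ψ M < t := by
    obtain ⟨M, hM⟩ := ((hg.tendsto_atTop.eventually_lt_const ht).and
      (eventually_ge_atTop (0:ℝ))).exists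
    exact ⟨M, hM.2, hM.1⟩
  have hsub : Icc (0:ℝ) M ⊆ Ici 0 := fun z hz => hz.1
  have : t ∈ Icc (ψ M) (ψ 0) := ⟨hM.le, hg.map_zero ▸ ht1⟩
  obtain ⟨z, hz, hzt⟩ := intermediate_value_Icc' hM0 (hg.continuousOn.mono hsub) this
  exact ⟨ENNReal.ofReal z, ENNReal.ofReal_ne_top, by
    rw [psiExt_coe ψ ENNReal.ofReal_ne_top, ENNReal.toReal_ofReal hz.1]; exact hzt⟩

lemma psiExt_pseudoInv_zero (hg : IsGenerator ψ) : psiExt ψ (pseudoInv ψ 0) = 0 := by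
  rcases eq_or_ne (pseudoInv ψ 0) ∞ with h | h
  · rw [h, psiExt_top]
  · obtain ⟨v, hv, hv'⟩ := sInf_lt_iff.mp (lt_top_iff_ne_top.mpr h :
      sInf {z : ℝ≥0∞ | psiExt ψ z = 0} < ∞)
    exact (pseudoInv_spec hg ⟨v, hv'.ne, hv⟩).2

lemma psiExt_eq_zero_iff (hg : IsGenerator ψ) {u : ℝ≥0∞} :
    psiExt ψ u = 0 ↔ pseudoInv ψ 0 ≤ u := by
  constructor
  · exact fun h => sInf_le h
  · intro h
    have h1 : psiExt ψ u ≤ 0 := (psiExt_pseudoInv_zero hg) ▸ psiExt_antitone hg h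
    exact le_antisymm h1 (psiExt_nonneg hg u)

lemma pseudoInv_zero_pos (hg : IsGenerator ψ) : 0 < pseudoInv ψ 0 := by
  rcases eq_or_lt_of_le (zero_le : 0 ≤ pseudoInv ψ 0) with h | h
  · exfalso
    have := psiExt_pseudoInv_zero hg
    rw [← h, psiExt_zero hg] at this
    norm_num at this
  · exact h

lemma psiExt_strictAnti (hg : IsGenerator ψ) {u v : ℝ≥0∞} (huv : u < v)
    (hv : v ≤ pseudoInv ψ 0) : psiExt ψ v < psiExt ψ u := by
  have hu : u ≠ ∞ := huv.ne_top
  have hupos : 0 < psiExt ψ u := by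
    rcases (psiExt_nonneg hg u).eq_or_lt with h | h
    · exfalso
      have := (psiExt_eq_zero_iff hg).mp h.symm
      exact absurd (hv.trans this) (not_le.mpr huv)
    · exact h
  rcases eq_or_ne v ∞ with rfl | hv'
  · rw [psiExt_top]; exact hupos
  · rw [psiExt_coe ψ hu, psiExt_coe ψ hv']
    apply hg.strictAnti ENNReal.toReal_nonneg
      ((ENNReal.toReal_lt_toReal hu hv').mpr huv)
    rwa [ENNReal.ofReal_toReal hv']

lemma lt_pseudoInv_zero_of_pos (hg : IsGenerator ψ) {t : ℝ} (ht : 0 < t) {u : ℝ≥0∞}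
    (hu : psiExt ψ u = t) : u < pseudoInv ψ 0 := by
  by_contra h
  push_neg at h
  rw [(psiExt_eq_zero_iff hg).mpr h] at hu
  exact absurd hu.symm ht.ne'

lemma psiExt_eq_iff (hg : IsGenerator ψ) {t : ℝ} (ht : 0 < t) (ht1 : t ≤ 1) {u : ℝ≥0∞} :
    psiExt ψ u = t ↔ u = pseudoInv ψ t := by
  have hatt := (pseudoInv_mem hg ht ht1).2
  constructor
  · intro h
    have hu := lt_pseudoInv_zero_of_pos hg ht h
    have hc := lt_pseudoInv_zero_of_pos hg ht hatt
    rcases lt_trichotomy u (pseudoInv ψ t) with hlt | heq | hgt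
    · exact absurd (psiExt_strictAnti hg hlt hc.le) (by rw [h, hatt]; exact lt_irrefl t)
    · exact heq
    · exact absurd (psiExt_strictAnti hg hgt hu.le) (by rw [h, hatt]; exact lt_irrefl t)
  · rintro rfl; exact hatt

lemma psiExt_le_iff (hg : IsGenerator ψ) {t : ℝ} (ht : 0 < t) (ht1 : t ≤ 1) {u : ℝ≥0∞} :
    psiExt ψ u ≤ t ↔ pseudoInv ψ t ≤ u := by
  have hatt := (pseudoInv_mem hg ht ht1).2
  constructor
  · intro h
    by_contra hc
    push_neg at hc
    have := psiExt_strictAnti hg hc (lt_pseudoInv_zero_of_pos hg ht hatt).le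
    rw [hatt] at this
    exact absurd (lt_of_lt_of_le this h) (lt_irrefl t)
  · intro h
    calc psiExt ψ u ≤ psiExt ψ (pseudoInv ψ t) := psiExt_antitone hg h
      _ = t := hatt

lemma psiExt_pseudoInv (hg : IsGenerator ψ) {x : ℝ} (hx : x ∈ Icc (0:ℝ) 1) :
    psiExt ψ (pseudoInv ψ x) = x := by
  rcases hx.1.eq_or_lt with h | h
  · rw [← h]; exact psiExt_pseudoInv_zero hg
  · exact (pseudoInv_mem hg h hx.2).2

lemma le_psiExt_of_le_pseudoInv (hg : IsGenerator ψ) {x : ℝ} (hx : x ∈ Icc (0:ℝ) 1)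
    {z : ℝ≥0∞} (h : z ≤ pseudoInv ψ x) : x ≤ psiExt ψ z := by
  calc x = psiExt ψ (pseudoInv ψ x) := (psiExt_pseudoInv hg hx).symm
    _ ≤ psiExt ψ z := psiExt_antitone hg h

lemma le_pseudoInv_of_le_psiExt (hg : IsGenerator ψ) {x : ℝ} (hx : x ∈ Icc (0:ℝ) 1)
    {z : ℝ≥0∞} (hz : z < pseudoInv ψ 0) (h : x ≤ psiExt ψ z) : z ≤ pseudoInv ψ x := by
  by_contra hc
  push_neg at hc
  have := psiExt_strictAnti hg hc hz.le
  rw [psiExt_pseudoInv hg hx] at this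
  exact absurd (lt_of_lt_of_le this h) (lt_irrefl _)

lemma pseudoInv_one (hg : IsGenerator ψ) : pseudoInv ψ 1 = 0 := by
  refine le_antisymm (sInf_le ?_) zero_le
  show psiExt ψ 0 = 1
  exact psiExt_zero hg

lemma pseudoInv_pos (hg : IsGenerator ψ) {t : ℝ} (ht : t < 1) : 0 < pseudoInv ψ t := by
  rcases lt_trichotomy t 0 with h1 | rfl | h1
  · have hempty : {z : ℝ≥0∞ | psiExt ψ z = t} = ∅ := by
      apply eq_empty_iff_forall_notMem.mpr
      intro z hz
      exact absurd (hz ▸ psiExt_nonneg hg z) (not_le.mpr h1)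
    rw [pseudoInv, hempty, sInf_empty]
    simp
  · exact pseudoInv_zero_pos hg
  · rcases (zero_le : 0 ≤ pseudoInv ψ t).eq_or_lt with h | h
    · exfalso
      have h2 := (pseudoInv_mem hg h1 ht.le).2
      rw [← h, psiExt_zero hg] at h2
      linarith
    · exact h

end ArchProof

noncomputable section Part1b
namespace ArchProof
variable {ψ : ℝ → ℝ}

lemma pseudoInv_eq_top_of_neg (hg : IsGenerator ψ) {y : ℝ} (hy : y < 0) :
    pseudoInv ψ y = ∞ := by
  have : {z : ℝ≥0∞ | psiExt ψ z = y} = ∅ := by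
    apply eq_empty_iff_forall_notMem.mpr
    intro z hz
    exact absurd (hz ▸ psiExt_nonneg hg z) (not_le.mpr hy)
  rw [pseudoInv, this, sInf_empty]

lemma pseudoInv_eq_top_of_gt_one (hg : IsGenerator ψ) {y : ℝ} (hy : 1 < y) :
    pseudoInv ψ y = ∞ := by
  have : {z : ℝ≥0∞ | psiExt ψ z = y} = ∅ := by
    apply eq_empty_iff_forall_notMem.mpr
    intro z hz
    exact absurd (hz ▸ psiExt_le_one hg z) (not_le.mpr hy)
  rw [pseudoInv, this, sInf_empty]

lemma pseudoInv_antitoneOn (hg : IsGenerator ψ) : AntitoneOn (pseudoInv ψ) (Icc 0 1) := by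
  intro x hx x' hx' hxx'
  rcases eq_or_ne (pseudoInv ψ x) ∞ with h | h
  · rw [h]; exact le_top
  · have hatt : psiExt ψ (pseudoInv ψ x) = x := psiExt_pseudoInv hg hx
    have hx'mem : x' ∈ Icc (ψ ((pseudoInv ψ x).toReal)) (ψ 0) := by
      constructor
      · rw [← psiExt_coe ψ h, hatt]; exact hxx'
      · rw [hg.map_zero]; exact hx'.2
    obtain ⟨z, hz, hzx⟩ := intermediate_value_Icc' ENNReal.toReal_nonneg
      (hg.continuousOn.mono (fun w hw => hw.1)) hx'mem
    calc pseudoInv ψ x' ≤ ENNReal.ofReal z := sInf_le (by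
          show psiExt ψ _ = x'
          rw [psiExt_coe ψ ENNReal.ofReal_ne_top, ENNReal.toReal_ofReal hz.1]
          exact hzx)
      _ ≤ ENNReal.ofReal (pseudoInv ψ x).toReal := ENNReal.ofReal_le_ofReal hz.2
      _ = pseudoInv ψ x := ENNReal.ofReal_toReal h

lemma measurable_pseudoInv (hg : IsGenerator ψ) : Measurable (pseudoInv ψ) := by
  apply measurable_of_Ioi
  intro c
  rcases eq_or_ne c ∞ with rfl | hc
  · simp
  · have hdecomp : pseudoInv ψ ⁻¹' Ioi c =
        (Iio (0:ℝ)) ∪ (Ioi (1:ℝ)) ∪ ({y | c < pseudoInv ψ y} ∩ Icc 0 1) := by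
      ext y
      simp only [mem_preimage, mem_Ioi, mem_union, mem_inter_iff, mem_setOf_eq, mem_Iio, mem_Icc]
      constructor
      · intro h
        rcases lt_or_ge y 0 with h1 | h1
        · exact Or.inl (Or.inl h1)
        rcases le_or_gt y 1 with h2 | h2
        · exact Or.inr ⟨h, h1, h2⟩
        · exact Or.inl (Or.inr h2)
      · rintro ((h1 | h1) | ⟨h1, _⟩)
        · rw [pseudoInv_eq_top_of_neg hg h1]; exact lt_top_iff_ne_top.mpr hc
        · rw [pseudoInv_eq_top_of_gt_one hg h1]; exact lt_top_iff_ne_top.mpr hc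
        · exact h1
    rw [hdecomp]
    refine (measurableSet_Iio.union measurableSet_Ioi).union ?_
    have hOC : OrdConnected ({y | c < pseudoInv ψ y} ∩ Icc (0:ℝ) 1) := by
      constructor
      rintro y1 ⟨_, hy1'⟩ y2 ⟨hy2, hy2'⟩ w hw
      have hwIcc : w ∈ Icc (0:ℝ) 1 := ⟨hy1'.1.trans hw.1, hw.2.trans hy2'.2⟩
      exact ⟨lt_of_lt_of_le hy2 (pseudoInv_antitoneOn hg hwIcc hy2' hw.2), hwIcc⟩
    exact hOC.measurableSet

end ArchProof
end Part1b


noncomputable section Part2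
namespace ArchProof

/-- generalized cumulative vector: endpoint `θ`. -/
def cumg (n : ℕ) (θ : ℝ) (u : Fin n → ℝ) (k : ℕ) : ℝ :=
  if h : 1 ≤ k ∧ k ≤ n then u ⟨k - 1, by omega⟩ else if k = 0 then 0 else θ

/-- spacings of a vector in the ordered simplex. -/
def spac (n : ℕ) (u : Fin n → ℝ) (i : Fin (n + 1)) : ℝ :=
  cumg n 1 u (i.1 + 1) - cumg n 1 u i.1

/-- ordered simplex with endpoint `θ`. -/
def oSimplex (n : ℕ) (θ : ℝ) : Set (Fin n → ℝ) :=
  {u | ∀ i : Fin (n + 1), cumg n θ u i.1 ≤ cumg n θ u (i.1 + 1)}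

lemma cumg_zero (n : ℕ) (θ : ℝ) (u : Fin n → ℝ) : cumg n θ u 0 = 0 := by
  simp [cumg]

lemma cumg_last (n : ℕ) (θ : ℝ) (u : Fin n → ℝ) : cumg n θ u (n + 1) = θ := by
  have : ¬ (1 ≤ n + 1 ∧ n + 1 ≤ n) := by omega
  simp [cumg, this]

lemma sum_spac (n : ℕ) (u : Fin n → ℝ) : ∑ i, spac n u i = 1 := by
  have : ∑ i : Fin (n+1), spac n u i
      = ∑ k ∈ Finset.range (n+1), (cumg n 1 u (k + 1) - cumg n 1 u k) :=
    Fin.sum_univ_eq_sum_range (fun k => cumg n 1 u (k + 1) - cumg n 1 u k) (n+1)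
  rw [this, Finset.sum_range_sub (cumg n 1 u), cumg_last, cumg_zero, sub_zero]

lemma cumg_smul (n : ℕ) (θ ρ : ℝ) (u : Fin n → ℝ) (k : ℕ) :
    cumg n (ρ * θ) (ρ • u) k = ρ * cumg n θ u k := by
  unfold cumg
  split
  · simp
  · split <;> simp

lemma oSimplex_smul (n : ℕ) {ρ : ℝ} (hρ : 0 < ρ) (θ : ℝ) :
    oSimplex n (ρ * θ) = ρ • oSimplex n θ := by
  ext u
  rw [mem_smul_set_iff_inv_smul_mem₀ hρ.ne']
  constructor
  · intro h i
    have := h i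
    have hu : u = ρ • (ρ⁻¹ • u) := by
      rw [smul_smul, mul_inv_cancel₀ hρ.ne', one_smul]
    rw [hu, cumg_smul, cumg_smul] at this
    exact le_of_mul_le_mul_left this hρ
  · intro h i
    have := h i
    have hu : u = ρ • (ρ⁻¹ • u) := by
      rw [smul_smul, mul_inv_cancel₀ hρ.ne', one_smul]
    rw [hu, cumg_smul, cumg_smul]
    exact (mul_le_mul_iff_right₀ hρ).mpr this

/-- the `b`-shifted upper set. -/
def upSet (n : ℕ) (b : Fin (n + 1) → ℝ) : Set (Fin n → ℝ) :=
  {u | ∀ i : Fin (n + 1), b i ≤ spac n u i}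

def bex (n : ℕ) (b : Fin (n + 1) → ℝ) (j : ℕ) : ℝ :=
  if h : j < n + 1 then b ⟨j, h⟩ else 0

def bsum (n : ℕ) (b : Fin (n + 1) → ℝ) (k : ℕ) : ℝ := ∑ j ∈ Finset.range k, bex n b j

lemma bsum_total (n : ℕ) (b : Fin (n + 1) → ℝ) : bsum n b (n + 1) = ∑ i, b i := by
  rw [bsum, ← Fin.sum_univ_eq_sum_range (bex n b) (n+1)]
  apply Finset.sum_congr rfl
  intro i _
  simp [bex, i.2]

def cshift (n : ℕ) (b : Fin (n + 1) → ℝ) : Fin n → ℝ := fun j => bsum n b (j.1 + 1)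

lemma cumg_sub_cshift (n : ℕ) (hn : 1 ≤ n) (b : Fin (n + 1) → ℝ) (u : Fin n → ℝ)
    {k : ℕ} (hk : k ≤ n + 1) :
    cumg n (1 - ∑ i, b i) (u - cshift n b) k = cumg n 1 u k - bsum n b k := by
  rcases Nat.eq_zero_or_pos k with rfl | hk1
  · simp [cumg_zero, bsum]
  rcases Nat.lt_or_ge k (n+1) with hkn | hkn
  · have hkn' : k ≤ n := by omega
    have h : 1 ≤ k ∧ k ≤ n := ⟨hk1, hkn'⟩
    simp only [cumg, dif_pos h]
    have : (u - cshift n b) ⟨k - 1, by omega⟩ = u ⟨k - 1, by omega⟩ - bsum n b k := by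
      simp only [Pi.sub_apply, cshift]
      congr 2
      omega
    exact this
  · have hk2 : k = n + 1 := by omega
    subst hk2
    rw [cumg_last, cumg_last, bsum_total]

lemma upSet_eq_vadd (n : ℕ) (hn : 1 ≤ n) (b : Fin (n + 1) → ℝ) :
    upSet n b = cshift n b +ᵥ oSimplex n (1 - ∑ i, b i) := by
  ext u
  rw [Set.mem_vadd_set_iff_neg_vadd_mem]
  have huv : (-cshift n b) +ᵥ u = u - cshift n b := by
    ext j; simp [vadd_eq_add]; ring
  rw [huv]
  constructor
  · intro h i
    rw [cumg_sub_cshift n hn b u (by omega : i.1 + 1 ≤ n + 1),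
        cumg_sub_cshift n hn b u (by omega : i.1 ≤ n + 1)]
    have hb : bsum n b (i.1 + 1) - bsum n b i.1 = b i := by
      rw [bsum, bsum, Finset.sum_range_succ, add_sub_cancel_left]
      simp [bex, i.2]
    have := h i
    rw [spac] at this
    linarith
  · intro h i
    have := h i
    rw [cumg_sub_cshift n hn b u (by omega : i.1 + 1 ≤ n + 1),
        cumg_sub_cshift n hn b u (by omega : i.1 ≤ n + 1)] at this
    have hb : bsum n b (i.1 + 1) - bsum n b i.1 = b i := by
      rw [bsum, bsum, Finset.sum_range_succ, add_sub_cancel_left]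
      simp [bex, i.2]
    rw [spac]
    linarith

lemma upSet_empty (n : ℕ) (b : Fin (n + 1) → ℝ) (hb : 1 < ∑ i, b i) :
    upSet n b = ∅ := by
  apply eq_empty_iff_forall_notMem.mpr
  intro u hu
  have h1 : ∑ i, b i ≤ ∑ i, spac n u i := Finset.sum_le_sum fun i _ => hu i
  rw [sum_spac] at h1
  linarith

lemma cumg_mono (n : ℕ) (θ : ℝ) {u : Fin n → ℝ} (hu : u ∈ oSimplex n θ)
    {k l : ℕ} (hkl : k ≤ l) (hl : l ≤ n + 1) : cumg n θ u k ≤ cumg n θ u l := by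
  induction l with
  | zero => simp_all
  | succ m ih =>
    rcases Nat.eq_or_lt_of_le hkl with rfl | hkm
    · exact le_refl _
    · calc cumg n θ u k ≤ cumg n θ u m := ih (by omega) (by omega)
        _ ≤ cumg n θ u (m + 1) := hu ⟨m, by omega⟩

lemma oSimplex_zero_subsingleton (n : ℕ) (hn : 1 ≤ n) {u : Fin n → ℝ}
    (hu : u ∈ oSimplex n 0) : u = 0 := by
  funext j
  have h1 : cumg n 0 u 0 ≤ cumg n 0 u (j.1 + 1) := cumg_mono n 0 hu (by omega) (by omega)
  have h2 : cumg n 0 u (j.1 + 1) ≤ cumg n 0 u (n + 1) := cumg_mono n 0 hu (by omega) (le_refl _)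
  rw [cumg_zero, cumg_last] at *
  have hj : cumg n 0 u (j.1 + 1) = u j := by
    have h : 1 ≤ j.1 + 1 ∧ j.1 + 1 ≤ n := ⟨by omega, by omega⟩
    simp only [cumg, dif_pos h]
    congr
  rw [hj] at h1 h2
  show u j = 0
  linarith

end ArchProof

noncomputable section VolumePart
namespace ArchProof

lemma continuous_cumg (n : ℕ) (θ : ℝ) (k : ℕ) : Continuous fun u : Fin n → ℝ => cumg n θ u k := by
  unfold cumg
  split
  · exact continuous_apply _
  · split <;> exact continuous_const

lemma isClosed_oSimplex (n : ℕ) (θ : ℝ) : IsClosed (oSimplex n θ) := by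
  have : oSimplex n θ = ⋂ i : Fin (n+1), {u | cumg n θ u i.1 ≤ cumg n θ u (i.1+1)} := by
    ext u; simp [oSimplex]
  rw [this]
  exact isClosed_iInter fun i => isClosed_le (continuous_cumg n θ i.1) (continuous_cumg n θ (i.1+1))

lemma isClosed_upSet (n : ℕ) (b : Fin (n+1) → ℝ) : IsClosed (upSet n b) := by
  have : upSet n b = ⋂ i : Fin (n+1), {u | b i ≤ cumg n 1 u (i.1+1) - cumg n 1 u i.1} := by
    ext u; simp [upSet, spac]
  rw [this]
  exact isClosed_iInter fun i => isClosed_le continuous_const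
    ((continuous_cumg n 1 (i.1+1)).sub (continuous_cumg n 1 i.1))

lemma volume_upSet (n : ℕ) (hn : 1 ≤ n) (b : Fin (n + 1) → ℝ) :
    volume (upSet n b) = ENNReal.ofReal (max (1 - ∑ i, b i) 0 ^ n) * volume (oSimplex n 1) := by
  set ρ := 1 - ∑ i, b i with hρ
  rcases lt_trichotomy ρ 0 with h | h | h
  · rw [upSet_empty n b (by linarith)]
    rw [max_eq_right h.le]
    simp [zero_pow (by omega : n ≠ 0)]
  · haveI : Nonempty (Fin n) := ⟨⟨0, by omega⟩⟩
    rw [upSet_eq_vadd n hn b, ← hρ, measure_vadd]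
    rw [max_eq_right h.le]
    rw [zero_pow (by omega : n ≠ 0)]
    simp only [ENNReal.ofReal_zero, zero_mul]
    have hsub : oSimplex n ρ ⊆ {0} := fun u hu =>
      oSimplex_zero_subsingleton n hn (by rwa [h] at hu)
    refine le_antisymm (le_trans (measure_mono hsub) ?_) zero_le
    have : ({0} : Set (Fin n → ℝ)) = (⊥ : Submodule ℝ (Fin n → ℝ)) := by
      simp
    rw [this, MeasureTheory.Measure.addHaar_submodule]
    exact bot_ne_top
  · rw [upSet_eq_vadd n hn b, ← hρ, measure_vadd]
    have : oSimplex n ρ = ρ • oSimplex n 1 := by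
      rw [← oSimplex_smul n h 1, mul_one]
    rw [this, MeasureTheory.Measure.addHaar_smul]
    rw [max_eq_left (by linarith)]
    congr 2
    rw [Module.finrank_fintype_fun_eq_card, Fintype.card_fin]
    rw [abs_of_nonneg (pow_nonneg h.le n)]

end ArchProof
end VolumePart

noncomputable section FactPart
namespace ArchProof

lemma cumg_coord (n : ℕ) (θ : ℝ) (u : Fin n → ℝ) (j : Fin n) :
    cumg n θ u (j.1 + 1) = u j := by
  have h : 1 ≤ j.1 + 1 ∧ j.1 + 1 ≤ n := ⟨by omega, by omega⟩
  simp only [cumg, dif_pos h]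
  congr

def msetPerm (n : ℕ) (τ : Equiv.Perm (Fin n)) : Set (Fin n → ℝ) :=
  {u | (∀ j, u j ∈ Icc (0:ℝ) 1) ∧ Monotone (u ∘ τ)}

lemma oSimplex_one_eq_mset (n : ℕ) (hn : 1 ≤ n) :
    oSimplex n 1 = msetPerm n (Equiv.refl _) := by
  ext u
  constructor
  · intro hu
    refine ⟨fun j => ⟨?_, ?_⟩, ?_⟩
    · have := cumg_mono n 1 hu (Nat.zero_le (j.1+1)) (by omega)
      rwa [cumg_zero, cumg_coord] at this
    · have := cumg_mono n 1 hu (by omega : j.1 + 1 ≤ n + 1) (le_refl _)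
      rwa [cumg_last, cumg_coord] at this
    · intro j k hjk
      show u j ≤ u k
      have := cumg_mono n 1 hu (by omega : j.1 + 1 ≤ k.1 + 1) (by omega)
      rwa [cumg_coord, cumg_coord] at this
  · rintro ⟨hb, hm⟩ i
    rcases Nat.eq_zero_or_pos i.1 with h0 | h0
    · rw [h0, cumg_zero, zero_add]
      have h2 : (1:ℕ) ≤ 1 ∧ 1 ≤ n := ⟨le_refl _, by omega⟩
      simp only [cumg, dif_pos h2]
      exact (hb _).1
    · rcases Nat.lt_or_ge i.1 n with h1 | h1
      · have e1 : cumg n 1 u i.1 = u ⟨i.1 - 1, by omega⟩ := by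
          have := cumg_coord n 1 u ⟨i.1 - 1, by omega⟩
          simp only at this
          rw [← this]
          congr 1
          omega
        have e2 : cumg n 1 u (i.1 + 1) = u ⟨i.1, h1⟩ := cumg_coord n 1 u ⟨i.1, h1⟩
        rw [e1, e2]
        exact hm (Fin.mk_le_mk.mpr (by omega))
      · have h2 : i.1 = n := by omega
        have e1 : cumg n 1 u i.1 = u ⟨i.1 - 1, by omega⟩ := by
          have := cumg_coord n 1 u ⟨i.1 - 1, by omega⟩
          simp only at this
          rw [← this]
          congr 1
          omega
        rw [e1]
        have h3 : i.1 + 1 = n + 1 := by omega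
        rw [h3, cumg_last]
        exact (hb _).2

lemma isClosed_msetPerm (n : ℕ) (τ : Equiv.Perm (Fin n)) : IsClosed (msetPerm n τ) := by
  have : msetPerm n τ = (⋂ j, {u : Fin n → ℝ | u j ∈ Icc (0:ℝ) 1}) ∩
      (⋂ (p : Fin n × Fin n) (_ : p.1 ≤ p.2), {u : Fin n → ℝ | u (τ p.1) ≤ u (τ p.2)}) := by
    ext u
    simp only [msetPerm, mem_setOf_eq, mem_inter_iff, mem_iInter]
    constructor
    · rintro ⟨h1, h2⟩
      exact ⟨fun j => h1 j, fun p hp => h2 hp⟩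
    · rintro ⟨h1, h2⟩
      exact ⟨h1, fun j k hjk => h2 (j, k) hjk⟩
  rw [this]
  apply IsClosed.inter
  · exact isClosed_iInter fun j => IsClosed.preimage (continuous_apply j) isClosed_Icc
  · exact isClosed_iInter fun p => isClosed_iInter fun _ =>
      isClosed_le (continuous_apply _) (continuous_apply _)

lemma volume_msetPerm (n : ℕ) (τ : Equiv.Perm (Fin n)) :
    volume (msetPerm n τ) = volume (msetPerm n (Equiv.refl _)) := by
  have hF := MeasureTheory.volume_measurePreserving_piCongrLeft (fun _ : Fin n => ℝ) τ.symm
  have happ : ∀ u : Fin n → ℝ,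
      (MeasurableEquiv.piCongrLeft (fun _ : Fin n => ℝ) τ.symm) u = u ∘ τ := by
    intro u
    funext b
    have := MeasurableEquiv.piCongrLeft_apply_apply (β := fun _ : Fin n => ℝ) τ.symm u (τ b)
    simpa using this
  have hpre : (MeasurableEquiv.piCongrLeft (fun _ : Fin n => ℝ) τ.symm) ⁻¹'
      (msetPerm n (Equiv.refl _)) = msetPerm n τ := by
    ext u
    simp only [mem_preimage, happ, msetPerm, mem_setOf_eq, Equiv.coe_refl, Function.comp_id,
      CompTriple.comp_eq]
    constructor
    · rintro ⟨h1, h2⟩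
      exact ⟨fun j => by simpa using h1 (τ.symm j), h2⟩
    · rintro ⟨h1, h2⟩
      exact ⟨fun j => h1 (τ j), h2⟩
  rw [← hpre, hF.measure_preimage (isClosed_msetPerm n _).measurableSet.nullMeasurableSet]

lemma null_noninjective (n : ℕ) :
    volume {u : Fin n → ℝ | ¬ Function.Injective u} = 0 := by
  have hsub : {u : Fin n → ℝ | ¬ Function.Injective u} ⊆
      ⋃ (p : Fin n × Fin n) (_ : p.1 ≠ p.2), {u : Fin n → ℝ | u p.1 = u p.2} := by
    intro u hu
    simp only [Function.Injective, not_forall] at hu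
    obtain ⟨i, j, hij, hne⟩ := hu
    exact mem_iUnion.mpr ⟨(i, j), mem_iUnion.mpr ⟨hne, hij⟩⟩
  refine le_antisymm (le_trans (measure_mono hsub) ?_) zero_le
  refine le_trans (measure_iUnion_le _) ?_
  have : ∀ p : Fin n × Fin n,
      volume (⋃ (_ : p.1 ≠ p.2), {u : Fin n → ℝ | u p.1 = u p.2}) = 0 := by
    rintro ⟨i, j⟩
    rcases eq_or_ne i j with rfl | hij
    · simp
    · rw [← nonpos_iff_eq_zero]
      refine le_trans (measure_mono (iUnion_subset fun _ => subset_rfl)) ?_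
      have hker : {u : Fin n → ℝ | u i = u j} =
          (LinearMap.ker ((LinearMap.proj i : (Fin n → ℝ) →ₗ[ℝ] ℝ) - LinearMap.proj j) :
            Submodule ℝ (Fin n → ℝ)) := by
        ext u
        simp [LinearMap.mem_ker, sub_eq_zero]
      rw [hker]
      rw [MeasureTheory.Measure.addHaar_submodule]
      intro htop
      have h1 : (Pi.single i 1 : Fin n → ℝ) ∈ LinearMap.ker
          ((LinearMap.proj i : (Fin n → ℝ) →ₗ[ℝ] ℝ) - LinearMap.proj j) := by
        rw [htop]; trivial
      simp only [LinearMap.mem_ker, LinearMap.sub_apply, LinearMap.proj_apply] at h1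
      rw [Pi.single_eq_same, Pi.single_eq_of_ne (Ne.symm hij)] at h1
      norm_num at h1
  simp only [this, tsum_zero]
  exact le_refl _

lemma factorial_mul_volume_oSimplex (n : ℕ) (hn : 1 ≤ n) :
    (n.factorial : ℝ≥0∞) * volume (oSimplex n 1) = 1 := by
  classical
  set M := fun τ : Equiv.Perm (Fin n) => msetPerm n τ with hM
  have hcube : volume (univ.pi fun _ : Fin n => Icc (0:ℝ) 1) = 1 := by
    rw [volume_pi_pi]
    simp [Real.volume_Icc]
  have hcover : (univ.pi fun _ : Fin n => Icc (0:ℝ) 1) ⊆ ⋃ τ, M τ := by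
    intro u hu
    refine mem_iUnion.mpr ⟨Tuple.sort u, fun j => hu j (mem_univ j), Tuple.monotone_sort u⟩
  have hcard : ∑ _τ : Equiv.Perm (Fin n), volume (msetPerm n (Equiv.refl (Fin n)))
      = (n.factorial : ℝ≥0∞) * volume (oSimplex n 1) := by
    rw [Finset.sum_const, Finset.card_univ, Fintype.card_perm, Fintype.card_fin,
      oSimplex_one_eq_mset n hn, nsmul_eq_mul]
  -- upper bound : 1 ≤ n! vol
  have hub : (1 : ℝ≥0∞) ≤ (n.factorial : ℝ≥0∞) * volume (oSimplex n 1) := by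
    calc (1:ℝ≥0∞) = volume (univ.pi fun _ : Fin n => Icc (0:ℝ) 1) := hcube.symm
      _ ≤ volume (⋃ τ, M τ) := measure_mono hcover
      _ ≤ ∑' τ, volume (M τ) := measure_iUnion_le _
      _ = ∑ τ : Equiv.Perm (Fin n), volume (M τ) := tsum_fintype _
      _ = ∑ _τ : Equiv.Perm (Fin n), volume (msetPerm n (Equiv.refl (Fin n))) :=
          Finset.sum_congr rfl fun τ _ => volume_msetPerm n τ
      _ = _ := hcard
  -- lower bound
  have hlb : (n.factorial : ℝ≥0∞) * volume (oSimplex n 1) ≤ 1 := by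
    set D := {u : Fin n → ℝ | Function.Injective u} with hD
    have hDmeas : MeasurableSet D := by
      have : D = {u : Fin n → ℝ | ¬ Function.Injective u}ᶜ := by
        ext u; simp [hD]
      rw [this]
      -- complement of a null set: show the inner set is measurable
      apply MeasurableSet.compl
      have : {u : Fin n → ℝ | ¬ Function.Injective u} =
          ⋃ (p : Fin n × Fin n) (_ : p.1 ≠ p.2), {u : Fin n → ℝ | u p.1 = u p.2} := by
        ext u
        simp only [mem_setOf_eq, mem_iUnion, Function.Injective, not_forall]
        constructor
        · rintro ⟨i, j, hij, hne⟩
          exact ⟨(i, j), hne, hij⟩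
        · rintro ⟨⟨i, j⟩, hne, hij⟩
          exact ⟨i, j, hij, hne⟩
      rw [this]
      apply MeasurableSet.iUnion
      intro p
      apply MeasurableSet.iUnion
      intro _
      exact measurableSet_eq_fun (measurable_pi_apply _) (measurable_pi_apply _)
    have hdisj : Pairwise (Function.onFun Disjoint fun τ => M τ ∩ D) := by
      intro σ τ hst
      rw [Function.onFun]
      rw [Set.disjoint_left]
      rintro u ⟨⟨_, hmσ⟩, hinj⟩ ⟨⟨_, hmτ⟩, _⟩
      apply hst
      apply Equiv.ext
      intro i
      exact hinj (congrFun (Tuple.unique_monotone hmσ hmτ) i)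
    have hmeas : ∀ τ : Equiv.Perm (Fin n), MeasurableSet (M τ ∩ D) := fun τ =>
      (isClosed_msetPerm n τ).measurableSet.inter hDmeas
    have hMD : ∀ τ, volume (M τ ∩ D) = volume (M τ) := fun τ =>
      measure_inter_conull (null_noninjective n)
    calc (n.factorial : ℝ≥0∞) * volume (oSimplex n 1)
        = ∑ _τ : Equiv.Perm (Fin n), volume (msetPerm n (Equiv.refl (Fin n))) := hcard.symm
      _ = ∑ τ : Equiv.Perm (Fin n), volume (M τ ∩ D) := by
          refine Finset.sum_congr rfl fun τ _ => ?_
          rw [hMD τ, volume_msetPerm n τ]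
      _ = ∑' τ : Equiv.Perm (Fin n), volume (M τ ∩ D) := (tsum_fintype _).symm
      _ = volume (⋃ τ, M τ ∩ D) := (measure_iUnion hdisj hmeas).symm
      _ ≤ volume (univ.pi fun _ : Fin n => Icc (0:ℝ) 1) := by
          apply measure_mono
          rintro u hu
          rw [mem_iUnion] at hu
          obtain ⟨τ, ⟨hb, _⟩, _⟩ := hu
          exact fun j _ => hb j
      _ = 1 := hcube
  exact le_antisymm hlb hub

end ArchProof
end FactPart

end Part2
noncomputable section Part3
namespace ArchProof

/-- normalized uniform measure on the ordered simplex. -/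
def mzero (n : ℕ) : Measure (Fin n → ℝ) :=
  (n.factorial : ℝ≥0∞) • volume.restrict (oSimplex n 1)

lemma mem_oSimplex_iff_spac (n : ℕ) (u : Fin n → ℝ) :
    u ∈ oSimplex n 1 ↔ ∀ i : Fin (n+1), 0 ≤ spac n u i := by
  unfold oSimplex spac
  simp only [mem_setOf_eq, sub_nonneg]

lemma upSet_subset_oSimplex (n : ℕ) {b : Fin (n+1) → ℝ} (hb : ∀ i, 0 ≤ b i) :
    upSet n b ⊆ oSimplex n 1 := by
  intro u hu
  rw [mem_oSimplex_iff_spac]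
  exact fun i => (hb i).trans (hu i)

lemma mzero_apply_upSet (n : ℕ) (hn : 1 ≤ n) {b : Fin (n+1) → ℝ} (hb : ∀ i, 0 ≤ b i) :
    mzero n (upSet n b) = ENNReal.ofReal (max (1 - ∑ i, b i) 0 ^ n) := by
  rw [mzero, Measure.smul_apply, smul_eq_mul,
    Measure.restrict_apply (isClosed_upSet n b).measurableSet,
    inter_eq_self_of_subset_left (upSet_subset_oSimplex n hb), volume_upSet n hn b]
  rw [← mul_assoc, mul_comm (n.factorial : ℝ≥0∞) _, mul_assoc,
    factorial_mul_volume_oSimplex n hn, mul_one]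

lemma mzero_apply (n : ℕ) {S : Set (Fin n → ℝ)} (hS : MeasurableSet S) :
    mzero n S = (n.factorial : ℝ≥0∞) * volume (S ∩ oSimplex n 1) := by
  rw [mzero, Measure.smul_apply, smul_eq_mul, Measure.restrict_apply hS]

lemma mzero_univ (n : ℕ) (hn : 1 ≤ n) : mzero n univ = 1 := by
  rw [mzero_apply n MeasurableSet.univ, univ_inter]
  exact factorial_mul_volume_oSimplex n hn

lemma mzero_prob (n : ℕ) (hn : 1 ≤ n) : IsProbabilityMeasure (mzero n) :=
  ⟨mzero_univ n hn⟩

instance mzero_finite (n : ℕ) : IsFiniteMeasure (mzero n) := by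
  constructor
  rw [mzero_apply n MeasurableSet.univ, univ_inter]
  apply lt_of_le_of_lt (le_of_eq rfl)
  rcases Nat.eq_zero_or_pos n with rfl | hn
  · apply ENNReal.mul_lt_top (by simp)
    apply lt_of_le_of_lt (measure_mono (subset_univ _))
    have huniv : (volume (univ : Set (Fin 0 → ℝ))) = 1 := by
      rw [MeasureTheory.volume_pi, Measure.pi_univ]
      simp
    rw [huniv]
    exact ENNReal.one_lt_top
  · rw [factorial_mul_volume_oSimplex n hn]
    exact ENNReal.one_lt_top

lemma continuous_spac (n : ℕ) (i : Fin (n+1)) : Continuous fun u : Fin n → ℝ => spac n u i :=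
  (continuous_cumg n 1 (i.1+1)).sub (continuous_cumg n 1 i.1)

/-- the radial map `(r, u) ↦ (spacings of u) / r` into `[0,∞]^(n+1)`. -/
def radMap (n : ℕ) : (ℝ × (Fin n → ℝ)) → (Fin (n+1) → ℝ≥0∞) := fun p i =>
  ENNReal.ofReal (spac n p.2 i / p.1)

lemma measurable_radMap (n : ℕ) : Measurable (radMap n) := by
  apply measurable_pi_lambda
  intro i
  apply ENNReal.measurable_ofReal.comp
  exact ((continuous_spac n i).measurable.comp measurable_snd).div measurable_fst

/-- the mixture measure on `[0,∞]^(n+1)`. -/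
def nuMeas (n : ℕ) (γ : Measure ℝ) : Measure (Fin (n+1) → ℝ≥0∞) :=
  Measure.map (radMap n) (γ.prod (mzero n))

lemma nuMeas_apply (n : ℕ) (γ : Measure ℝ) [SigmaFinite γ] {A : Set (Fin (n+1) → ℝ≥0∞)}
    (hA : MeasurableSet A) :
    nuMeas n γ A = ∫⁻ r, mzero n {u | radMap n (r, u) ∈ A} ∂γ := by
  rw [nuMeas, Measure.map_apply (measurable_radMap n) hA,
    Measure.prod_apply ((measurable_radMap n) hA)]
  rfl

lemma nuMeas_prob (n : ℕ) (hn : 1 ≤ n) (γ : Measure ℝ) [IsProbabilityMeasure γ] :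
    IsProbabilityMeasure (nuMeas n γ) := by
  haveI := mzero_prob n hn
  exact Measure.isProbabilityMeasure_map (measurable_radMap n).aemeasurable

end ArchProof
end Part3
noncomputable section Part3b
namespace ArchProof

lemma ae_pos (γ : Measure ℝ) (hneg : γ (Iio 0) = 0) (h0 : γ {0} = 0) :
    ∀ᵐ r ∂γ, 0 < r := by
  rw [ae_iff]
  have : {r : ℝ | ¬ 0 < r} = Iio 0 ∪ {0} := by
    ext r
    simp only [mem_setOf_eq, not_lt, mem_union, mem_Iio, mem_singleton_iff]
    constructor
    · intro h; rcases h.lt_or_eq with h | h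
      · exact Or.inl h
      · exact Or.inr h
    · rintro (h | rfl)
      · exact h.le
      · exact le_refl 0
  rw [this]
  exact measure_union_null hneg h0

lemma slice_measurableSet (n : ℕ) (r : ℝ) {A : Set (Fin (n+1) → ℝ≥0∞)}
    (hA : MeasurableSet A) : MeasurableSet {u : Fin n → ℝ | radMap n (r, u) ∈ A} :=
  ((measurable_radMap n).comp measurable_prodMk_left) hA

lemma sum_radMap (n : ℕ) {r : ℝ} (hr : 0 < r) {u : Fin n → ℝ} (hu : u ∈ oSimplex n 1) :
    ∑ i, ENNReal.ofReal (spac n u i / r) = ENNReal.ofReal (1 / r) := by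
  rw [← ENNReal.ofReal_sum_of_nonneg]
  · rw [← Finset.sum_div, sum_spac]
  · intro i _
    exact div_nonneg ((mem_oSimplex_iff_spac n u).mp hu i) hr.le

lemma slice_upper (n : ℕ) (hn : 1 ≤ n) {r : ℝ} (hr : 0 < r) (z : Fin (n+1) → ℝ≥0∞)
    (hz : ∀ i, z i ≠ ∞) :
    mzero n {u : Fin n → ℝ | ∀ i, z i ≤ ENNReal.ofReal (spac n u i / r)} =
      ENNReal.ofReal (max (1 - r * ∑ i, (z i).toReal) 0 ^ n) := by
  set b : Fin (n+1) → ℝ := fun i => r * (z i).toReal with hb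
  have hbnn : ∀ i, 0 ≤ b i := fun i => mul_nonneg hr.le ENNReal.toReal_nonneg
  have hSmeas : MeasurableSet {u : Fin n → ℝ | ∀ i, z i ≤ ENNReal.ofReal (spac n u i / r)} := by
    have : {u : Fin n → ℝ | ∀ i, z i ≤ ENNReal.ofReal (spac n u i / r)} =
        ⋂ i, (fun u => ENNReal.ofReal (spac n u i / r)) ⁻¹' Ici (z i) := by
      ext u; simp [mem_iInter]
    rw [this]
    exact MeasurableSet.iInter fun i =>
      (ENNReal.measurable_ofReal.comp ((continuous_spac n i).measurable.div_const r))
        measurableSet_Ici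
  have hinter : {u : Fin n → ℝ | ∀ i, z i ≤ ENNReal.ofReal (spac n u i / r)} ∩ oSimplex n 1
      = upSet n b := by
    ext u
    constructor
    · rintro ⟨hcond, hsimp⟩ 
      intro i
      have h1 := (ENNReal.le_ofReal_iff_toReal_le (hz i)
        (div_nonneg ((mem_oSimplex_iff_spac n u).mp hsimp i) hr.le)).mp (hcond i)
      rw [le_div_iff₀ hr] at h1
      calc b i = (z i).toReal * r := mul_comm _ _
        _ ≤ spac n u i := h1
    · intro hu
      refine ⟨fun i => ?_, upSet_subset_oSimplex n hbnn hu⟩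
      have h1 : (z i).toReal ≤ spac n u i / r := by
        rw [le_div_iff₀ hr]
        calc (z i).toReal * r = b i := mul_comm _ _
          _ ≤ spac n u i := hu i
      exact (ENNReal.le_ofReal_iff_toReal_le (hz i)
        (div_nonneg (((mem_oSimplex_iff_spac n u).mp (upSet_subset_oSimplex n hbnn hu)) i)
          hr.le)).mpr h1
  rw [mzero_apply n hSmeas, hinter]
  have := mzero_apply_upSet n hn hbnn
  rw [mzero_apply n (isClosed_upSet n b).measurableSet,
    inter_eq_self_of_subset_left (upSet_subset_oSimplex n hbnn)] at this
  rw [this]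
  congr 2
  rw [hb, ← Finset.mul_sum]

end ArchProof
end Part3b
noncomputable section Part3c
namespace ArchProof

variable {n : ℕ}

lemma nu_pre_eq (hn : 1 ≤ n) (γ : Measure ℝ) [IsProbabilityMeasure γ]
    (hneg : γ (Iio 0) = 0) (h0 : γ {0} = 0) {B : Set ℝ≥0∞} (hB : MeasurableSet B) :
    nuMeas n γ ((fun y : Fin (n+1) → ℝ≥0∞ => ∑ i, y i) ⁻¹' B) =
      γ (Ioi 0 ∩ (fun r : ℝ => ENNReal.ofReal (1/r)) ⁻¹' B) := by
  have hsum : Measurable fun y : Fin (n+1) → ℝ≥0∞ => ∑ i, y i :=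
    Finset.measurable_sum _ fun i _ => measurable_pi_apply i
  have hA : MeasurableSet ((fun y : Fin (n+1) → ℝ≥0∞ => ∑ i, y i) ⁻¹' B) := hsum hB
  have hE : MeasurableSet (Ioi 0 ∩ (fun r : ℝ => ENNReal.ofReal (1/r)) ⁻¹' B) :=
    measurableSet_Ioi.inter
      ((ENNReal.measurable_ofReal.comp (measurable_const.div measurable_id)) hB)
  rw [nuMeas_apply n γ hA]
  have hcong : ∀ᵐ r ∂γ,
      mzero n {u | radMap n (r, u) ∈ (fun y : Fin (n+1) → ℝ≥0∞ => ∑ i, y i) ⁻¹' B}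
      = (Ioi 0 ∩ (fun r : ℝ => ENNReal.ofReal (1/r)) ⁻¹' B).indicator (fun _ => 1) r := by
    filter_upwards [ae_pos γ hneg h0] with r hr
    set S : Set (Fin n → ℝ) :=
      {u | radMap n (r, u) ∈ (fun y : Fin (n+1) → ℝ≥0∞ => ∑ i, y i) ⁻¹' B} with hS
    have hslice : MeasurableSet S := slice_measurableSet n r hA
    have hSchar : ∀ u ∈ oSimplex n 1, (u ∈ S ↔ ENNReal.ofReal (1/r) ∈ B) := by
      intro u hu
      have : u ∈ S ↔ (∑ i, ENNReal.ofReal (spac n u i / r)) ∈ B := Iff.rfl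
      rw [this, sum_radMap n hr hu]
    show mzero n S = _
    by_cases hc : ENNReal.ofReal (1/r) ∈ B
    · have hint : S ∩ oSimplex n 1 = oSimplex n 1 :=
        inter_eq_self_of_subset_right (fun u hu => (hSchar u hu).mpr hc)
      rw [mzero_apply n hslice, hint, factorial_mul_volume_oSimplex n hn,
        indicator_of_mem (mem_inter (mem_Ioi.mpr hr) (mem_preimage.mpr hc))]
    · have hint : S ∩ oSimplex n 1 = ∅ := by
        apply eq_empty_iff_forall_notMem.mpr
        rintro u ⟨hu1, hu2⟩
        exact hc ((hSchar u hu2).mp hu1)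
      rw [mzero_apply n hslice, hint, measure_empty, mul_zero,
        indicator_of_notMem (fun hmem => hc hmem.2)]
  rw [lintegral_congr_ae hcong, lintegral_indicator_const hE, one_mul]

lemma nu_upper_eq {ψ : ℝ → ℝ} (hg : IsGenerator ψ) (hn : 1 ≤ n)
    (γ : Measure ℝ) [IsProbabilityMeasure γ]
    (hneg : γ (Iio 0) = 0) (h0 : γ {0} = 0)
    (hW' : ∀ Z : ℝ, 0 ≤ Z → ψ Z = ∫ t, max (1 - t * Z) 0 ^ n ∂γ)
    (z : Fin (n+1) → ℝ≥0∞) :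
    nuMeas n γ (univ.pi fun i => Ici (z i)) = ENNReal.ofReal (psiExt ψ (∑ i, z i)) := by
  have hA : MeasurableSet (univ.pi fun i => Ici (z i)) :=
    MeasurableSet.univ_pi fun i => measurableSet_Ici
  by_cases htop : ∃ i, z i = ∞
  · obtain ⟨i₀, hi₀⟩ := htop
    have hsum : (∑ i, z i) = ∞ := by
      apply ENNReal.sum_eq_top.mpr
      exact ⟨i₀, Finset.mem_univ _, hi₀⟩
    rw [hsum, psiExt_top, ENNReal.ofReal_zero]
    rw [nuMeas_apply n γ hA]
    have hz : ∀ r : ℝ, mzero n {u | radMap n (r, u) ∈ univ.pi fun i => Ici (z i)} = 0 := by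
      intro r
      have hempty : {u : Fin n → ℝ | radMap n (r, u) ∈ univ.pi fun i => Ici (z i)} = ∅ := by
        apply eq_empty_iff_forall_notMem.mpr
        intro u hu
        have h2 : (⊤ : ℝ≥0∞) ≤ radMap n (r, u) i₀ := hi₀ ▸ hu i₀ (mem_univ _)
        exact ENNReal.ofReal_ne_top (top_le_iff.mp h2)
      rw [hempty, measure_empty]
    simp only [hz, lintegral_zero]
  · push_neg at htop
    set Z := ∑ i, (z i).toReal with hZ
    have hZnn : 0 ≤ Z := Finset.sum_nonneg fun i _ => ENNReal.toReal_nonneg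
    have hsumfin : (∑ i, z i) ≠ ∞ := by
      rw [← lt_top_iff_ne_top]
      exact ENNReal.sum_lt_top.mpr fun i _ => lt_top_iff_ne_top.mpr (htop i)
    have hsumToReal : (∑ i, z i).toReal = Z := ENNReal.toReal_sum fun i _ => htop i
    have hpsi : psiExt ψ (∑ i, z i) = ψ Z := by
      rw [psiExt_coe ψ hsumfin, hsumToReal]
    rw [hpsi, nuMeas_apply n γ hA]
    have hcong : ∀ᵐ r ∂γ, mzero n {u | radMap n (r, u) ∈ univ.pi fun i => Ici (z i)}
        = ENNReal.ofReal (max (1 - r * Z) 0 ^ n) := by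
      filter_upwards [ae_pos γ hneg h0] with r hr
      have hsetchar : {u : Fin n → ℝ | radMap n (r, u) ∈ univ.pi fun i => Ici (z i)}
          = {u : Fin n → ℝ | ∀ i, z i ≤ ENNReal.ofReal (spac n u i / r)} := by
        ext u
        simp only [mem_setOf_eq, mem_univ_pi, mem_Ici, radMap]
      rw [hsetchar, slice_upper n hn hr z htop]
    rw [lintegral_congr_ae hcong]
    have hmeascont : Continuous fun t : ℝ => max (1 - t * Z) 0 ^ n :=
      ((continuous_const.sub (continuous_id.mul continuous_const)).max continuous_const).pow n
    have hint : Integrable (fun t : ℝ => max (1 - t * Z) 0 ^ n) γ := by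
      apply Integrable.mono' (integrable_const (1:ℝ)) hmeascont.aestronglyMeasurable
      filter_upwards [ae_pos γ hneg h0] with r hr
      rw [Real.norm_eq_abs, abs_of_nonneg (pow_nonneg (le_max_right _ _) n)]
      apply pow_le_one₀ (le_max_right _ _)
      apply max_le _ zero_le_one
      have : 0 ≤ r * Z := mul_nonneg hr.le hZnn
      linarith
    have hnn : 0 ≤ᵐ[γ] fun t : ℝ => max (1 - t * Z) 0 ^ n :=
      Filter.Eventually.of_forall fun t => pow_nonneg (le_max_right _ _) n
    rw [← MeasureTheory.ofReal_integral_eq_lintegral_ofReal hint hnn, ← hW' Z hZnn]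

end ArchProof
end Part3c
noncomputable section Part3d
namespace ArchProof

variable {ψ : ℝ → ℝ} {n : ℕ}

lemma map_T_upper (hg : IsGenerator ψ) (hn : 1 ≤ n)
    (μ : Measure (Fin (n+1) → ℝ)) [IsProbabilityMeasure μ]
    (hμ : ∀ x : Fin (n+1) → ℝ, (∀ i, x i ∈ Icc (0:ℝ) 1) →
      μ (univ.pi fun i => Icc 0 (x i)) =
        ENNReal.ofReal (psiExt ψ (∑ i, pseudoInv ψ (x i))))
    (z : Fin (n+1) → ℝ≥0∞) :
    μ {x : Fin (n+1) → ℝ | ∀ i, z i ≤ pseudoInv ψ (x i)} =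
      ENNReal.ofReal (psiExt ψ (∑ i, z i)) := by
  have hcube1 : μ (univ.pi fun _ : Fin (n+1) => Icc (0:ℝ) 1) = 1 := by
    have h := hμ (fun _ => 1) (fun i => ⟨zero_le_one, le_refl 1⟩)
    have h2 : (∑ i : Fin (n+1), pseudoInv ψ ((fun _ => (1:ℝ)) i)) = 0 := by
      simp [pseudoInv_one hg]
    rw [h2, psiExt_zero hg, ENNReal.ofReal_one] at h
    exact h
  have hcubeC : μ (univ.pi fun _ : Fin (n+1) => Icc (0:ℝ) 1)ᶜ = 0 := by
    rw [measure_compl (MeasurableSet.univ_pi fun _ => measurableSet_Icc) (measure_ne_top μ _),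
      hcube1, measure_univ, tsub_self]
  by_cases hcase : ∀ i, z i < pseudoInv ψ 0
  · -- main case
    set w : Fin (n+1) → ℝ := fun i => psiExt ψ (z i) with hw
    have hw1 : ∀ i, w i ≤ 1 := fun i => psiExt_le_one hg (z i)
    have hwpos : ∀ i, 0 < w i := by
      intro i
      rcases (psiExt_nonneg hg (z i)).eq_or_lt with h | h
      · exact absurd ((psiExt_eq_zero_iff hg).mp h.symm) (not_le.mpr (hcase i))
      · exact h
    have hset : {x : Fin (n+1) → ℝ | ∀ i, z i ≤ pseudoInv ψ (x i)} ∩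
        (univ.pi fun _ : Fin (n+1) => Icc (0:ℝ) 1) = univ.pi fun i => Icc 0 (w i) := by
      ext x
      simp only [mem_inter_iff, mem_setOf_eq, mem_univ_pi, mem_Icc]
      constructor
      · rintro ⟨hcond, hcube⟩ i
        exact ⟨(hcube i).1, le_psiExt_of_le_pseudoInv hg ⟨(hcube i).1, (hcube i).2⟩ (hcond i)⟩
      · intro hx
        have hxcube : ∀ i, x i ∈ Icc (0:ℝ) 1 :=
          fun i => ⟨(hx i).1, (hx i).2.trans (hw1 i)⟩
        exact ⟨fun i => le_pseudoInv_of_le_psiExt hg (hxcube i) (hcase i) (hx i).2,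
          fun i => ⟨(hxcube i).1, (hxcube i).2⟩⟩
    have hμS := measure_inter_conull (s := {x : Fin (n+1) → ℝ | ∀ i, z i ≤ pseudoInv ψ (x i)})
      hcubeC
    rw [← hμS, hset, hμ w (fun i => ⟨(hwpos i).le, hw1 i⟩)]
    congr 2
    apply Finset.sum_congr rfl
    intro i _
    exact ((psiExt_eq_iff hg (hwpos i) (hw1 i)).mp rfl).symm
  · -- degenerate case : some z i ≥ pseudoInv ψ 0
    push_neg at hcase
    obtain ⟨i₀, hi₀⟩ := hcase
    have hRHS : psiExt ψ (∑ i, z i) = 0 := by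
      apply (psiExt_eq_zero_iff hg).mpr
      calc pseudoInv ψ 0 ≤ z i₀ := hi₀
        _ ≤ ∑ i, z i := Finset.single_le_sum (fun i _ => zero_le) (Finset.mem_univ i₀)
    rw [hRHS, ENNReal.ofReal_zero]
    have key : ∀ t : ℝ, 0 < t → t ≤ 1 →
        μ {x : Fin (n+1) → ℝ | ∀ i, z i ≤ pseudoInv ψ (x i)} ≤ ENNReal.ofReal t := by
      intro t ht ht1
      have hμS := measure_inter_conull
        (s := {x : Fin (n+1) → ℝ | ∀ i, z i ≤ pseudoInv ψ (x i)}) hcubeC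
      rw [← hμS]
      set xt : Fin (n+1) → ℝ := Function.update (fun _ => (1:ℝ)) i₀ t with hxt
      have hxtmem : ∀ i, xt i ∈ Icc (0:ℝ) 1 := by
        intro i
        by_cases h : i = i₀
        · subst h; rw [hxt, Function.update_self]; exact ⟨ht.le, ht1⟩
        · rw [hxt, Function.update_of_ne h]; exact ⟨zero_le_one, le_refl 1⟩
      have hsub : {x : Fin (n+1) → ℝ | ∀ i, z i ≤ pseudoInv ψ (x i)} ∩
          (univ.pi fun _ : Fin (n+1) => Icc (0:ℝ) 1) ⊆ univ.pi fun i => Icc 0 (xt i) := by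
        rintro x ⟨hcond, hcube⟩ i _
        have hxic : x i ∈ Icc (0:ℝ) 1 := by
          have := hcube i (mem_univ i)
          exact this
        show x i ∈ Icc 0 (xt i)
        by_cases h : i = i₀
        · subst h
          refine ⟨hxic.1, ?_⟩
          rw [hxt, Function.update_self]
          have h1 : pseudoInv ψ t ≤ pseudoInv ψ (x i) := by
            calc pseudoInv ψ t ≤ pseudoInv ψ 0 :=
                (lt_pseudoInv_zero_of_pos hg ht (pseudoInv_mem hg ht ht1).2).le
              _ ≤ z i := hi₀
              _ ≤ pseudoInv ψ (x i) := hcond i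
          have := le_psiExt_of_le_pseudoInv hg hxic h1
          rwa [(pseudoInv_mem hg ht ht1).2] at this
        · rw [hxt, Function.update_of_ne h]
          exact hxic
      refine (measure_mono hsub).trans ?_
      rw [hμ xt hxtmem]
      have hsumxt : (∑ i, pseudoInv ψ (xt i)) = pseudoInv ψ t := by
        have h1 : ∀ i, pseudoInv ψ (xt i) = if i = i₀ then pseudoInv ψ t else 0 := by
          intro i
          by_cases h : i = i₀
          · subst h; rw [hxt, Function.update_self, if_pos rfl]
          · rw [hxt, Function.update_of_ne h, if_neg h, pseudoInv_one hg]
        rw [Finset.sum_congr rfl fun i _ => h1 i, Finset.sum_ite_eq' Finset.univ i₀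
          (fun _ => pseudoInv ψ t), if_pos (Finset.mem_univ i₀)]
      rw [hsumxt, (pseudoInv_mem hg ht ht1).2]
    refine le_antisymm ?_ zero_le
    have htend : Tendsto (fun m : ℕ => ENNReal.ofReal (1/(m+1))) atTop (𝓝 0) := by
      rw [← ENNReal.ofReal_zero]
      exact ENNReal.tendsto_ofReal tendsto_one_div_add_atTop_nhds_zero_nat
    apply ge_of_tendsto htend
    apply Filter.Eventually.of_forall
    intro m
    apply key
    · positivity
    · rw [div_le_one (by positivity)]
      have : (0:ℝ) ≤ m := Nat.cast_nonneg m
      linarith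

lemma integrable_kernel (γ : Measure ℝ) [IsProbabilityMeasure γ]
    (hneg : γ (Iio 0) = 0) (h0 : γ {0} = 0) {Z : ℝ} (hZnn : 0 ≤ Z) (n : ℕ) :
    Integrable (fun t : ℝ => max (1 - t * Z) 0 ^ n) γ := by
  have hmeascont : Continuous fun t : ℝ => max (1 - t * Z) 0 ^ n :=
    ((continuous_const.sub (continuous_id.mul continuous_const)).max continuous_const).pow n
  apply Integrable.mono' (integrable_const (1:ℝ)) hmeascont.aestronglyMeasurable
  filter_upwards [ae_pos γ hneg h0] with r hr
  rw [Real.norm_eq_abs, abs_of_nonneg (pow_nonneg (le_max_right _ _) n)]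
  apply pow_le_one₀ (le_max_right _ _)
  apply max_le _ zero_le_one
  have : 0 ≤ r * Z := mul_nonneg hr.le hZnn
  linarith

lemma gamma_no_mass (hg : IsGenerator ψ) (γ : Measure ℝ) [IsProbabilityMeasure γ]
    (hneg : γ (Iio 0) = 0) (h0 : γ {0} = 0)
    (hW' : ∀ Z : ℝ, 0 ≤ Z → ψ Z = ∫ t, max (1 - t * Z) 0 ^ n ∂γ)
    (hn : 1 ≤ n) (hfin : pseudoInv ψ 0 ≠ ∞) :
    γ (Iio (1 / (pseudoInv ψ 0).toReal)) = 0 := by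
  set c := (pseudoInv ψ 0).toReal with hc
  have hcpos : 0 < c := ENNReal.toReal_pos (pseudoInv_zero_pos hg).ne' hfin
  have key : ∀ Z : ℝ, c < Z → γ (Iio (1/Z)) = 0 := by
    intro Z hZ
    have hZpos : 0 < Z := hcpos.trans hZ
    have hpsi0 : ψ Z = 0 := by
      have h1 : psiExt ψ (ENNReal.ofReal Z) = 0 := by
        apply (psiExt_eq_zero_iff hg).mpr
        calc pseudoInv ψ 0 = ENNReal.ofReal c := (ENNReal.ofReal_toReal hfin).symm
          _ ≤ ENNReal.ofReal Z := ENNReal.ofReal_le_ofReal hZ.le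
      rwa [psiExt_coe ψ ENNReal.ofReal_ne_top, ENNReal.toReal_ofReal hZpos.le] at h1
    have hintegral : ∫ t, max (1 - t * Z) 0 ^ n ∂γ = 0 := by
      rw [← hW' Z hZpos.le]; exact hpsi0
    have hae := (integral_eq_zero_iff_of_nonneg
      (fun t => pow_nonneg (le_max_right _ _) n)
      (integrable_kernel γ hneg h0 hZpos.le n)).mp hintegral
    have hnull : γ {t : ℝ | ¬ (max (1 - t * Z) 0 ^ n = 0)} = 0 := by
      have := ae_iff.mp hae
      simpa using this
    apply measure_mono_null _ hnull
    intro t ht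
    simp only [mem_Iio] at ht
    have htZ : t * Z < 1 := (lt_div_iff₀ hZpos).mp ht
    have hpos : 0 < max (1 - t * Z) 0 := lt_of_lt_of_le (by linarith) (le_max_left _ _)
    exact (pow_pos hpos n).ne'
  have hU : Iio (1/c) ⊆ ⋃ m : ℕ, Iio (1/(c + 1/(m+1))) := by
    intro t ht
    simp only [mem_Iio] at ht
    rcases le_or_gt t 0 with h | h
    · exact mem_iUnion.mpr ⟨0, mem_Iio.mpr (lt_of_le_of_lt h (by positivity))⟩
    · have h1 : c < 1/t := by
        rw [lt_div_iff₀ h]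
        have h2 : t * c < 1 := (lt_div_iff₀ hcpos).mp ht
        linarith [mul_comm c t]
      obtain ⟨m, hm⟩ := exists_nat_one_div_lt (by linarith : (0:ℝ) < 1/t - c)
      refine mem_iUnion.mpr ⟨m, mem_Iio.mpr ?_⟩
      have h2 : c + 1/(m+1) < 1/t := by linarith
      rw [lt_div_iff₀ (by positivity)]
      calc t * (c + 1/(m+1)) < t * (1/t) := by
            apply mul_lt_mul_of_pos_left h2 h
        _ = 1 := by field_simp
  exact measure_mono_null hU (measure_iUnion_null fun m =>
    key _ (lt_add_of_pos_right c (by positivity)))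

lemma Eset_sing {c : ℝ≥0∞} (hc0 : c ≠ 0) (hcf : c ≠ ∞) :
    (Ioi (0:ℝ) ∩ (fun r : ℝ => ENNReal.ofReal (1/r)) ⁻¹' {c}) = {1 / c.toReal} := by
  have hct : 0 < c.toReal := ENNReal.toReal_pos hc0 hcf
  ext r
  simp only [mem_inter_iff, mem_Ioi, mem_preimage, mem_singleton_iff]
  constructor
  · rintro ⟨hr, hcr⟩
    have h1 : c.toReal = 1/r := by
      rw [← hcr, ENNReal.toReal_ofReal (by positivity)]
    rw [h1, one_div_one_div]
  · rintro rfl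
    refine ⟨by positivity, ?_⟩
    rw [one_div_one_div, ENNReal.ofReal_toReal hcf]

lemma Eset_sing_top :
    (Ioi (0:ℝ) ∩ (fun r : ℝ => ENNReal.ofReal (1/r)) ⁻¹' {(⊤:ℝ≥0∞)}) = ∅ := by
  apply eq_empty_iff_forall_notMem.mpr
  rintro r ⟨_, hr⟩
  exact ENNReal.ofReal_ne_top hr

lemma Eset_tail {c : ℝ≥0∞} (hc0 : c ≠ 0) (hcf : c ≠ ∞) :
    (Ioi (0:ℝ) ∩ (fun r : ℝ => ENNReal.ofReal (1/r)) ⁻¹' Ici c) = Ioc 0 (1/c.toReal) := by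
  have hct : 0 < c.toReal := ENNReal.toReal_pos hc0 hcf
  ext r
  simp only [mem_inter_iff, mem_Ioi, mem_preimage, mem_Ici, mem_Ioc]
  constructor
  · rintro ⟨hr, hcr⟩
    have h1 : c.toReal ≤ 1/r := (ENNReal.le_ofReal_iff_toReal_le hcf (by positivity)).mp hcr
    refine ⟨hr, ?_⟩
    rw [le_div_iff₀ hct]
    rw [le_div_iff₀ hr] at h1
    linarith
  · rintro ⟨hr, hcr⟩
    refine ⟨hr, ?_⟩
    apply (ENNReal.le_ofReal_iff_toReal_le hcf (by positivity)).mpr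
    rw [le_div_iff₀ hr]
    rw [le_div_iff₀ hct] at hcr
    linarith

end ArchProof
end Part3d
noncomputable section Part3e
namespace ArchProof

variable {ψ : ℝ → ℝ} {n : ℕ}

lemma isCountablySpanning_Ici :
    IsCountablySpanning (range (Ici : ℝ≥0∞ → Set ℝ≥0∞)) := by
  refine ⟨fun _ => Ici 0, fun m => mem_range_self 0, ?_⟩
  rw [iUnion_const]
  ext x
  simp [zero_le]

lemma generateFrom_Ici_eq :
    MeasurableSpace.generateFrom (range (Ici : ℝ≥0∞ → Set ℝ≥0∞)) =
      (inferInstance : MeasurableSpace ℝ≥0∞) :=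
  (borel_eq_generateFrom_Ici ℝ≥0∞).symm.trans BorelSpace.measurable_eq.symm

lemma mapT_eq_nu (hg : IsGenerator ψ) (hn : 1 ≤ n)
    (γ : Measure ℝ) [IsProbabilityMeasure γ]
    (hneg : γ (Iio 0) = 0) (h0 : γ {0} = 0)
    (hW' : ∀ Z : ℝ, 0 ≤ Z → ψ Z = ∫ t, max (1 - t * Z) 0 ^ n ∂γ)
    (μ : Measure (Fin (n+1) → ℝ)) [IsProbabilityMeasure μ]
    (hμ : ∀ x : Fin (n+1) → ℝ, (∀ i, x i ∈ Icc (0:ℝ) 1) →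
      μ (univ.pi fun i => Icc 0 (x i)) =
        ENNReal.ofReal (psiExt ψ (∑ i, pseudoInv ψ (x i)))) :
    Measure.map (fun (x : Fin (n+1) → ℝ) (i : Fin (n+1)) => pseudoInv ψ (x i)) μ = nuMeas n γ := by
  have hT : Measurable (fun (x : Fin (n+1) → ℝ) (i : Fin (n+1)) => pseudoInv ψ (x i)) :=
    measurable_pi_lambda _ fun i => (measurable_pseudoInv hg).comp (measurable_pi_apply i)
  haveI : IsProbabilityMeasure (Measure.map (fun (x : Fin (n+1) → ℝ) (i : Fin (n+1)) => pseudoInv ψ (x i)) μ) :=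
    Measure.isProbabilityMeasure_map hT.aemeasurable
  haveI := nuMeas_prob n hn γ
  apply MeasureTheory.ext_of_generate_finite
    (Set.pi univ '' Set.pi univ fun _ : Fin (n+1) => range (Ici : ℝ≥0∞ → Set ℝ≥0∞))
  · exact (generateFrom_eq_pi (fun _ => generateFrom_Ici_eq)
      (fun _ => isCountablySpanning_Ici)).symm
  · rintro _ ⟨s, hs, rfl⟩ _ ⟨s', hs', rfl⟩ _
    have h1 : ∀ i, ∃ a, Ici a = s i := fun i => hs i (mem_univ i)
    have h2 : ∀ i, ∃ a, Ici a = s' i := fun i => hs' i (mem_univ i)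
    choose z hz using h1
    choose z' hz' using h2
    refine ⟨fun i => Ici (z i ⊔ z' i), fun i _ => mem_range_self _, ?_⟩
    rw [← pi_inter_distrib]
    apply pi_congr rfl
    intro i _
    rw [← hz i, ← hz' i, Ici_inter_Ici]
  · rintro _ ⟨s, hs, rfl⟩
    have h1 : ∀ i, ∃ a, Ici a = s i := fun i => hs i (mem_univ i)
    choose z hz using h1
    have hseq : Set.pi univ s = Set.pi univ fun i => Ici (z i) := by
      apply pi_congr rfl
      intro i _
      exact (hz i).symm
    rw [hseq, Measure.map_apply hT (MeasurableSet.univ_pi fun i => measurableSet_Ici)]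
    have hpre : (fun (x : Fin (n+1) → ℝ) (i : Fin (n+1)) => pseudoInv ψ (x i)) ⁻¹'
        (Set.pi univ fun i => Ici (z i)) =
        {x : Fin (n+1) → ℝ | ∀ i, z i ≤ pseudoInv ψ (x i)} := by
      ext x
      simp only [mem_preimage, mem_univ_pi, mem_Ici, mem_setOf_eq]
    rw [hpre, map_T_upper hg hn μ hμ z, nu_upper_eq hg hn γ hneg h0 hW' z]
  · rw [measure_univ, measure_univ]

end ArchProof
end Part3e

end ArchAux

noncomputable section Part3f
namespace ArchProof

variable {ψ : ℝ → ℝ} {n : ℕ}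

lemma cube_compl_null (hg : IsGenerator ψ)
    (μ : Measure (Fin (n+1) → ℝ)) [IsProbabilityMeasure μ]
    (hμ : ∀ x : Fin (n+1) → ℝ, (∀ i, x i ∈ Icc (0:ℝ) 1) →
      μ (univ.pi fun i => Icc 0 (x i)) =
        ENNReal.ofReal (psiExt ψ (∑ i, pseudoInv ψ (x i)))) :
    μ (univ.pi fun _ : Fin (n+1) => Icc (0:ℝ) 1)ᶜ = 0 := by
  have hcube1 : μ (univ.pi fun _ : Fin (n+1) => Icc (0:ℝ) 1) = 1 := by
    have h := hμ (fun _ => 1) (fun i => ⟨zero_le_one, le_refl 1⟩)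
    have h2 : (∑ i : Fin (n+1), pseudoInv ψ ((fun _ => (1:ℝ)) i)) = 0 := by
      simp [pseudoInv_one hg]
    rw [h2, psiExt_zero hg, ENNReal.ofReal_one] at h
    exact h
  rw [measure_compl (MeasurableSet.univ_pi fun _ => measurableSet_Icc) (measure_ne_top μ _),
    hcube1, measure_univ, tsub_self]

end ArchProof
end Part3f

open ArchProof


/-- For a `d`-monotone generator `ψ` with Williamson measure `γ`,
copula `C = C_ψ` and associated measure `μ_C`: (i) `μ_C(L_t) = γ({1/φ(t)})` for
`t ∈ (0,1)`; (ii) `μ_C(L₀) = 0` if `ψ` is strict, and `μ_C(L₀) = γ({1/φ(0)})` if `ψ` is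
non-strict; (iii) `F_K^d(t) = γ([0, 1/φ(t)])` for `t ∈ (0,1)`. -/
theorem levelSet_mass_eq_williamson
    (d : ℕ) (hd : 3 ≤ d) (ψ : ℝ → ℝ) (hψ : IsdMonotoneGenerator d ψ)
    (γ : Measure ℝ) (hprob : IsProbabilityMeasure γ)
    (hneg : γ (Iio 0) = 0) (h0 : γ {0} = 0)
    (hW : ∀ z : ℝ, 0 < z → ψ z = williamson d γ z)
    (μ : Measure (Fin d → ℝ)) (hμprob : IsProbabilityMeasure μ)
    (hμ : ∀ x : Fin d → ℝ, (∀ i, x i ∈ Icc (0 : ℝ) 1) →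
      μ (Set.univ.pi fun i => Icc 0 (x i)) = ENNReal.ofReal (archCopula d ψ x)) :
    (∀ t ∈ Ioo (0 : ℝ) 1,
      μ (levelSet d ψ t) = γ {1 / (pseudoInv ψ t).toReal}) ∧
    (IsStrictGenerator ψ → μ (levelSet d ψ 0) = 0) ∧
    (pseudoInv ψ 0 ≠ ∞ → μ (levelSet d ψ 0) = γ {1 / (pseudoInv ψ 0).toReal}) ∧
    (∀ t ∈ Ioo (0 : ℝ) 1,
      μ {x | (∀ i, x i ∈ Icc (0 : ℝ) 1) ∧ archCopula d ψ x ≤ t} =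
        γ (Icc 0 (1 / (pseudoInv ψ t).toReal))) := by
  haveI := hprob
  haveI := hμprob
  obtain ⟨n, rfl⟩ : ∃ n, d = n + 1 := ⟨d - 1, by omega⟩
  have hn : 1 ≤ n := by omega
  have hg : IsGenerator ψ := hψ.toIsGenerator
  -- extended Williamson identity
  have hW' : ∀ Z : ℝ, 0 ≤ Z → ψ Z = ∫ t, max (1 - t * Z) 0 ^ n ∂γ := by
    intro Z hZ
    rcases hZ.eq_or_lt with h | h
    · rw [← h, hg.map_zero]
      have hconst : ∀ t : ℝ, max (1 - t * 0) 0 ^ n = 1 := by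
        intro t
        rw [mul_zero, sub_zero, max_eq_left zero_le_one, one_pow]
      rw [integral_congr_ae (Filter.Eventually.of_forall hconst)]
      rw [integral_const, probReal_univ, one_smul]
    · have := hW Z h
      rw [williamson] at this
      simpa using this
  -- the transport map and its law
  set T : (Fin (n+1) → ℝ) → (Fin (n+1) → ℝ≥0∞) :=
    fun x i => pseudoInv ψ (x i) with hTdef
  have hT : Measurable T :=
    measurable_pi_lambda _ fun i => (measurable_pseudoInv hg).comp (measurable_pi_apply i)
  have hμ' : ∀ x : Fin (n+1) → ℝ, (∀ i, x i ∈ Icc (0:ℝ) 1) →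
      μ (univ.pi fun i => Icc 0 (x i)) =
        ENNReal.ofReal (psiExt ψ (∑ i, pseudoInv ψ (x i))) := fun x hx => hμ x hx
  have hmap : Measure.map T μ = nuMeas n γ :=
    mapT_eq_nu hg hn γ hneg h0 hW' μ hμ'
  have hQc := cube_compl_null hg μ hμ'
  have hsum : Measurable fun y : Fin (n+1) → ℝ≥0∞ => ∑ i, y i :=
    Finset.measurable_sum _ fun i _ => measurable_pi_apply i
  have hmapply : ∀ {A : Set (Fin (n+1) → ℝ≥0∞)}, MeasurableSet A →
      μ (T ⁻¹' A) = nuMeas n γ A := by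
    intro A hA
    rw [← hmap, Measure.map_apply hT hA]
  -- (i)
  have part1 : ∀ t ∈ Ioo (0 : ℝ) 1,
      μ (levelSet (n+1) ψ t) = γ {1 / (pseudoInv ψ t).toReal} := by
    intro t ht
    set c := pseudoInv ψ t with hcdef
    have hcf : c ≠ ∞ := (pseudoInv_mem hg ht.1 ht.2.le).1
    have hc0 : c ≠ 0 := (pseudoInv_pos hg ht.2).ne'
    set A : Set (Fin (n+1) → ℝ≥0∞) := (fun y : Fin (n+1) → ℝ≥0∞ => ∑ i, y i) ⁻¹' {c}
      with hAdef
    have hA : MeasurableSet A := hsum (measurableSet_singleton c)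
    have hL : levelSet (n+1) ψ t = (T ⁻¹' A) ∩ (univ.pi fun _ : Fin (n+1) => Icc (0:ℝ) 1) := by
      ext x
      simp only [levelSet, mem_setOf_eq, mem_inter_iff, mem_preimage, hAdef,
        mem_singleton_iff, mem_univ_pi]
      constructor
      · rintro ⟨hx, harch⟩
        exact ⟨(psiExt_eq_iff hg ht.1 ht.2.le).mp harch, hx⟩
      · rintro ⟨hsumx, hx⟩
        exact ⟨hx, (psiExt_eq_iff hg ht.1 ht.2.le).mpr hsumx⟩
    rw [hL, measure_inter_conull hQc, hmapply hA, hAdef,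
      nu_pre_eq hn γ hneg h0 (measurableSet_singleton c), Eset_sing hc0 hcf]
  -- (iii) / (iv)
  have part4 : ∀ t ∈ Ioo (0 : ℝ) 1,
      μ {x | (∀ i, x i ∈ Icc (0 : ℝ) 1) ∧ archCopula (n+1) ψ x ≤ t} =
        γ (Icc 0 (1 / (pseudoInv ψ t).toReal)) := by
    intro t ht
    set c := pseudoInv ψ t with hcdef
    have hcf : c ≠ ∞ := (pseudoInv_mem hg ht.1 ht.2.le).1
    have hc0 : c ≠ 0 := (pseudoInv_pos hg ht.2).ne'
    have hct : 0 < c.toReal := ENNReal.toReal_pos hc0 hcf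
    set A : Set (Fin (n+1) → ℝ≥0∞) := (fun y : Fin (n+1) → ℝ≥0∞ => ∑ i, y i) ⁻¹' Ici c
      with hAdef
    have hA : MeasurableSet A := hsum measurableSet_Ici
    have hL : {x | (∀ i, x i ∈ Icc (0 : ℝ) 1) ∧ archCopula (n+1) ψ x ≤ t} =
        (T ⁻¹' A) ∩ (univ.pi fun _ : Fin (n+1) => Icc (0:ℝ) 1) := by
      ext x
      simp only [mem_setOf_eq, mem_inter_iff, mem_preimage, hAdef, mem_Ici, mem_univ_pi]
      constructor
      · rintro ⟨hx, harch⟩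
        exact ⟨(psiExt_le_iff hg ht.1 ht.2.le).mp harch, hx⟩
      · rintro ⟨hsumx, hx⟩
        exact ⟨hx, (psiExt_le_iff hg ht.1 ht.2.le).mpr hsumx⟩
    rw [hL, measure_inter_conull hQc, hmapply hA, hAdef,
      nu_pre_eq hn γ hneg h0 measurableSet_Ici, Eset_tail hc0 hcf]
    -- γ (Ioc 0 x) = γ (Icc 0 x)
    apply le_antisymm (measure_mono Ioc_subset_Icc_self)
    have hIcc : Icc (0:ℝ) (1/c.toReal) ⊆ {0} ∪ Ioc 0 (1/c.toReal) := by
      intro r hr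
      rcases hr.1.eq_or_lt with h | h
      · exact Or.inl (by simp [← h])
      · exact Or.inr ⟨h, hr.2⟩
    calc γ (Icc 0 (1/c.toReal)) ≤ γ ({0} ∪ Ioc 0 (1/c.toReal)) := measure_mono hIcc
      _ ≤ γ {0} + γ (Ioc 0 (1/c.toReal)) := measure_union_le _ _
      _ = γ (Ioc 0 (1/c.toReal)) := by rw [h0, zero_add]
  -- (ii) both cases via the zero level set
  set A0 : Set (Fin (n+1) → ℝ≥0∞) :=
    (fun y : Fin (n+1) → ℝ≥0∞ => ∑ i, y i) ⁻¹' Ici (pseudoInv ψ 0) with hA0def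
  have hA0 : MeasurableSet A0 := hsum measurableSet_Ici
  have hL0 : μ (levelSet (n+1) ψ 0) = nuMeas n γ A0 := by
    have hL : levelSet (n+1) ψ 0 =
        (T ⁻¹' A0) ∩ (univ.pi fun _ : Fin (n+1) => Icc (0:ℝ) 1) := by
      ext x
      simp only [levelSet, mem_setOf_eq, mem_inter_iff, mem_preimage, hA0def,
        mem_Ici, mem_univ_pi]
      constructor
      · rintro ⟨hx, harch⟩
        exact ⟨(psiExt_eq_zero_iff hg).mp harch, hx⟩
      · rintro ⟨hsumx, hx⟩
        exact ⟨hx, (psiExt_eq_zero_iff hg).mpr hsumx⟩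
    rw [hL, measure_inter_conull hQc, hmapply hA0]
  have part2 : IsStrictGenerator ψ → μ (levelSet (n+1) ψ 0) = 0 := by
    intro hstrict
    have htop : pseudoInv ψ 0 = ∞ := by
      have hset : {z : ℝ≥0∞ | psiExt ψ z = 0} = {∞} := by
        ext z
        simp only [mem_setOf_eq, mem_singleton_iff]
        constructor
        · intro hz
          by_contra hne
          rw [psiExt_coe ψ hne] at hz
          exact absurd hz (hstrict z.toReal ENNReal.toReal_nonneg).ne'
        · rintro rfl
          exact psiExt_top ψ
      rw [pseudoInv, hset, sInf_singleton]
    rw [hL0, hA0def, nu_pre_eq hn γ hneg h0 measurableSet_Ici]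
    have : (fun r : ℝ => ENNReal.ofReal (1/r)) ⁻¹' Ici (pseudoInv ψ 0) =
        (fun r : ℝ => ENNReal.ofReal (1/r)) ⁻¹' {(⊤:ℝ≥0∞)} := by
      ext r
      simp only [mem_preimage, mem_Ici, mem_singleton_iff, htop, top_le_iff]
    rw [this, Eset_sing_top, measure_empty]
  have part3 : pseudoInv ψ 0 ≠ ∞ → μ (levelSet (n+1) ψ 0) = γ {1 / (pseudoInv ψ 0).toReal} := by
    intro hfin
    have hc0 : pseudoInv ψ 0 ≠ 0 := (pseudoInv_zero_pos hg).ne'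
    have hct : 0 < (pseudoInv ψ 0).toReal := ENNReal.toReal_pos hc0 hfin
    rw [hL0, hA0def, nu_pre_eq hn γ hneg h0 measurableSet_Ici, Eset_tail hc0 hfin]
    have hIio := gamma_no_mass hg γ hneg h0 hW' hn hfin
    apply le_antisymm
    · have hsub : Ioc (0:ℝ) (1/(pseudoInv ψ 0).toReal) ⊆
          Iio (1/(pseudoInv ψ 0).toReal) ∪ {1/(pseudoInv ψ 0).toReal} := by
        intro r hr
        rcases hr.2.eq_or_lt with h | h
        · exact Or.inr (by simp [h])
        · exact Or.inl h
      calc γ (Ioc 0 (1/(pseudoInv ψ 0).toReal))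
          ≤ γ (Iio (1/(pseudoInv ψ 0).toReal) ∪ {1/(pseudoInv ψ 0).toReal}) :=
            measure_mono hsub
        _ ≤ γ (Iio (1/(pseudoInv ψ 0).toReal)) + γ {1/(pseudoInv ψ 0).toReal} :=
            measure_union_le _ _
        _ = γ {1/(pseudoInv ψ 0).toReal} := by rw [hIio, zero_add]
    · apply measure_mono
      intro r hr
      rw [mem_singleton_iff] at hr
      subst hr
      exact ⟨by positivity, le_refl _⟩
  exact ⟨part1, part2, part3, part4⟩
end
end

section
/- Let m ≥ 1 and let μ be a Borel probability measure on [0,1]^m × [0,1] whose first marginal ν (the pushforward of μ under the projection onto [0,1]^m) is absolutely continuous with respect to Lebesgue measure λ_m on [0,1]^m. Let (K(x,·))_{x ∈ [0,1]^m} be a disintegration of μ with respect to ν, i.e. a Markov kernel from [0,1]^m to [0,1] with μ(A × B) = ∫_A K(x,B) dν(x) for all Borel sets A ⊆ [0,1]^m and B ⊆ [0,1]. Then μ is singular with respect to Lebesgue measure λ_{m+1} on [0,1]^m × [0,1] if and only if there exists a Borel set Λ ⊆ [0,1]^m with ν(Λ) = 1 such that for every x ∈ Λ the probability measure K(x,·)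 is singular with respect to Lebesgue measure λ on [0,1]. -/
open MeasureTheory Set Filter Topology ProbabilityTheory
open scoped ENNReal NNReal Classical

noncomputable section

/-- Let `μ` be a Borel probability measure on `[0,1]^m × [0,1]` whose
first marginal `ν = μ ∘ (proj)⁻¹` is absolutely continuous w.r.t. Lebesgue measure, and
let `K` be a disintegration (Markov kernel) of `μ` w.r.t. `ν`. Then `μ` is singular
w.r.t. Lebesgue measure if and only if there is a Borel set `Λ` with `ν(Λ) = 1` such
that `K(x,·)` is singular w.r.t. Lebesgue measure for every `x ∈ Λ`. -/
theorem singular_iff_kernels_ae_singular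
    (m : ℕ) (hm : 1 ≤ m)
    (μ : Measure ((Fin m → ℝ) × ℝ)) (hprob : IsProbabilityMeasure μ)
    (hcube : μ ((Set.univ.pi fun _ : Fin m => Icc (0 : ℝ) 1) ×ˢ Icc (0 : ℝ) 1) = 1)
    (hac : μ.map Prod.fst ≪ volume)
    (K : ProbabilityTheory.Kernel (Fin m → ℝ) ℝ) [ProbabilityTheory.IsMarkovKernel K]
    (hdis : ∀ (A : Set (Fin m → ℝ)) (B : Set ℝ), MeasurableSet A → MeasurableSet B →
      μ (A ×ˢ B) = ∫⁻ x in A, K x B ∂(μ.map Prod.fst)) :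
    μ ⟂ₘ volume ↔
      ∃ Λ : Set (Fin m → ℝ), MeasurableSet Λ ∧ (μ.map Prod.fst) Λ = 1 ∧
        ∀ x ∈ Λ, K x ⟂ₘ (volume : Measure ℝ) := by
  have hImeas : MeasurableSet (Icc (0:ℝ) 1) := measurableSet_Icc
  set ν : Measure (Fin m → ℝ) := μ.map Prod.fst with hνdef
  have hνprob : IsProbabilityMeasure ν := Measure.isProbabilityMeasure_map measurable_fst.aemeasurable
  have hfinI : IsFiniteMeasure ((volume : Measure ℝ).restrict (Icc 0 1)) :=
    ⟨by simp [Real.volume_Icc]⟩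
  set η : Kernel (Fin m → ℝ) ℝ := Kernel.const _ ((volume : Measure ℝ).restrict (Icc 0 1))
    with hηdef
  have hηx : ∀ x, η x = (volume : Measure ℝ).restrict (Icc 0 1) := fun x => rfl
  -- μ is the composition-product of ν and K
  have hcomp : μ = ν.compProd K := by
    refine ext_of_generate_finite _ generateFrom_prod.symm isPiSystem_prod ?_ ?_
    · rintro s ⟨A, hA, B, hB, rfl⟩
      have hA' : MeasurableSet A := hA
      have hB' : MeasurableSet B := hB
      exact (hdis A B hA' hB').trans (Measure.compProd_apply_prod hA' hB').symm
    · rw [measure_univ, measure_univ]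
  have happly : ∀ {S : Set ((Fin m → ℝ) × ℝ)}, MeasurableSet S →
      μ S = ∫⁻ x, K x (Prod.mk x ⁻¹' S) ∂ν := by
    intro S hS
    rw [hcomp, Measure.compProd_apply hS]
  -- ν-a.e. x, K x is concentrated on [0,1]
  have hμunivI : μ (univ ×ˢ Icc (0:ℝ) 1) = 1 := by
    refine le_antisymm prob_le_one ?_
    calc (1:ℝ≥0∞) = μ ((Set.univ.pi fun _ : Fin m => Icc (0 : ℝ) 1) ×ˢ Icc (0 : ℝ) 1) :=
          hcube.symm
      _ ≤ μ (univ ×ˢ Icc (0:ℝ) 1) :=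
          measure_mono (prod_mono (subset_univ _) subset_rfl)
  have hint1 : ∫⁻ x, K x (Icc (0:ℝ) 1) ∂ν = 1 := by
    have h := hdis univ (Icc 0 1) MeasurableSet.univ hImeas
    rw [hμunivI, Measure.restrict_univ] at h
    exact h.symm
  have hKI : ∀ᵐ x ∂ν, K x (Icc (0:ℝ) 1) = 1 := by
    have hmeas : Measurable fun x => K x (Icc (0:ℝ) 1) := K.measurable_coe hImeas
    have hle : ∀ x, K x (Icc (0:ℝ) 1) ≤ 1 := fun x => prob_le_one
    have hsub : ∫⁻ x, (1 - K x (Icc (0:ℝ) 1)) ∂ν = 0 := by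
      rw [lintegral_sub hmeas (by rw [hint1]; exact ENNReal.one_ne_top) (ae_of_all _ hle),
        hint1, lintegral_one, measure_univ, tsub_self]
    have h0 := (lintegral_eq_zero_iff (measurable_const.sub hmeas)).mp hsub
    filter_upwards [h0] with x hx
    have h1 : (1:ℝ≥0∞) ≤ K x (Icc 0 1) := by
      simp only [Pi.sub_apply, Pi.zero_apply, tsub_eq_zero_iff_le] at hx; exact hx
    exact le_antisymm (hle x) h1
  -- for x concentrated on [0,1], singularity w.r.t. volume and w.r.t. its restriction agree
  have hequiv : ∀ x, K x (Icc (0:ℝ) 1) = 1 →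
      ((K x ⟂ₘ (volume : Measure ℝ)) ↔ K x ⟂ₘ (volume : Measure ℝ).restrict (Icc 0 1)) := by
    intro x hx
    constructor
    · intro h
      exact h.mono_ac Measure.AbsolutelyContinuous.rfl
        (Measure.absolutelyContinuous_of_le Measure.restrict_le_self)
    · intro h
      have h2 : K x ⟂ₘ (volume : Measure ℝ).restrict (Icc (0:ℝ) 1)ᶜ := by
        refine ⟨(Icc (0:ℝ) 1)ᶜ, hImeas.compl, ?_, ?_⟩
        · rw [measure_compl hImeas (measure_ne_top _ _), hx, measure_univ, tsub_self]
        · rw [compl_compl, Measure.restrict_apply hImeas]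
          simp
      have h3 := Measure.MutuallySingular.add_right h h2
      rwa [Measure.restrict_add_restrict_compl hImeas] at h3
  constructor
  · rintro ⟨G, hGmeas, hμG, hvolGc⟩
    have hKG : ∀ᵐ x ∂ν, K x (Prod.mk x ⁻¹' G) = 0 := by
      have h := happly hGmeas
      rw [hμG] at h
      exact (lintegral_eq_zero_iff (Kernel.measurable_kernel_prodMk_left hGmeas)).mp h.symm
    have hvol : ∀ᵐ x ∂ν, (volume : Measure ℝ) (Prod.mk x ⁻¹' Gᶜ) = 0 := by
      have h0 : (volume : Measure (Fin m → ℝ)).prod (volume : Measure ℝ) Gᶜ = 0 := by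
        rw [← Measure.volume_eq_prod]; exact hvolGc
      exact hac.ae_le ((Measure.measure_prod_null hGmeas.compl).mp h0)
    have hsing : ∀ᵐ x ∂ν, K x ⟂ₘ (volume : Measure ℝ) := by
      filter_upwards [hKG, hvol] with x h1 h2
      exact ⟨Prod.mk x ⁻¹' G, measurable_prodMk_left hGmeas, h1, by rwa [← preimage_compl]⟩
    have hΛmeas : MeasurableSet ({x | K x ⟂ₘ η x} ∩ {x | K x (Icc (0:ℝ) 1) = 1}) := by
      refine (Kernel.measurableSet_mutuallySingular K η).inter ?_
      exact (K.measurable_coe hImeas) (measurableSet_singleton 1)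
    refine ⟨{x | K x ⟂ₘ η x} ∩ {x | K x (Icc (0:ℝ) 1) = 1}, hΛmeas, ?_, ?_⟩
    · have hae : ∀ᵐ x ∂ν, x ∈ {x | K x ⟂ₘ η x} ∩ {x | K x (Icc (0:ℝ) 1) = 1} := by
        filter_upwards [hsing, hKI] with x h1 h2
        exact ⟨by rw [mem_setOf_eq, hηx x]; exact (hequiv x h2).mp h1, h2⟩
      exact (prob_compl_eq_zero_iff hΛmeas).mp (ae_iff.mp hae)
    · rintro x ⟨h1, h2⟩
      rw [mem_setOf_eq, hηx x] at h1
      exact (hequiv x h2).mpr h1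
  · rintro ⟨Λ, hΛm, hΛ1, hΛsing⟩
    have haeΛ : ∀ᵐ x ∂ν, x ∈ Λ := by
      have : ν Λᶜ = 0 := (prob_compl_eq_zero_iff hΛm).mpr hΛ1
      exact ae_iff.mpr this
    set M := Kernel.mutuallySingularSet K η with hM
    have hMmeas : MeasurableSet M := Kernel.measurableSet_mutuallySingularSet K η
    set G := M ∩ (univ ×ˢ Icc (0:ℝ) 1) with hGdef
    have hGmeas : MeasurableSet G := hMmeas.inter (MeasurableSet.univ.prod hImeas)
    have hslice : ∀ x, Prod.mk x ⁻¹' M = Kernel.mutuallySingularSetSlice K η x :=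
      fun x => rfl
    refine ⟨Gᶜ, hGmeas.compl, ?_, ?_⟩
    · rw [happly hGmeas.compl]
      have hae0 : ∀ᵐ x ∂ν, K x (Prod.mk x ⁻¹' Gᶜ) = 0 := by
        filter_upwards [haeΛ, hKI] with x hxΛ hx1
        have hsing : K x ⟂ₘ η x := by
          rw [hηx x]
          exact (hequiv x hx1).mp (hΛsing x hxΛ)
        have hKsp : K x = Kernel.singularPart K η x := by
          rw [Kernel.singularPart_eq_singularPart_measure,
            Measure.singularPart_eq_self.mpr hsing]
        have h1 : K x ((Kernel.mutuallySingularSetSlice K η x)ᶜ) = 0 := by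
          rw [hKsp]
          exact Kernel.singularPart_compl_mutuallySingularSetSlice K η x
        have h2 : K x (Icc (0:ℝ) 1)ᶜ = 0 := by
          rw [measure_compl hImeas (measure_ne_top _ _), hx1, measure_univ, tsub_self]
        have hpre : Prod.mk x ⁻¹' Gᶜ ⊆
            (Kernel.mutuallySingularSetSlice K η x)ᶜ ∪ (Icc (0:ℝ) 1)ᶜ := by
          intro y hy
          simp only [hGdef, preimage_compl, mem_compl_iff, mem_preimage, mem_inter_iff,
            not_and_or, mem_prod, mem_univ, true_and] at hy
          rcases hy with hy | hy
          · exact Or.inl (by rwa [mem_compl_iff, ← hslice x])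
          · exact Or.inr hy
        refine le_antisymm ?_ (by positivity)
        calc K x (Prod.mk x ⁻¹' Gᶜ)
            ≤ K x ((Kernel.mutuallySingularSetSlice K η x)ᶜ ∪ (Icc (0:ℝ) 1)ᶜ) :=
              measure_mono hpre
          _ ≤ K x ((Kernel.mutuallySingularSetSlice K η x)ᶜ) + K x (Icc (0:ℝ) 1)ᶜ :=
              measure_union_le _ _
          _ = 0 := by rw [h1, h2, add_zero]
      exact (lintegral_eq_zero_iff
        (Kernel.measurable_kernel_prodMk_left hGmeas.compl)).mpr hae0
    · rw [compl_compl, Measure.volume_eq_prod, Measure.prod_apply hGmeas]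
      have h0 : ∀ x, (volume : Measure ℝ) (Prod.mk x ⁻¹' G) = 0 := by
        intro x
        have hpre : Prod.mk x ⁻¹' G = Kernel.mutuallySingularSetSlice K η x ∩ Icc (0:ℝ) 1 := by
          rw [hGdef, preimage_inter, hslice x]
          congr 1
          ext y
          simp
        rw [hpre, ← Measure.restrict_apply
          (Kernel.measurableSet_mutuallySingularSetSlice K η x), ← hηx x]
        exact Kernel.measure_mutuallySingularSetSlice K η x
      simp only [h0, lintegral_zero]
end
end

section
/- Let d ≥ 3 and let γ ∈ P_{W_d} be absolutely continuous with respect to Lebesgue measure on [0,∞). Let ψ = W_d γ be the induced normalized d-monotone generator, C = C_ψ the induced copula and μ_C the associated measure on [0,1]^d. Then μ_C is absolutely continuous with respect to Lebesgue measure λ_d on [0,1]^d. -/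
open MeasureTheory Set Filter Topology
open scoped ENNReal NNReal Classical

noncomputable section

section RealAux

lemma pow_sub_pow_ge_aux {a c : ℝ} (hc : 0 ≤ c) (hca : c ≤ a) (k : ℕ) :
    (k + 1 : ℝ) * c ^ k * (a - c) ≤ a ^ (k + 1) - c ^ (k + 1) := by
  induction k with
  | zero => simp
  | succ k ih =>
    have hc1 : c ^ (k + 1) ≤ a ^ (k + 1) := pow_le_pow_left₀ hc hca _
    have hck : (0:ℝ) ≤ c ^ k := pow_nonneg hc k
    have hck1 : (0:ℝ) ≤ c ^ (k + 1) := pow_nonneg hc (k + 1)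
    have ha : 0 ≤ a := hc.trans hca
    have h1 : c * ((k + 1 : ℝ) * c ^ k * (a - c)) ≤ a * (a ^ (k + 1) - c ^ (k + 1)) := by
      calc c * ((k + 1 : ℝ) * c ^ k * (a - c)) ≤ c * (a ^ (k + 1) - c ^ (k + 1)) := by
            apply mul_le_mul_of_nonneg_left ih hc
        _ ≤ a * (a ^ (k + 1) - c ^ (k + 1)) := by
            apply mul_le_mul_of_nonneg_right hca (by linarith)
    have expand : a ^ (k + 1 + 1) - c ^ (k + 1 + 1)
        = a * (a ^ (k + 1) - c ^ (k + 1)) + (a - c) * c ^ (k + 1) := by ring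
    have h2 : c * ((k + 1 : ℝ) * c ^ k * (a - c)) = (k + 1 : ℝ) * c ^ (k + 1) * (a - c) := by
      ring
    have h3 : (k + 1 + 1 : ℝ) * c ^ (k + 1) * (a - c)
        = (k + 1 : ℝ) * c ^ (k + 1) * (a - c) + c ^ (k + 1) * (a - c) := by ring
    have h4 : (0:ℝ) ≤ c ^ (k + 1) * (a - c) :=
      mul_nonneg hck1 (sub_nonneg.2 hca)
    push_cast
    rw [expand]
    nlinarith [h1, h2, h3, h4]

lemma pow_sub_pow_le_aux {a c : ℝ} (hc : 0 ≤ c) (hca : c ≤ a) (ha : a ≤ 1) (k : ℕ) :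
    a ^ k - c ^ k ≤ (k : ℝ) * (a - c) := by
  induction k with
  | zero => simp
  | succ k ih =>
    have hc1 : c ^ k ≤ a ^ k := pow_le_pow_left₀ hc hca _
    have hck : (0:ℝ) ≤ c ^ k := pow_nonneg hc k
    have hak : a ^ k ≤ 1 := pow_le_one₀ (hc.trans hca) ha
    have expand : a ^ (k + 1) - c ^ (k + 1)
        = a * (a ^ k - c ^ k) + (a - c) * c ^ k := by ring
    push_cast
    nlinarith [mul_le_mul_of_nonneg_left (sub_nonneg.2 hca) hck]

lemma wfn_nonneg (m : ℕ) (z t : ℝ) : 0 ≤ max (1 - t * z) 0 ^ m :=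
  pow_nonneg (le_max_right _ _) _

lemma wfn_le_one {z t : ℝ} (ht : 0 ≤ t) (hz : 0 ≤ z) (m : ℕ) :
    max (1 - t * z) 0 ^ m ≤ 1 :=
  pow_le_one₀ (le_max_right _ _) (max_le (by nlinarith) zero_le_one)

lemma wfn_anti {t u v : ℝ} (ht : 0 ≤ t) (huv : u ≤ v) (m : ℕ) :
    max (1 - t * v) 0 ^ m ≤ max (1 - t * u) 0 ^ m :=
  pow_le_pow_left₀ (le_max_right _ _)
    (max_le_max (by nlinarith) le_rfl) m

lemma wfn_key_lower {t u v b : ℝ} (ht : 0 ≤ t) (hu : 0 ≤ u) (huv : u ≤ v) (hvb : v ≤ b)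
    {m : ℕ} (hm : 2 ≤ m) :
    (m : ℝ) * (t * (v - u)) * max (1 - t * b) 0 ^ (m - 1)
      ≤ max (1 - t * u) 0 ^ m - max (1 - t * v) 0 ^ m := by
  obtain ⟨k, rfl⟩ : ∃ k, m = k + 2 := ⟨m - 2, by omega⟩
  have hm1 : k + 2 - 1 = k + 1 := by omega
  rw [hm1]
  rcases le_or_gt (t * v) 1 with hv1 | hv1
  · have hu1 : t * u ≤ 1 := le_trans (by nlinarith) hv1
    have hb' : t * u ≤ t * v := by nlinarith
    have hmaxu : max (1 - t * u) 0 = 1 - t * u := max_eq_left (by linarith)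
    have hmaxv : max (1 - t * v) 0 = 1 - t * v := max_eq_left (by linarith)
    have hec : max (1 - t * b) 0 ≤ 1 - t * v :=
      max_le (by nlinarith) (by linarith)
    have he0 : (0:ℝ) ≤ max (1 - t * b) 0 := le_max_right _ _
    have hpow : max (1 - t * b) 0 ^ (k+1) ≤ (1 - t * v) ^ (k+1) :=
      pow_le_pow_left₀ he0 hec _
    have key := pow_sub_pow_ge_aux (a := 1 - t * u) (c := 1 - t * v)
      (by linarith) (by linarith) (k + 1)
    rw [hmaxu, hmaxv]
    have hsub : (1 - t*u) - (1 - t*v) = t * (v - u) := by ring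
    rw [hsub] at key
    push_cast at key ⊢
    have htvu : (0:ℝ) ≤ t * (v - u) := by nlinarith
    calc ((k:ℝ) + 2) * (t * (v - u)) * max (1 - t * b) 0 ^ (k+1)
        ≤ ((k:ℝ) + 2) * (t * (v - u)) * (1 - t*v) ^ (k+1) := by
          apply mul_le_mul_of_nonneg_left hpow (by positivity)
      _ ≤ (1 - t*u) ^ (k + 2) - (1 - t*v) ^ (k + 2) := by nlinarith [key]
  · have hmaxv : max (1 - t * v) 0 = 0 := max_eq_right (by linarith)
    have hmaxb : max (1 - t * b) 0 = 0 := max_eq_right (by nlinarith)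
    rw [hmaxv, hmaxb]
    have e1 : ((0:ℝ)) ^ (k+1) = 0 := zero_pow (by omega)
    have e2 : ((0:ℝ)) ^ (k+2) = 0 := zero_pow (by omega)
    rw [e1, e2, mul_zero, sub_zero]
    exact wfn_nonneg _ _ _

lemma wfn_sub_le {t u v : ℝ} (ht : 0 ≤ t) (hu : 0 ≤ u) (huv : u ≤ v) (m : ℕ) :
    max (1 - t * u) 0 ^ m - max (1 - t * v) 0 ^ m ≤ (m : ℝ) * (t * (v - u)) := by
  have h0u : (0:ℝ) ≤ max (1 - t * u) 0 := le_max_right _ _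
  have h0v : (0:ℝ) ≤ max (1 - t * v) 0 := le_max_right _ _
  have hvu : max (1 - t * v) 0 ≤ max (1 - t * u) 0 :=
    max_le_max (by nlinarith) le_rfl
  have hle1 : max (1 - t * u) 0 ≤ 1 := max_le (by nlinarith) zero_le_one
  have hdiff : max (1 - t * u) 0 - max (1 - t * v) 0 ≤ t * (v - u) := by
    rcases le_or_gt (t * v) 1 with hv1 | hv1
    · have : max (1 - t * v) 0 = 1 - t * v := max_eq_left (by linarith)
      rw [this]
      rcases le_or_gt (t * u) 1 with hu1 | hu1
      · rw [max_eq_left (by linarith)]; ring_nf; nlinarith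
      · rw [max_eq_right (by linarith)]; nlinarith
    · have hv0 : max (1 - t * v) 0 = 0 := max_eq_right (by linarith)
      rw [hv0, sub_zero]
      rcases le_or_gt (t * u) 1 with hu1 | hu1
      · rw [max_eq_left (by linarith)]; nlinarith
      · rw [max_eq_right (by linarith)]; nlinarith
  calc max (1 - t * u) 0 ^ m - max (1 - t * v) 0 ^ m
      ≤ (m : ℝ) * (max (1 - t * u) 0 - max (1 - t * v) 0) :=
        pow_sub_pow_le_aux h0v hvu hle1 m
    _ ≤ (m : ℝ) * (t * (v - u)) := by
        apply mul_le_mul_of_nonneg_left hdiff (by positivity)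

end RealAux
section WilliamsonBasic

variable {γ : Measure ℝ} [IsProbabilityMeasure γ]

lemma gamma_ae_nonneg (h0 : γ (Iio 0) = 0) : ∀ᵐ t ∂γ, 0 ≤ t := by
  rw [ae_iff]
  simp only [not_le]; exact h0

lemma gamma_ae_pos (h0 : γ (Iio 0) = 0) (hz : γ {0} = 0) : ∀ᵐ t ∂γ, 0 < t := by
  rw [ae_iff]
  have : {t : ℝ | ¬ 0 < t} = Iio 0 ∪ {0} := by
    ext t; simp [not_lt, le_iff_lt_or_eq, or_comm]
  rw [this]
  exact measure_union_null h0 hz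

lemma integrable_wfn (h0 : γ (Iio 0) = 0) {z : ℝ} (hz : 0 ≤ z) (m : ℕ) :
    Integrable (fun t => max (1 - t * z) 0 ^ m) γ := by
  refine (integrable_const (1:ℝ)).mono' ?_ ?_
  · exact Continuous.aestronglyMeasurable (by fun_prop)
  · filter_upwards [gamma_ae_nonneg h0] with t ht
    rw [Real.norm_eq_abs, abs_of_nonneg (wfn_nonneg _ _ _)]
    exact wfn_le_one ht hz m

lemma integrable_wfn' {b : ℝ} (hb : 0 < b) {m : ℕ} (hm : 0 < m) :
    Integrable (fun t => max t 0 * max (1 - t * b) 0 ^ m) γ := by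
  refine (integrable_const (b⁻¹)).mono' ?_ ?_
  · exact Continuous.aestronglyMeasurable (by fun_prop)
  · refine Eventually.of_forall fun t => ?_
    have h1 : 0 ≤ max t 0 * max (1 - t * b) 0 ^ m :=
      mul_nonneg (le_max_right _ _) (wfn_nonneg _ _ _)
    rw [Real.norm_eq_abs, abs_of_nonneg h1]
    rcases le_or_gt t 0 with ht | ht
    · rw [max_eq_right ht, zero_mul]
      positivity
    · rcases le_or_gt (t * b) 1 with htb | htb
      · have h2 : max t 0 = t := max_eq_left ht.le
        have h3 : max (1 - t * b) 0 ^ m ≤ 1 := wfn_le_one ht.le hb.le m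
        have h4 : t ≤ b⁻¹ := by
          rw [← one_div, le_div_iff₀ hb]; exact htb
        calc max t 0 * max (1 - t * b) 0 ^ m ≤ max t 0 * 1 := by
              apply mul_le_mul_of_nonneg_left h3 (le_max_right _ _)
          _ ≤ b⁻¹ := by rw [mul_one, h2]; exact h4
      · have hmx : max (1 - t * b) 0 = 0 := max_eq_right (by linarith)
        rw [hmx, zero_pow (by omega), mul_zero]
        positivity

lemma psi_nonneg (d : ℕ) (z : ℝ) : 0 ≤ williamson d γ z :=
  integral_nonneg fun t => wfn_nonneg _ _ _

lemma psi_zero (d : ℕ) : williamson d γ 0 = 1 := by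
  unfold williamson
  simp

lemma psi_le_one (h0 : γ (Iio 0) = 0) (d : ℕ) {z : ℝ} (hz : 0 ≤ z) :
    williamson d γ z ≤ 1 := by
  have h := integral_mono_ae (integrable_wfn h0 hz (d-1)) (integrable_const (1:ℝ))
    (by filter_upwards [gamma_ae_nonneg h0] with t ht; exact wfn_le_one ht hz _)
  simpa [williamson] using h

lemma psi_anti (h0 : γ (Iio 0) = 0) (d : ℕ) {u v : ℝ} (hu : 0 ≤ u) (huv : u ≤ v) :
    williamson d γ v ≤ williamson d γ u :=
  integral_mono_ae (integrable_wfn h0 (hu.trans huv) (d-1)) (integrable_wfn h0 hu (d-1))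
    (by filter_upwards [gamma_ae_nonneg h0] with t ht; exact wfn_anti ht huv _)

lemma psi_cont (h0 : γ (Iio 0) = 0) (d : ℕ) :
    ∀ z ∈ Ici (0:ℝ), ContinuousWithinAt (williamson d γ) (Ici 0) z := by
  intro z hz
  have : Tendsto (fun u => williamson d γ u) (𝓝[Ici 0] z) (𝓝 (williamson d γ z)) := by
    refine tendsto_integral_filter_of_dominated_convergence (fun _ => (1:ℝ)) ?_ ?_
      (integrable_const 1) ?_
    · exact Eventually.of_forall fun u =>
        Continuous.aestronglyMeasurable (by fun_prop)
    · filter_upwards [self_mem_nhdsWithin] with u hu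
      filter_upwards [gamma_ae_nonneg h0] with t ht
      rw [Real.norm_eq_abs, abs_of_nonneg (wfn_nonneg _ _ _)]
      exact wfn_le_one ht hu _
    · refine Eventually.of_forall fun t => ?_
      have hcont : Continuous fun u : ℝ => max (1 - t * u) 0 ^ (d-1) := by fun_prop
      exact (hcont.tendsto z).mono_left nhdsWithin_le_nhds
  exact this

lemma psi_sub_ge (h0 : γ (Iio 0) = 0) {d : ℕ} (hd : 3 ≤ d) {u v b : ℝ}
    (hu : 0 ≤ u) (huv : u ≤ v) (hvb : v ≤ b) (hb : 0 < b) :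
    ((d - 1 : ℕ) : ℝ) * (v - u) * (∫ t, max t 0 * max (1 - t * b) 0 ^ (d - 2) ∂γ)
      ≤ williamson d γ u - williamson d γ v := by
  have hint_u := integrable_wfn h0 hu (d-1)
  have hint_v := integrable_wfn h0 (hu.trans huv) (d-1)
  unfold williamson
  rw [← integral_sub hint_u hint_v]
  have hconst : ((d - 1 : ℕ) : ℝ) * (v - u) * (∫ t, max t 0 * max (1 - t * b) 0 ^ (d - 2) ∂γ)
      = ∫ t, ((d - 1 : ℕ) : ℝ) * (v - u) * (max t 0 * max (1 - t * b) 0 ^ (d - 2)) ∂γ := by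
    rw [integral_const_mul]
  rw [hconst]
  refine integral_mono_ae ((integrable_wfn' hb (m := d-2) (by omega)).const_mul _) (hint_u.sub hint_v) ?_
  filter_upwards [gamma_ae_nonneg h0] with t ht
  have key := wfn_key_lower (t := t) ht hu huv hvb (m := d - 1) (by omega)
  have hm2 : d - 1 - 1 = d - 2 := by omega
  rw [hm2] at key
  have ht' : max t 0 = t := max_eq_left ht
  calc ((d - 1 : ℕ) : ℝ) * (v - u) * (max t 0 * max (1 - t * b) 0 ^ (d - 2))
      = ((d - 1 : ℕ) : ℝ) * (t * (v - u)) * max (1 - t * b) 0 ^ (d - 2) := by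
        rw [ht']; ring
    _ ≤ max (1 - t * u) 0 ^ (d-1) - max (1 - t * v) 0 ^ (d-1) := key

lemma gamma_pos_of_psi_pos (h0 : γ (Iio 0) = 0) (hz : γ {0} = 0) {d : ℕ} (hd : 3 ≤ d)
    {v : ℝ} (hv : 0 < v) (hpos : 0 < williamson d γ v) :
    0 < γ {t : ℝ | 0 < t ∧ t * v < 1} := by
  by_contra h
  push_neg at h
  have hnull : γ {t : ℝ | 0 < t ∧ t * v < 1} = 0 := le_antisymm h (zero_le)
  have hae : (fun t => max (1 - t * v) 0 ^ (d-1)) =ᵐ[γ] 0 := by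
    have h1 : ∀ᵐ t ∂γ, t ∉ {t : ℝ | 0 < t ∧ t * v < 1} := by
      rw [ae_iff]; simpa using hnull
    filter_upwards [h1, gamma_ae_pos h0 hz] with t ht htpos
    simp only [mem_setOf_eq, not_and, not_lt] at ht
    have h2 : 1 - t * v ≤ 0 := by linarith [ht htpos]
    show max (1 - t * v) 0 ^ (d - 1) = 0
    rw [max_eq_right h2]
    exact zero_pow (by omega)
  have : williamson d γ v = 0 := by
    unfold williamson; exact integral_eq_zero_of_ae hae
  linarith

lemma cA_pos (h0 : γ (Iio 0) = 0) (hz : γ {0} = 0) {d : ℕ} (hd : 3 ≤ d) {b : ℝ}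
    (hb : 0 < b) (hpos : 0 < williamson d γ b) :
    0 < ∫ t, max t 0 * max (1 - t * b) 0 ^ (d - 2) ∂γ := by
  rw [integral_pos_iff_support_of_nonneg
    (fun t => mul_nonneg (le_max_right _ _) (wfn_nonneg _ _ _)) (integrable_wfn' hb (m := d-2) (by omega))]
  refine lt_of_lt_of_le (gamma_pos_of_psi_pos h0 hz hd hb hpos) (measure_mono ?_)
  intro t ht
  obtain ⟨ht0, htb⟩ := ht
  have h1 : max t 0 = t := max_eq_left ht0.le
  have h2 : max (1 - t * b) 0 = 1 - t * b := max_eq_left (by linarith)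
  simp only [Function.mem_support, h1, h2]
  have hp : (0:ℝ) < 1 - t * b := by linarith
  exact (mul_pos ht0 (pow_pos hp (d-2))).ne'

lemma psi_strictAnti (h0 : γ (Iio 0) = 0) (hz : γ {0} = 0) {d : ℕ} (hd : 3 ≤ d)
    {u v : ℝ} (hu : 0 ≤ u) (huv : u < v) (hpos : 0 < williamson d γ v) :
    williamson d γ v < williamson d γ u := by
  have h1 := psi_sub_ge h0 hd hu huv.le le_rfl (hu.trans_lt huv)
  have h2 := cA_pos h0 hz hd (hu.trans_lt huv) hpos
  have hd1 : (0:ℝ) < ((d - 1 : ℕ) : ℝ) := by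
    have : 0 < d - 1 := by omega
    exact_mod_cast this
  nlinarith [mul_pos (mul_pos hd1 (sub_pos.2 huv)) h2]

lemma exists_psi_lt (h0 : γ (Iio 0) = 0) (hz : γ {0} = 0) {d : ℕ} (hd : 3 ≤ d) {y : ℝ} (hy : 0 < y) :
    ∃ b : ℝ, 0 < b ∧ williamson d γ b < y := by
  have hbound : ∀ z : ℝ, 0 < z → williamson d γ z ≤ (γ (Iio z⁻¹)).toReal := by
    intro z hzp
    have hind : Integrable ((Iio z⁻¹).indicator fun _ => (1:ℝ)) γ :=
      (integrable_const 1).indicator measurableSet_Iio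
    have hmono := integral_mono_ae (integrable_wfn h0 hzp.le (d-1)) hind ?_
    · calc williamson d γ z ≤ ∫ t, (Iio z⁻¹).indicator (fun _ => (1:ℝ)) t ∂γ := hmono
        _ = (γ (Iio z⁻¹)).toReal := by
            rw [integral_indicator_const _ measurableSet_Iio]; simp [measureReal_def]
    · filter_upwards [gamma_ae_nonneg h0] with t ht
      by_cases htz : t < z⁻¹
      · have : (Iio z⁻¹).indicator (fun _ => (1:ℝ)) t = 1 := by
          simp [indicator_of_mem, htz]
        rw [this]; exact wfn_le_one ht hzp.le _
      · push_neg at htz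
        have h1 : (1:ℝ) ≤ t * z := by
          calc (1:ℝ) = z⁻¹ * z := by field_simp
            _ ≤ t * z := by apply mul_le_mul_of_nonneg_right htz hzp.le
        have h2 : max (1 - t * z) 0 = 0 := max_eq_right (by linarith)
        have h3 : (Iio z⁻¹).indicator (fun _ => (1:ℝ)) t = 0 := by
          simp [indicator_of_notMem, htz, not_lt]
        rw [h2, h3, zero_pow (by omega)]
  have hIio : Tendsto (fun k : ℕ => γ (Iio ((k:ℝ)+1)⁻¹)) atTop
      (𝓝 (γ (⋂ k : ℕ, Iio ((k:ℝ)+1)⁻¹))) := by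
    refine tendsto_measure_iInter_atTop (fun k => measurableSet_Iio.nullMeasurableSet) ?_
      ⟨0, measure_ne_top _ _⟩
    intro i j hij
    apply Iio_subset_Iio
    have h1 : ((i:ℝ)+1) ≤ ((j:ℝ)+1) := by exact_mod_cast Nat.succ_le_succ hij
    exact inv_anti₀ (by positivity) h1
  have hInter : (⋂ k : ℕ, Iio ((k:ℝ)+1)⁻¹) = Iic 0 := by
    ext t
    simp only [mem_iInter, mem_Iio, mem_Iic]
    constructor
    · intro h
      by_contra hpos
      push_neg at hpos
      obtain ⟨n, hn⟩ := exists_nat_one_div_lt hpos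
      have h2 := h n
      rw [one_div] at hn
      linarith
    · intro h k
      exact lt_of_le_of_lt h (by positivity)
  have hzero : γ (Iic 0) = 0 := by
    have he : Iic (0:ℝ) = Iio 0 ∪ {0} := (Iio_union_right).symm
    rw [he]; exact measure_union_null h0 hz
  rw [hInter, hzero] at hIio
  have hev : ∀ᶠ k : ℕ in atTop, γ (Iio ((k:ℝ)+1)⁻¹) < ENNReal.ofReal y :=
    hIio.eventually_lt_const (ENNReal.ofReal_pos.mpr hy)
  obtain ⟨k, hk⟩ := hev.exists
  refine ⟨((k:ℝ)+1), by positivity, ?_⟩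
  have h1 := hbound ((k:ℝ)+1) (by positivity)
  have h2 : (γ (Iio ((k:ℝ)+1)⁻¹)).toReal < y := by
    rw [← ENNReal.toReal_ofReal hy.le]
    exact (ENNReal.toReal_lt_toReal (measure_ne_top _ _) ENNReal.ofReal_ne_top).mpr hk
  linarith

end WilliamsonBasic
section PseudoInvLemmas

lemma pseudoInv_le_ofReal {ψ : ℝ → ℝ} {y r : ℝ} (hr : 0 ≤ r) (h : ψ r = y) :
    pseudoInv ψ y ≤ ENNReal.ofReal r := by
  apply sInf_le
  show psiExt ψ (ENNReal.ofReal r) = y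
  rw [psiExt, if_neg ENNReal.ofReal_ne_top, ENNReal.toReal_ofReal hr]
  exact h

lemma psi_attains {ψ : ℝ → ℝ} (hcont : ∀ z ∈ Ici (0:ℝ), ContinuousWithinAt ψ (Ici 0) z)
    {y : ℝ} (h : pseudoInv ψ y ≠ ∞) :
    ψ (pseudoInv ψ y).toReal = y := by
  set c := pseudoInv ψ y with hc
  have hex : ∀ k : ℕ, ∃ z ∈ {z : ℝ≥0∞ | psiExt ψ z = y}, z < c + ENNReal.ofReal (1/(k+1)) := by
    intro k
    apply sInf_lt_iff.mp
    show c < c + ENNReal.ofReal (1/(k+1))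
    exact ENNReal.lt_add_right h (ENNReal.ofReal_pos.mpr (by positivity)).ne'
  choose z hzmem hzlt using hex
  have hzne : ∀ k, z k ≠ ∞ := fun k => (hzlt k).ne_top
  have hcy : ∀ k, ψ (z k).toReal = y := by
    intro k
    have hm := hzmem k
    rw [mem_setOf_eq, psiExt, if_neg (hzne k)] at hm
    exact hm
  have hle : ∀ k, c ≤ z k := fun k => sInf_le (hzmem k)
  have h1 : ∀ k, c.toReal ≤ (z k).toReal := fun k =>
    (ENNReal.toReal_le_toReal h (hzne k)).mpr (hle k)
  have h2 : ∀ k : ℕ, (z k).toReal ≤ c.toReal + 1/(k+1) := by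
    intro k
    have hmono := ENNReal.toReal_mono
      (ENNReal.add_ne_top.mpr ⟨h, ENNReal.ofReal_ne_top⟩) (hzlt k).le
    rwa [ENNReal.toReal_add h ENNReal.ofReal_ne_top,
      ENNReal.toReal_ofReal (by positivity)] at hmono
  have htend : Tendsto (fun k : ℕ => (z k).toReal) atTop (𝓝 c.toReal) := by
    have hub : Tendsto (fun k : ℕ => c.toReal + 1/((k:ℝ)+1)) atTop (𝓝 (c.toReal + 0)) :=
      tendsto_const_nhds.add tendsto_one_div_add_atTop_nhds_zero_nat
    rw [add_zero] at hub
    exact tendsto_of_tendsto_of_tendsto_of_le_of_le tendsto_const_nhds hub h1 h2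
  have hcomp : Tendsto (fun k => ψ ((z k).toReal)) atTop (𝓝 (ψ c.toReal)) := by
    apply (hcont c.toReal ENNReal.toReal_nonneg).tendsto.comp
    apply tendsto_nhdsWithin_of_tendsto_nhds_of_eventually_within _ htend
    exact Eventually.of_forall fun k => ENNReal.toReal_nonneg
  have hconst : Tendsto (fun _ : ℕ => y) atTop (𝓝 (ψ c.toReal)) := by
    have : (fun k => ψ ((z k).toReal)) = fun _ : ℕ => y := funext hcy
    rwa [this] at hcomp
  exact (tendsto_nhds_unique hconst tendsto_const_nhds)

variable {γ : Measure ℝ} [IsProbabilityMeasure γ]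

lemma psi_le_iff (h0 : γ (Iio 0) = 0) {d : ℕ} {y z : ℝ}
    (hy0 : 0 ≤ y) (hy1 : y ≤ 1) (hzz : 0 ≤ z) :
    williamson d γ z ≤ y ↔ pseudoInv (williamson d γ) y ≤ ENNReal.ofReal z := by
  constructor
  · intro h
    have hycc : y ∈ Icc (williamson d γ z) (williamson d γ 0) := by
      refine ⟨h, ?_⟩
      rw [psi_zero]; exact hy1
    have hcontOn : ContinuousOn (williamson d γ) (Icc 0 z) := fun w hw =>
      ((psi_cont h0 d) w hw.1).mono Icc_subset_Ici_self
    obtain ⟨r, hrmem, hr⟩ := intermediate_value_Icc' hzz hcontOn hycc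
    exact (pseudoInv_le_ofReal hrmem.1 hr).trans (ENNReal.ofReal_le_ofReal hrmem.2)
  · intro h
    have hne : pseudoInv (williamson d γ) y ≠ ∞ := by
      intro htop; rw [htop] at h
      exact (ENNReal.ofReal_lt_top.trans_le h).ne rfl
    have hatt := psi_attains (psi_cont h0 d) hne
    have h1 : (pseudoInv (williamson d γ) y).toReal ≤ z :=
      ENNReal.toReal_le_of_le_ofReal hzz h
    calc williamson d γ z ≤ williamson d γ (pseudoInv (williamson d γ) y).toReal :=
          psi_anti h0 d ENNReal.toReal_nonneg h1
      _ = y := hatt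

lemma pseudoInv_psi_eq (h0 : γ (Iio 0) = 0) (hz : γ {0} = 0) {d : ℕ} (hd : 3 ≤ d)
    {w : ℝ} (hw : 0 ≤ w) (hpos : 0 < williamson d γ w) :
    pseudoInv (williamson d γ) (williamson d γ w) = ENNReal.ofReal w := by
  refine le_antisymm (pseudoInv_le_ofReal hw rfl) ?_
  by_contra hlt
  push_neg at hlt
  have hne : pseudoInv (williamson d γ) (williamson d γ w) ≠ ∞ := hlt.ne_top
  have hatt := psi_attains (psi_cont h0 d) hne
  have hcw : (pseudoInv (williamson d γ) (williamson d γ w)).toReal < w := by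
    have := (ENNReal.toReal_lt_toReal hne ENNReal.ofReal_ne_top).mpr hlt
    rwa [ENNReal.toReal_ofReal hw] at this
  have hstrict := psi_strictAnti h0 hz hd ENNReal.toReal_nonneg hcw hpos
  rw [hatt] at hstrict
  exact lt_irrefl _ hstrict

lemma pseudoInv_one (h0 : γ (Iio 0) = 0) (hz : γ {0} = 0) {d : ℕ} (hd : 3 ≤ d) :
    pseudoInv (williamson d γ) 1 = 0 := by
  have h := pseudoInv_psi_eq h0 hz hd le_rfl (by rw [psi_zero]; norm_num)
  rw [psi_zero] at h
  simpa using h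

lemma pseudoInv_ne_top (h0 : γ (Iio 0) = 0) (hz : γ {0} = 0) {d : ℕ} (hd : 3 ≤ d)
    {y : ℝ} (hy : 0 < y) (hy1 : y ≤ 1) :
    pseudoInv (williamson d γ) y ≠ ∞ := by
  obtain ⟨b, hb, hψb⟩ := exists_psi_lt h0 hz hd hy
  have h := (psi_le_iff h0 hy.le hy1 hb.le).mp hψb.le
  exact fun htop => by rw [htop] at h; exact (ENNReal.ofReal_lt_top.trans_le h).ne rfl

lemma pseudoInv_zero_pos (h0 : γ (Iio 0) = 0) {d : ℕ} :
    0 < pseudoInv (williamson d γ) 0 := by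
  have hc : Tendsto (williamson d γ) (𝓝[Ici 0] 0) (𝓝 1) := by
    have := (psi_cont h0 d) 0 self_mem_Ici
    rwa [ContinuousWithinAt, psi_zero] at this
  have hev : ∀ᶠ u in 𝓝[Ici 0] (0:ℝ), 0 < williamson d γ u :=
    hc.eventually (eventually_gt_nhds one_pos)
  have hev' : ∀ᶠ u in 𝓝[Ioi 0] (0:ℝ), 0 < williamson d γ u :=
    hev.filter_mono (nhdsWithin_mono 0 Ioi_subset_Ici_self)
  obtain ⟨δ, hψδ, hδpos⟩ := (hev'.and self_mem_nhdsWithin).exists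
  have hnot : ¬ williamson d γ δ ≤ 0 := not_le.mpr hψδ
  have h2 : ¬ pseudoInv (williamson d γ) 0 ≤ ENNReal.ofReal δ := fun hle =>
    hnot ((psi_le_iff h0 le_rfl zero_le_one (le_of_lt hδpos)).mpr hle)
  have h3 : ENNReal.ofReal δ < pseudoInv (williamson d γ) 0 := not_le.mp h2
  exact lt_of_le_of_lt (zero_le) h3

lemma gamma_ae_good (h0 : γ (Iio 0) = 0) (hz : γ {0} = 0) {d : ℕ} (hd : 3 ≤ d)
    (hac : γ ≪ volume) :
    ∀ᵐ t ∂γ, 0 < t ∧ ENNReal.ofReal t⁻¹ < pseudoInv (williamson d γ) 0 := by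
  by_cases htop : pseudoInv (williamson d γ) 0 = ∞
  · filter_upwards [gamma_ae_pos h0 hz] with t ht
    exact ⟨ht, by rw [htop]; exact ENNReal.ofReal_lt_top⟩
  · set c := (pseudoInv (williamson d γ) 0).toReal with hcdef
    have hcpos : 0 < c := ENNReal.toReal_pos (pseudoInv_zero_pos h0).ne' htop
    have hpsi_zero : ∀ s : ℝ, c ≤ s → williamson d γ s = 0 := by
      intro s hs
      have h1 : pseudoInv (williamson d γ) 0 ≤ ENNReal.ofReal s := by
        rw [← ENNReal.ofReal_toReal htop]
        exact ENNReal.ofReal_le_ofReal hs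
      have h2 := (psi_le_iff h0 le_rfl zero_le_one (hcpos.le.trans hs)).mpr h1
      exact le_antisymm h2 (psi_nonneg d s)
    have hIoo : ∀ s : ℝ, c < s → γ (Ioo 0 s⁻¹) = 0 := by
      intro s hs
      have hspos : 0 < s := hcpos.trans hs
      have hψ : williamson d γ s = 0 := hpsi_zero s hs.le
      have hae0 : (fun t => max (1 - t * s) 0 ^ (d-1)) =ᵐ[γ] 0 := by
        refine (integral_eq_zero_iff_of_nonneg_ae ?_ (integrable_wfn h0 hspos.le _)).mp hψ
        exact Eventually.of_forall fun t => wfn_nonneg _ _ _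
      have hnull : γ {t : ℝ | ¬ max (1 - t * s) 0 ^ (d-1) = (0:ℝ)} = 0 := by
        have := hae0
        rw [EventuallyEq, ae_iff] at this
        simpa using this
      refine measure_mono_null ?_ hnull
      rintro t ⟨ht0, hts⟩
      have hts1 : t * s < 1 := by
        have := mul_lt_mul_of_pos_right hts hspos
        rwa [inv_mul_cancel₀ hspos.ne'] at this
      have hmx : max (1 - t * s) 0 = 1 - t * s := max_eq_left (by linarith)
      simp only [mem_setOf_eq, hmx]
      exact pow_ne_zero _ (by linarith)
    have hIooc : γ (Ioo 0 c⁻¹) = 0 := by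
      have hun : Ioo (0:ℝ) c⁻¹ = ⋃ k : ℕ, Ioo 0 ((c + 1/((k:ℝ)+1))⁻¹) := by
        ext t
        simp only [mem_Ioo, mem_iUnion]
        constructor
        · rintro ⟨ht0, htc⟩
          have htinv : c < t⁻¹ := by
            have h5 := inv_strictAnti₀ ht0 htc
            rwa [inv_inv] at h5
          obtain ⟨k, hk⟩ := exists_nat_one_div_lt (sub_pos.2 htinv)
          refine ⟨k, ht0, ?_⟩
          have h7 : c + 1/((k:ℝ)+1) < t⁻¹ := by linarith
          have h8 : 0 < c + 1/((k:ℝ)+1) := by positivity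
          calc t = (t⁻¹)⁻¹ := (inv_inv t).symm
            _ < (c + 1/((k:ℝ)+1))⁻¹ := inv_strictAnti₀ h8 h7
        · rintro ⟨k, ht0, htk⟩
          refine ⟨ht0, lt_of_lt_of_le htk ?_⟩
          apply inv_anti₀ hcpos
          have : (0:ℝ) < 1/((k:ℝ)+1) := by positivity
          linarith
      rw [hun]
      exact measure_iUnion_null fun k => hIoo _ (by
        have : (0:ℝ) < 1/((k:ℝ)+1) := by positivity
        linarith)
    have hpt : γ {c⁻¹} = 0 := hac (Real.volume_singleton)
    rw [ae_iff]
    have hsub : {t : ℝ | ¬(0 < t ∧ ENNReal.ofReal t⁻¹ < pseudoInv (williamson d γ) 0)}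
        ⊆ (Iio 0 ∪ {0}) ∪ (Ioo 0 c⁻¹ ∪ {c⁻¹}) := by
      intro t ht
      simp only [mem_setOf_eq, not_and, not_lt] at ht
      rcases lt_trichotomy t 0 with h | h | h
      · exact Or.inl (Or.inl h)
      · exact Or.inl (Or.inr h)
      · right
        have h2 := ht h
        have h3 : c ≤ t⁻¹ := by
          have h4 := ENNReal.toReal_mono ENNReal.ofReal_ne_top h2
          rwa [ENNReal.toReal_ofReal (by positivity)] at h4
        have h4 : t ≤ c⁻¹ := by
          calc t = (t⁻¹)⁻¹ := (inv_inv t).symm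
            _ ≤ c⁻¹ := inv_anti₀ hcpos h3
        rcases eq_or_lt_of_le h4 with he | hlt
        · exact Or.inr he
        · exact Or.inl ⟨h, hlt⟩
    refine measure_mono_null hsub ?_
    refine measure_union_null (measure_union_null h0 hz) (measure_union_null hIooc hpt)

end PseudoInvLemmas
section Simplex

lemma simplex_set_eq_preimage (n : ℕ) (c : ℝ) :
    {s : Fin (n+1) → ℝ | (∀ i, 0 ≤ s i) ∧ ∑ i, s i ≤ c}
      = (MeasurableEquiv.piFinSuccAbove (fun _ : Fin (n+1) => ℝ) 0) ⁻¹'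
        {p : ℝ × (Fin n → ℝ) | 0 ≤ p.1 ∧ (∀ i, 0 ≤ p.2 i) ∧ p.1 + ∑ i, p.2 i ≤ c} := by
  ext s
  have happ : (MeasurableEquiv.piFinSuccAbove (fun _ : Fin (n+1) => ℝ) 0) s
      = (s 0, fun i => s ((0 : Fin (n+1)).succAbove i)) := rfl
  simp only [mem_preimage, happ, mem_setOf_eq]
  rw [Fin.sum_univ_succ s]
  constructor
  · rintro ⟨hnn, hsum⟩
    exact ⟨hnn 0, fun i => hnn _, by simpa [Fin.succAbove_zero] using hsum⟩
  · rintro ⟨h0, hnn, hsum⟩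
    constructor
    · intro i
      rcases Fin.eq_zero_or_eq_succ i with rfl | ⟨j, rfl⟩
      · exact h0
      · simpa [Fin.succAbove_zero] using hnn j
    · simpa [Fin.succAbove_zero] using hsum

lemma measurable_sum_fin (n : ℕ) : Measurable (fun s : Fin n → ℝ => ∑ i, s i) :=
  Finset.univ.measurable_sum fun i _ => measurable_pi_apply i

lemma measurable_simplex_like (n : ℕ) (c : ℝ) :
    MeasurableSet {s : Fin n → ℝ | (∀ i, 0 ≤ s i) ∧ ∑ i, s i ≤ c} := by
  have hset : {s : Fin n → ℝ | (∀ i, 0 ≤ s i) ∧ ∑ i, s i ≤ c}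
      = (⋂ i, {s : Fin n → ℝ | 0 ≤ s i}) ∩ {s : Fin n → ℝ | ∑ i, s i ≤ c} := by
    ext; simp
  rw [hset]
  exact (MeasurableSet.iInter fun i =>
    measurableSet_le measurable_const (measurable_pi_apply i)).inter
    (measurableSet_le (measurable_sum_fin n) measurable_const)

lemma volume_simplex : ∀ (n : ℕ) {c : ℝ}, 0 ≤ c →
    volume {s : Fin n → ℝ | (∀ i, 0 ≤ s i) ∧ ∑ i, s i ≤ c}
      = ENNReal.ofReal (c ^ n / n.factorial) := by
  intro n
  induction n with
  | zero =>
    intro c hc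
    have huniv : {s : Fin 0 → ℝ | (∀ i, 0 ≤ s i) ∧ ∑ i, s i ≤ c} = univ := by
      ext s
      simp only [mem_setOf_eq, mem_univ, iff_true]
      exact ⟨fun i => i.elim0, by simpa using hc⟩
    rw [huniv, volume_pi, Measure.pi_univ]
    simp [Nat.factorial]
  | succ n ih =>
    intro c hc
    have hmp := volume_preserving_piFinSuccAbove (fun _ : Fin (n+1) => ℝ) 0
    set T : Set (ℝ × (Fin n → ℝ)) :=
      {p : ℝ × (Fin n → ℝ) | 0 ≤ p.1 ∧ (∀ i, 0 ≤ p.2 i) ∧ p.1 + ∑ i, p.2 i ≤ c} with hT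
    have hTm : MeasurableSet T := by
      have hset : T = {p : ℝ × (Fin n → ℝ) | 0 ≤ p.1}
          ∩ ((⋂ i, {p : ℝ × (Fin n → ℝ) | 0 ≤ p.2 i})
            ∩ {p : ℝ × (Fin n → ℝ) | p.1 + ∑ i, p.2 i ≤ c}) := by
        ext; simp [hT, and_assoc]
      rw [hset]
      refine (measurableSet_le measurable_const measurable_fst).inter
        ((MeasurableSet.iInter fun i => measurableSet_le measurable_const
          ((measurable_pi_apply i).comp measurable_snd)).inter
          (measurableSet_le (measurable_fst.add ((measurable_sum_fin n).comp measurable_snd))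
            measurable_const))
    rw [simplex_set_eq_preimage n c, hmp.measure_preimage hTm.nullMeasurableSet]
    rw [show (volume : Measure (ℝ × (Fin n → ℝ))) = (volume : Measure ℝ).prod volume from
      Measure.volume_eq_prod _ _, Measure.prod_apply hTm]
    have hval : ∀ x : ℝ, volume (Prod.mk x ⁻¹' T)
        = (Icc 0 c).indicator (fun x => ENNReal.ofReal ((c - x) ^ n / n.factorial)) x := by
      intro x
      by_cases hx : 0 ≤ x ∧ x ≤ c
      · have hset : Prod.mk x ⁻¹' T = {y : Fin n → ℝ | (∀ i, 0 ≤ y i) ∧ ∑ i, y i ≤ c - x} := by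
          ext y
          simp only [mem_preimage, hT, mem_setOf_eq]
          constructor
          · rintro ⟨-, h2, h3⟩; exact ⟨h2, by linarith⟩
          · rintro ⟨h2, h3⟩; exact ⟨hx.1, h2, by linarith⟩
        rw [hset, ih (by linarith), indicator_of_mem (mem_Icc.mpr hx)]
      · rw [indicator_of_notMem (by rwa [mem_Icc])]
        rcases not_and_or.mp hx with h | h
        · have hset : Prod.mk x ⁻¹' T = ∅ := by
            ext y; simp only [mem_preimage, hT, mem_setOf_eq, mem_empty_iff_false, iff_false]
            rintro ⟨h1, -, -⟩; exact h h1
          rw [hset, measure_empty]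
        · push_neg at h
          have hset : Prod.mk x ⁻¹' T = ∅ := by
            ext y; simp only [mem_preimage, hT, mem_setOf_eq, mem_empty_iff_false, iff_false]
            rintro ⟨h1, h2, h3⟩
            have : 0 ≤ ∑ i, y i := Finset.sum_nonneg fun i _ => h2 i
            linarith
          rw [hset, measure_empty]
    rw [lintegral_congr hval, lintegral_indicator measurableSet_Icc]
    have hint : IntegrableOn (fun x => (c - x) ^ n / n.factorial) (Icc 0 c) volume :=
      (Continuous.integrableOn_Icc (by fun_prop))
    rw [← ofReal_integral_eq_lintegral_ofReal hint ?_]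
    · congr 1
      rw [integral_Icc_eq_integral_Ioc, ← intervalIntegral.integral_of_le hc]
      rw [intervalIntegral.integral_div]
      rw [intervalIntegral.integral_comp_sub_left (fun u => u ^ n) c]
      rw [sub_self, sub_zero, integral_pow]
      rw [Nat.factorial_succ]
      push_cast
      rw [zero_pow (by omega)]
      field_simp
      simp
    · filter_upwards [ae_restrict_mem measurableSet_Icc] with x hx
      have : 0 ≤ (c - x) ^ n := pow_nonneg (by linarith [hx.2]) n
      positivity

lemma volume_simplex_shift (n : ℕ) (hn : 0 < n) (a : Fin n → ℝ) (c : ℝ) :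
    volume {s : Fin n → ℝ | (∀ i, a i ≤ s i) ∧ ∑ i, s i ≤ c}
      = ENNReal.ofReal (max (c - ∑ i, a i) 0 ^ n / n.factorial) := by
  rcases le_or_gt 0 (c - ∑ i, a i) with h | h
  · have hset : {s : Fin n → ℝ | (∀ i, a i ≤ s i) ∧ ∑ i, s i ≤ c}
        = (fun s : Fin n → ℝ => s + (-a)) ⁻¹'
          {s : Fin n → ℝ | (∀ i, 0 ≤ s i) ∧ ∑ i, s i ≤ c - ∑ i, a i} := by
      ext s
      simp only [mem_preimage, mem_setOf_eq, Pi.add_apply, Pi.neg_apply]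
      constructor
      · rintro ⟨h1, h2⟩
        refine ⟨fun i => by linarith [h1 i], ?_⟩
        rw [Finset.sum_add_distrib, Finset.sum_neg_distrib]
        linarith
      · rintro ⟨h1, h2⟩
        rw [Finset.sum_add_distrib, Finset.sum_neg_distrib] at h2
        exact ⟨fun i => by linarith [h1 i], by linarith⟩
    rw [hset, measure_preimage_add_right, volume_simplex n h, max_eq_left h]
  · have hset : {s : Fin n → ℝ | (∀ i, a i ≤ s i) ∧ ∑ i, s i ≤ c} = ∅ := by
      ext s
      simp only [mem_setOf_eq, mem_empty_iff_false, iff_false, not_and]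
      intro h1
      have : ∑ i, a i ≤ ∑ i, s i := Finset.sum_le_sum fun i _ => h1 i
      linarith
    rw [hset, measure_empty, max_eq_right h.le, zero_pow hn.ne', zero_div, ENNReal.ofReal_zero]

end Simplex
section Construction

open scoped Pointwise

def simplexSet (n : ℕ) : Set (Fin n → ℝ) := {s | (∀ i, 0 ≤ s i) ∧ ∑ i, s i ≤ 1}

def simplexMeasure (n : ℕ) : Measure (Fin n → ℝ) :=
  (n.factorial : ℝ≥0∞) • volume.restrict (simplexSet n)

lemma simplexSet_measurable (n : ℕ) : MeasurableSet (simplexSet n) :=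
  measurable_simplex_like n 1

instance simplexMeasure_prob (n : ℕ) : IsProbabilityMeasure (simplexMeasure n) := by
  constructor
  rw [simplexMeasure, Measure.smul_apply, Measure.restrict_apply MeasurableSet.univ, univ_inter]
  rw [show simplexSet n = {s : Fin n → ℝ | (∀ i, 0 ≤ s i) ∧ ∑ i, s i ≤ 1} from rfl,
    volume_simplex n zero_le_one]
  have hfac : (0:ℝ) < n.factorial := by exact_mod_cast n.factorial_pos
  rw [one_pow, smul_eq_mul, ← ENNReal.ofReal_natCast, ← ENNReal.ofReal_mul (by positivity)]
  rw [mul_one_div, div_self hfac.ne']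
  exact ENNReal.ofReal_one

lemma simplexMeasure_apply (n : ℕ) {A : Set (Fin n → ℝ)} (hA : MeasurableSet A) :
    simplexMeasure n A = (n.factorial : ℝ≥0∞) * volume (A ∩ simplexSet n) := by
  rw [simplexMeasure, Measure.smul_apply, Measure.restrict_apply hA, smul_eq_mul]

def lastSplit (n : ℕ) : (Fin (n+1) → ℝ) ≃ᵐ ℝ × (Fin n → ℝ) :=
  MeasurableEquiv.piFinSuccAbove (fun _ => ℝ) (Fin.last n)

lemma lastSplit_symm_apply_last (n : ℕ) (u : ℝ) (y : Fin n → ℝ) :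
    (lastSplit n).symm (u, y) (Fin.last n) = u := by
  show (Fin.insertNthEquiv (fun _ => ℝ) (Fin.last n)) (u, y) (Fin.last n) = u
  simp [Fin.insertNthEquiv]

lemma lastSplit_symm_apply_castSucc (n : ℕ) (u : ℝ) (y : Fin n → ℝ) (i : Fin n) :
    (lastSplit n).symm (u, y) (i.castSucc) = y i := by
  show (Fin.insertNthEquiv (fun _ => ℝ) (Fin.last n)) (u, y) (i.castSucc) = y i
  simp only [Fin.insertNthEquiv, Equiv.coe_fn_mk]
  rw [← Fin.succAbove_last_apply i]
  exact Fin.insertNth_apply_succAbove _ _ _ _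

lemma volume_preserving_lastSplit (n : ℕ) : MeasurePreserving (lastSplit n) volume volume :=
  volume_preserving_piFinSuccAbove (fun _ => ℝ) (Fin.last n)

def Wmap (n : ℕ) (p : ℝ × (Fin n → ℝ)) : Fin (n+1) → ℝ :=
  (lastSplit n).symm (p.1⁻¹, fun i => p.2 i / p.1)

lemma Wmap_measurable (n : ℕ) : Measurable (Wmap n) :=
  (lastSplit n).symm.measurable.comp
    ((measurable_fst.inv).prodMk (measurable_pi_lambda _ fun i =>
      ((measurable_pi_apply i).comp measurable_snd).div measurable_fst))

lemma Wmap_last (n : ℕ) (p : ℝ × (Fin n → ℝ)) : Wmap n p (Fin.last n) = p.1⁻¹ :=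
  lastSplit_symm_apply_last n _ _

lemma Wmap_castSucc (n : ℕ) (p : ℝ × (Fin n → ℝ)) (i : Fin n) :
    Wmap n p (i.castSucc) = p.2 i / p.1 :=
  lastSplit_symm_apply_castSucc n _ _ i

lemma Wmap_null (n : ℕ) (γ : Measure ℝ) [IsProbabilityMeasure γ]
    (h0 : γ (Iio 0) = 0) (hz : γ {0} = 0) (hac : γ ≪ volume)
    {M : Set (Fin (n+1) → ℝ)} (hM : MeasurableSet M) (hvol : volume M = 0) :
    (γ.prod (simplexMeasure n)) (Wmap n ⁻¹' M) = 0 := by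
  set e := lastSplit n
  set Msec : ℝ → Set (Fin n → ℝ) := fun u => {y | e.symm (u, y) ∈ M} with hMsec
  have hprodnull : ((volume : Measure ℝ).prod (volume : Measure (Fin n → ℝ)))
      (e.symm ⁻¹' M) = 0 := by
    have hmp := volume_preserving_lastSplit n
    have hSm : MeasurableSet (e.symm ⁻¹' M) := e.symm.measurable hM
    have h1 : volume (e ⁻¹' (e.symm ⁻¹' M)) = volume M := by
      congr 1
      ext w
      simp
    rw [← Measure.volume_eq_prod _ _]
    rw [← hmp.measure_preimage hSm.nullMeasurableSet] at *
    rw [h1]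
    exact hvol
  have hsec : ∀ᵐ u ∂(volume : Measure ℝ), volume (Msec u) = 0 := by
    have hSm : MeasurableSet (e.symm ⁻¹' M) := e.symm.measurable hM
    have := (Measure.measure_prod_null hSm).mp hprodnull
    filter_upwards [this] with u hu
    exact hu
  set BAD : Set ℝ := {u | volume (Msec u) ≠ 0} with hBAD
  have hBADnull : volume BAD = 0 := by
    rw [ae_iff] at hsec
    simpa using hsec
  have hγBAD : γ {t : ℝ | 0 < t ∧ t⁻¹ ∈ BAD} = 0 := by
    have hsub : {t : ℝ | 0 < t ∧ t⁻¹ ∈ BAD}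
        ⊆ ⋃ k : ℕ, (fun u : ℝ => u⁻¹) '' (BAD ∩ Ici (((k:ℝ)+1)⁻¹)) := by
      rintro t ⟨ht, htB⟩
      obtain ⟨k, hk⟩ := exists_nat_ge t
      have hk1 : t ≤ (k:ℝ)+1 := by linarith
      have hinv : ((k:ℝ)+1)⁻¹ ≤ t⁻¹ := by
        apply inv_anti₀ ht hk1
      refine mem_iUnion.mpr ⟨k, ⟨t⁻¹, ⟨htB, hinv⟩, inv_inv t⟩⟩
    refine measure_mono_null hsub (measure_iUnion_null fun k => hac ?_)
    -- volume of image under inv is null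
    have hlip : LipschitzOnWith (Real.toNNReal (((k:ℝ)+1)^2))
        (fun u : ℝ => u⁻¹) (BAD ∩ Ici (((k:ℝ)+1)⁻¹)) := by
      rw [lipschitzOnWith_iff_dist_le_mul]
      intro a ha b hb
      have hapos : ((k:ℝ)+1)⁻¹ ≤ a := ha.2
      have hbpos : ((k:ℝ)+1)⁻¹ ≤ b := hb.2
      have hkpos : (0:ℝ) < ((k:ℝ)+1)⁻¹ := by positivity
      have ha0 : 0 < a := lt_of_lt_of_le hkpos hapos
      have hb0 : 0 < b := lt_of_lt_of_le hkpos hbpos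
      rw [Real.dist_eq, Real.dist_eq]
      have habpos : (0:ℝ) < a * b := by positivity
      have key : |a⁻¹ - b⁻¹| = |a - b| / (a * b) := by
        rw [show a⁻¹ - b⁻¹ = (b - a) / (a * b) by field_simp, abs_div,
          abs_of_pos habpos, abs_sub_comm]
      rw [key, div_le_iff₀ habpos, Real.coe_toNNReal _ (by positivity)]
      have hab : ((k:ℝ)+1)⁻¹ * ((k:ℝ)+1)⁻¹ ≤ a * b :=
        mul_le_mul hapos hbpos hkpos.le ha0.le
      have h3 : (1:ℝ) ≤ ((k:ℝ)+1)^2 * (a*b) := by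
        have h4 := mul_le_mul_of_nonneg_left hab
          (le_of_lt (show (0:ℝ) < ((k:ℝ)+1)^2 by positivity))
        have heq : ((k:ℝ)+1)^2 * (((k:ℝ)+1)⁻¹ * ((k:ℝ)+1)⁻¹) = 1 := by
          field_simp
        linarith [h4, heq.symm.le]
      nlinarith [abs_nonneg (a - b)]
    have himg := hlip.hausdorffMeasure_image_le (zero_le_one (α := ℝ))
    rw [show ((μH[(1:ℝ)] : Measure ℝ)) = volume from MeasureTheory.hausdorffMeasure_real] at himg
    have hz2 : volume (BAD ∩ Ici (((k:ℝ)+1)⁻¹)) = 0 :=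
      measure_mono_null inter_subset_left hBADnull
    rw [hz2, mul_zero] at himg
    exact nonpos_iff_eq_zero.mp himg
  have hWm : Measurable (Wmap n) := Wmap_measurable n
  have hpre : MeasurableSet (Wmap n ⁻¹' M) := hWm hM
  rw [Measure.prod_apply hpre]
  have hgood : ∀ᵐ t ∂γ, 0 < t ∧ t⁻¹ ∉ BAD := by
    rw [ae_iff]
    have hsub2 : {t : ℝ | ¬(0 < t ∧ t⁻¹ ∉ BAD)} ⊆ (Iio 0 ∪ {0}) ∪ {t | 0 < t ∧ t⁻¹ ∈ BAD} := by
      intro t ht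
      simp only [mem_setOf_eq, not_and, not_not] at ht
      rcases lt_trichotomy t 0 with h|h|h
      · exact Or.inl (Or.inl h)
      · exact Or.inl (Or.inr h)
      · exact Or.inr ⟨h, ht h⟩
    exact measure_mono_null hsub2 (measure_union_null (measure_union_null h0 hz) hγBAD)
  have hae : (fun t => simplexMeasure n (Prod.mk t ⁻¹' (Wmap n ⁻¹' M)))
      =ᵐ[γ] (fun _ => 0) := by
    filter_upwards [hgood] with t htt
    obtain ⟨ht, htB⟩ := htt
    have hslice : Prod.mk t ⁻¹' (Wmap n ⁻¹' M) = (t • Msec t⁻¹ : Set _) := by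
      ext s
      rw [mem_smul_set_iff_inv_smul_mem₀ (ne_of_gt ht)]
      show Wmap n (t, s) ∈ M ↔ e.symm (t⁻¹, t⁻¹ • s) ∈ M
      have heq : Wmap n (t, s) = e.symm (t⁻¹, t⁻¹ • s) := by
        rw [Wmap]
        have : (fun i => (t, s).2 i / (t, s).1) = t⁻¹ • s := by
          funext i
          simp [div_eq_inv_mul]
        rw [this]
      rw [heq]
    have hms : MeasurableSet (Prod.mk t ⁻¹' (Wmap n ⁻¹' M)) := measurable_prodMk_left hpre
    rw [simplexMeasure_apply n hms]
    refine mul_eq_zero.mpr (Or.inr ?_)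
    refine measure_mono_null inter_subset_left ?_
    rw [hslice, Measure.addHaar_smul]
    have hMt : volume (Msec t⁻¹) = 0 := not_not.mp htB
    rw [hMt, mul_zero]
  rw [lintegral_congr_ae hae, lintegral_zero]

end Construction
section Construction2

def PhiMap (n : ℕ) (ψ : ℝ → ℝ) (w : Fin (n+1) → ℝ) : Fin (n+1) → ℝ :=
  fun j => if j = Fin.last n then ψ (w j - ∑ i : Fin n, w i.castSucc) else ψ (w j)

def Xmap (n : ℕ) (ψ : ℝ → ℝ) : ℝ × (Fin n → ℝ) → (Fin (n+1) → ℝ) :=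
  PhiMap n ψ ∘ Wmap n

def nuMeasure (n : ℕ) (ψ : ℝ → ℝ) (γ : Measure ℝ) : Measure (Fin (n+1) → ℝ) :=
  (γ.prod (simplexMeasure n)).map (Xmap n ψ)

lemma psi_williamson_measurable (d : ℕ) (γ : Measure ℝ) [IsProbabilityMeasure γ] :
    Measurable (williamson d γ) := by
  have hsm : StronglyMeasurable (fun q : ℝ × ℝ => max (1 - q.2 * q.1) 0 ^ (d-1)) :=
    Continuous.stronglyMeasurable (by fun_prop)
  exact hsm.integral_prod_right'.measurable

lemma PhiMap_measurable (n : ℕ) {ψ : ℝ → ℝ} (hψ : Measurable ψ) :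
    Measurable (PhiMap n ψ) := by
  apply measurable_pi_lambda
  intro j
  by_cases hj : j = Fin.last n
  · simp only [PhiMap, if_pos hj]
    exact hψ.comp ((measurable_pi_apply _).sub
      (Finset.univ.measurable_sum fun i _ => measurable_pi_apply _))
  · simp only [PhiMap, if_neg hj]
    exact hψ.comp (measurable_pi_apply _)

lemma Xmap_measurable (n : ℕ) {ψ : ℝ → ℝ} (hψ : Measurable ψ) : Measurable (Xmap n ψ) :=
  (PhiMap_measurable n hψ).comp (Wmap_measurable n)

lemma Xmap_castSucc (n : ℕ) (ψ : ℝ → ℝ) (p : ℝ × (Fin n → ℝ)) (i : Fin n) :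
    Xmap n ψ p (i.castSucc) = ψ (p.2 i / p.1) := by
  simp only [Xmap, Function.comp_apply, PhiMap]
  rw [if_neg (Fin.castSucc_lt_last i).ne, Wmap_castSucc]

lemma Xmap_last (n : ℕ) (ψ : ℝ → ℝ) (p : ℝ × (Fin n → ℝ)) :
    Xmap n ψ p (Fin.last n) = ψ (p.1⁻¹ - ∑ i : Fin n, p.2 i / p.1) := by
  simp only [Xmap, Function.comp_apply, PhiMap, if_pos rfl]
  rw [Wmap_last]
  have hsum : ∑ i : Fin n, Wmap n p i.castSucc = ∑ i : Fin n, p.2 i / p.1 :=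
    Finset.sum_congr rfl fun i _ => Wmap_castSucc n p i
  rw [hsum, if_pos trivial]

lemma nu_Iic (n : ℕ) (hn : 2 ≤ n) (γ : Measure ℝ) [IsProbabilityMeasure γ]
    (h0 : γ (Iio 0) = 0) (hz : γ {0} = 0)
    (x : Fin (n+1) → ℝ) (hx : ∀ j, x j ∈ Icc (0:ℝ) 1) :
    nuMeasure n (williamson (n+1) γ) γ (univ.pi fun j => Iic (x j))
      = ENNReal.ofReal (archCopula (n+1) (williamson (n+1) γ) x) := by
  have hd : 3 ≤ n + 1 := by omega
  have hexp : n + 1 - 1 = n := by omega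
  have hψm : Measurable (williamson (n+1) γ) := psi_williamson_measurable (n+1) γ
  have hBm : MeasurableSet (univ.pi fun j => Iic (x j)) :=
    MeasurableSet.univ_pi fun j => measurableSet_Iic
  have hXB : MeasurableSet (Xmap n (williamson (n+1) γ) ⁻¹' (univ.pi fun j => Iic (x j))) :=
    (Xmap_measurable n hψm) hBm
  rw [nuMeasure, Measure.map_apply (Xmap_measurable n hψm) hBm, Measure.prod_apply hXB]
  by_cases hfin : ∀ j, pseudoInv (williamson (n+1) γ) (x j) ≠ ∞
  · set a : Fin (n+1) → ℝ := fun j => (pseudoInv (williamson (n+1) γ) (x j)).toReal with ha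
    have ha_nonneg : ∀ j, 0 ≤ a j := fun j => ENNReal.toReal_nonneg
    set A := ∑ j, a j with hA
    have hA_nonneg : 0 ≤ A := Finset.sum_nonneg fun j _ => ha_nonneg j
    have hae : (fun t => simplexMeasure n (Prod.mk t ⁻¹'
          (Xmap n (williamson (n+1) γ) ⁻¹' (univ.pi fun j => Iic (x j)))))
        =ᵐ[γ] (fun t => ENNReal.ofReal (max (1 - t * A) 0 ^ n)) := by
      filter_upwards [gamma_ae_pos h0 hz] with t ht
      have hms : MeasurableSet (Prod.mk t ⁻¹'
          (Xmap n (williamson (n+1) γ) ⁻¹' (univ.pi fun j => Iic (x j)))) :=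
        measurable_prodMk_left hXB
      rw [simplexMeasure_apply n hms]
      have hslice : (Prod.mk t ⁻¹'
            (Xmap n (williamson (n+1) γ) ⁻¹' (univ.pi fun j => Iic (x j)))) ∩ simplexSet n
          = {s : Fin n → ℝ | (∀ i, t * a (Fin.castSucc i) ≤ s i)
              ∧ ∑ i, s i ≤ 1 - t * a (Fin.last n)} := by
        ext s
        simp only [mem_inter_iff, mem_preimage, Set.mem_pi, mem_univ, true_implies,
          mem_Iic, mem_setOf_eq, simplexSet]
        constructor
        · rintro ⟨hXle, hsnn, hssum⟩
          have hcast : ∀ i : Fin n, t * a (Fin.castSucc i) ≤ s i := by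
            intro i
            have h1 := hXle (Fin.castSucc i)
            rw [Xmap_castSucc] at h1
            have hdiv : 0 ≤ s i / t := div_nonneg (hsnn i) ht.le
            have h2 := (psi_le_iff h0 (hx _).1 (hx _).2 hdiv).mp h1
            rw [← ENNReal.ofReal_toReal (hfin (Fin.castSucc i))] at h2
            have h3 : a (Fin.castSucc i) ≤ s i / t :=
              (ENNReal.ofReal_le_ofReal_iff hdiv).mp h2
            rw [le_div_iff₀ ht] at h3
            linarith [h3]
          have hlast : ∑ i, s i ≤ 1 - t * a (Fin.last n) := by
            have h1 := hXle (Fin.last n)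
            rw [Xmap_last] at h1
            have harg : t⁻¹ - ∑ i : Fin n, s i / t = (1 - ∑ i, s i) / t := by
              rw [← Finset.sum_div]
              field_simp
            rw [harg] at h1
            have hdiv : 0 ≤ (1 - ∑ i, s i) / t := div_nonneg (by linarith) ht.le
            have h2 := (psi_le_iff h0 (hx _).1 (hx _).2 hdiv).mp h1
            rw [← ENNReal.ofReal_toReal (hfin (Fin.last n))] at h2
            have h3 : a (Fin.last n) ≤ (1 - ∑ i, s i) / t :=
              (ENNReal.ofReal_le_ofReal_iff hdiv).mp h2
            rw [le_div_iff₀ ht] at h3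
            linarith [h3]
          exact ⟨hcast, hlast⟩
        · rintro ⟨hlow, hsum⟩
          have hsnn : ∀ i, 0 ≤ s i := fun i =>
            le_trans (mul_nonneg ht.le (ha_nonneg _)) (hlow i)
          have hssum : ∑ i, s i ≤ 1 := by
            have : 0 ≤ t * a (Fin.last n) := mul_nonneg ht.le (ha_nonneg _)
            linarith
          refine ⟨?_, hsnn, hssum⟩
          intro j
          rcases Fin.eq_castSucc_or_eq_last j with ⟨i, rfl⟩ | rfl
          · rw [Xmap_castSucc]
            have hdiv : 0 ≤ s i / t := div_nonneg (hsnn i) ht.le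
            refine (psi_le_iff h0 (hx _).1 (hx _).2 hdiv).mpr ?_
            rw [← ENNReal.ofReal_toReal (hfin (Fin.castSucc i))]
            refine (ENNReal.ofReal_le_ofReal_iff hdiv).mpr ?_
            rw [le_div_iff₀ ht]
            linarith [hlow i]
          · rw [Xmap_last]
            have harg : t⁻¹ - ∑ i : Fin n, s i / t = (1 - ∑ i, s i) / t := by
              rw [← Finset.sum_div]
              field_simp
            rw [harg]
            have hdiv : 0 ≤ (1 - ∑ i, s i) / t := div_nonneg (by linarith) ht.le
            refine (psi_le_iff h0 (hx _).1 (hx _).2 hdiv).mpr ?_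
            rw [← ENNReal.ofReal_toReal (hfin (Fin.last n))]
            refine (ENNReal.ofReal_le_ofReal_iff hdiv).mpr ?_
            rw [le_div_iff₀ ht]
            linarith
      rw [hslice, volume_simplex_shift n (by omega) _ _]
      have hfin_eq : 1 - t * a (Fin.last n) - ∑ i : Fin n, t * a (Fin.castSucc i)
          = 1 - t * A := by
        rw [← Finset.mul_sum, hA, Fin.sum_univ_castSucc]
        ring
      rw [hfin_eq]
      have hfacpos : (0:ℝ) < n.factorial := by exact_mod_cast n.factorial_pos
      rw [← ENNReal.ofReal_natCast, ← ENNReal.ofReal_mul (by positivity)]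
      congr 1
      field_simp
    rw [lintegral_congr_ae hae]
    have hint : Integrable (fun t => max (1 - t * A) 0 ^ n) γ := by
      have := integrable_wfn (γ := γ) h0 hA_nonneg (n+1-1)
      rwa [hexp] at this
    rw [← MeasureTheory.ofReal_integral_eq_lintegral_ofReal hint
      (Eventually.of_forall fun t => wfn_nonneg _ _ _)]
    congr 1
    rw [archCopula]
    have hsum_eq : (∑ j, pseudoInv (williamson (n+1) γ) (x j)) = ENNReal.ofReal A := by
      calc ∑ j, pseudoInv (williamson (n+1) γ) (x j)
          = ∑ j, ENNReal.ofReal (a j) :=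
            Finset.sum_congr rfl fun j _ => (ENNReal.ofReal_toReal (hfin j)).symm
        _ = ENNReal.ofReal (∑ j, a j) :=
            (ENNReal.ofReal_sum_of_nonneg fun j _ => ha_nonneg j).symm
    rw [hsum_eq, psiExt, if_neg ENNReal.ofReal_ne_top, ENNReal.toReal_ofReal hA_nonneg]
    rw [williamson, hexp]
  · push_neg at hfin
    obtain ⟨j0, hj0⟩ := hfin
    have hae : (fun t => simplexMeasure n (Prod.mk t ⁻¹'
          (Xmap n (williamson (n+1) γ) ⁻¹' (univ.pi fun j => Iic (x j)))))
        =ᵐ[γ] (fun _ => 0) := by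
      filter_upwards [gamma_ae_pos h0 hz] with t ht
      have hms : MeasurableSet (Prod.mk t ⁻¹'
          (Xmap n (williamson (n+1) γ) ⁻¹' (univ.pi fun j => Iic (x j)))) :=
        measurable_prodMk_left hXB
      rw [simplexMeasure_apply n hms]
      have hempty : (Prod.mk t ⁻¹'
            (Xmap n (williamson (n+1) γ) ⁻¹' (univ.pi fun j => Iic (x j)))) ∩ simplexSet n
          = (∅ : Set (Fin n → ℝ)) := by
        ext s
        simp only [mem_inter_iff, mem_preimage, Set.mem_pi, mem_univ, true_implies,
          mem_Iic, mem_setOf_eq, simplexSet, mem_empty_iff_false, iff_false, not_and]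
        rintro hXle hsnn hssum
        rcases Fin.eq_castSucc_or_eq_last j0 with ⟨i, rfl⟩ | rfl
        · have h1 := hXle (Fin.castSucc i)
          rw [Xmap_castSucc] at h1
          have hdiv : 0 ≤ s i / t := div_nonneg (hsnn i) ht.le
          have h2 := (psi_le_iff h0 (hx _).1 (hx _).2 hdiv).mp h1
          rw [hj0] at h2
          exact (ENNReal.ofReal_lt_top.trans_le h2).ne rfl
        · have h1 := hXle (Fin.last n)
          rw [Xmap_last] at h1
          have harg : t⁻¹ - ∑ i : Fin n, s i / t = (1 - ∑ i, s i) / t := by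
            rw [← Finset.sum_div]
            field_simp
          rw [harg] at h1
          have hdiv : 0 ≤ (1 - ∑ i, s i) / t := div_nonneg (by linarith) ht.le
          have h2 := (psi_le_iff h0 (hx _).1 (hx _).2 hdiv).mp h1
          rw [hj0] at h2
          exact (ENNReal.ofReal_lt_top.trans_le h2).ne rfl
      rw [hempty, measure_empty, mul_zero]
    rw [lintegral_congr_ae hae, lintegral_zero]
    rw [archCopula]
    have hsum_top : (∑ j, pseudoInv (williamson (n+1) γ) (x j)) = ∞ :=
      ENNReal.sum_eq_top.mpr ⟨j0, Finset.mem_univ _, hj0⟩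
    rw [hsum_top, psiExt, if_pos rfl, ENNReal.ofReal_zero]

end Construction2
section LipschitzInv

variable {γ : Measure ℝ} [IsProbabilityMeasure γ]

lemma pseudoInv_le_b (h0 : γ (Iio 0) = 0) {d : ℕ} {b y : ℝ} (hb : 0 < b)
    (hby : williamson d γ b ≤ y) (hy1 : y ≤ 1) :
    pseudoInv (williamson d γ) y ≤ ENNReal.ofReal b := by
  have hy0 : 0 ≤ y := le_trans (psi_nonneg d b) hby
  exact (psi_le_iff h0 hy0 hy1 hb.le).mp hby

lemma pseudoInv_lipschitz (h0 : γ (Iio 0) = 0) (hz : γ {0} = 0) {d : ℕ} (hd : 3 ≤ d)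
    {b : ℝ} (hb : 0 < b) (hψb : 0 < williamson d γ b) :
    ∃ K : ℝ≥0, LipschitzOnWith K (fun y => (pseudoInv (williamson d γ) y).toReal)
      (Icc (williamson d γ b) 1) := by
  set c := ((d - 1 : ℕ) : ℝ) * ∫ t, max t 0 * max (1 - t * b) 0 ^ (d - 2) ∂γ with hc
  have hcpos : 0 < c := by
    have h1 := cA_pos h0 hz hd hb hψb
    have hd1 : (0:ℝ) < ((d - 1 : ℕ) : ℝ) := by
      have h2 : 0 < d - 1 := by omega
      exact_mod_cast h2
    exact mul_pos hd1 h1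
  -- basic facts about points in the interval
  have hfacts : ∀ y : ℝ, y ∈ Icc (williamson d γ b) 1 →
      (pseudoInv (williamson d γ) y).toReal ≤ b ∧
      williamson d γ (pseudoInv (williamson d γ) y).toReal = y := by
    intro y hy
    have hle := pseudoInv_le_b h0 hb hy.1 hy.2
    have hne : pseudoInv (williamson d γ) y ≠ ∞ :=
      fun htop => by rw [htop] at hle; exact (ENNReal.ofReal_lt_top.trans_le hle).ne rfl
    exact ⟨ENNReal.toReal_le_of_le_ofReal hb.le hle, psi_attains (psi_cont h0 d) hne⟩
  have main : ∀ y ∈ Icc (williamson d γ b) 1, ∀ y' ∈ Icc (williamson d γ b) 1, y' ≤ y →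
      (pseudoInv (williamson d γ) y).toReal ≤ (pseudoInv (williamson d γ) y').toReal ∧
      (pseudoInv (williamson d γ) y').toReal - (pseudoInv (williamson d γ) y).toReal
        ≤ c⁻¹ * (y - y') := by
    intro y hy y' hy' hle
    obtain ⟨hub, hψu⟩ := hfacts y hy
    obtain ⟨hvb, hψv⟩ := hfacts y' hy'
    set u := (pseudoInv (williamson d γ) y).toReal
    set v := (pseudoInv (williamson d γ) y').toReal
    have hu0 : 0 ≤ u := ENNReal.toReal_nonneg
    have hv0 : 0 ≤ v := ENNReal.toReal_nonneg
    have huv : u ≤ v := by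
      by_contra hlt
      push_neg at hlt
      have h1 : williamson d γ u ≤ williamson d γ v := psi_anti h0 d hv0 hlt.le
      rw [hψu, hψv] at h1
      have hyy : y = y' := le_antisymm h1 hle
      have huvlt : u = v := by unfold u v; rw [hyy]
      rw [huvlt] at hlt
      exact lt_irrefl _ hlt
    have hkey := psi_sub_ge h0 hd hu0 huv hvb hb
    rw [hψu, hψv] at hkey
    refine ⟨huv, ?_⟩
    have h2 : c * (v - u) ≤ y - y' := by
      calc c * (v - u) = ((d - 1 : ℕ) : ℝ) * (v - u)
          * ∫ t, max t 0 * max (1 - t * b) 0 ^ (d - 2) ∂γ := by rw [hc]; ring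
        _ ≤ y - y' := hkey
    rw [inv_mul_eq_div, le_div_iff₀ hcpos]
    linarith
  refine ⟨Real.toNNReal c⁻¹, ?_⟩
  rw [lipschitzOnWith_iff_dist_le_mul]
  intro y hy y' hy'
  rw [Real.coe_toNNReal _ (by positivity), Real.dist_eq, Real.dist_eq]
  rcases le_total y' y with h | h
  · obtain ⟨h1, h2⟩ := main y hy y' hy' h
    rw [abs_of_nonpos (by linarith), abs_of_nonneg (by linarith)]
    linarith
  · obtain ⟨h1, h2⟩ := main y' hy' y hy h
    rw [abs_of_nonneg (by linarith), abs_of_nonpos (by linarith)]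
    linarith

end LipschitzInv
section NuAC

lemma nu_ac (n : ℕ) (hn : 2 ≤ n) (γ : Measure ℝ) [IsProbabilityMeasure γ]
    (h0 : γ (Iio 0) = 0) (hz : γ {0} = 0) (hac : γ ≪ volume) :
    nuMeasure n (williamson (n+1) γ) γ ≪ volume := by
  have hd : 3 ≤ n + 1 := by omega
  have hψm : Measurable (williamson (n+1) γ) := psi_williamson_measurable (n+1) γ
  refine Measure.AbsolutelyContinuous.mk fun N hN hNvol => ?_
  rw [nuMeasure, Measure.map_apply (Xmap_measurable n hψm) hN]
  -- the sequence of cut-off levels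
  obtain ⟨bseq, hbpos, hblt, hbcover⟩ :
      ∃ bseq : ℕ → ℝ, (∀ k, 0 < bseq k) ∧
        (∀ k, ENNReal.ofReal (bseq k) < pseudoInv (williamson (n+1) γ) 0) ∧
        (∀ r : ℝ, 0 < r → ENNReal.ofReal r < pseudoInv (williamson (n+1) γ) 0 →
          ∃ k, r ≤ bseq k) := by
    by_cases htop : pseudoInv (williamson (n+1) γ) 0 = ∞
    · refine ⟨fun k => (k:ℝ)+1, fun k => by positivity,
        fun k => by rw [htop]; exact ENNReal.ofReal_lt_top, ?_⟩
      intro r hr _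
      obtain ⟨k, hk⟩ := exists_nat_ge r
      exact ⟨k, by push_cast; linarith⟩
    · set c0 := (pseudoInv (williamson (n+1) γ) 0).toReal with hc0def
      have hc0 : 0 < c0 := ENNReal.toReal_pos (pseudoInv_zero_pos h0).ne' htop
      refine ⟨fun k => c0 - c0/((k:ℝ)+2), ?_, ?_, ?_⟩
      · intro k
        have h1 : c0/((k:ℝ)+2) < c0 := by
          apply div_lt_self hc0
          have : (0:ℝ) ≤ (k:ℝ) := Nat.cast_nonneg k
          linarith
        linarith
      · intro k
        rw [← ENNReal.ofReal_toReal htop, ← hc0def]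
        apply (ENNReal.ofReal_lt_ofReal_iff hc0).mpr
        have : (0:ℝ) < c0/((k:ℝ)+2) := by positivity
        linarith
      · intro r hr hlt
        have hrc : r < c0 := by
          rw [← ENNReal.ofReal_toReal htop, ← hc0def] at hlt
          exact lt_of_lt_of_le (lt_of_le_of_lt (le_refl r) ((ENNReal.ofReal_lt_ofReal_iff hc0).mp hlt)) le_rfl
        have hpos : 0 < c0 - r := by linarith
        obtain ⟨k, hk⟩ := exists_nat_gt (c0 / (c0 - r))
        refine ⟨k, ?_⟩
        rw [div_lt_iff₀ hpos] at hk
        have h2 : c0 / ((k:ℝ)+2) < c0 - r := by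
          rw [div_lt_iff₀ (by positivity)]
          nlinarith [hpos, hc0]
        linarith
  have hψbpos : ∀ k, 0 < williamson (n+1) γ (bseq k) := by
    intro k
    have hnot : ¬ williamson (n+1) γ (bseq k) ≤ 0 := fun hle =>
      (not_le.mpr (hblt k)) ((psi_le_iff h0 le_rfl zero_le_one (hbpos k).le).mp hle)
    exact lt_of_not_ge hnot
  -- the D sets and the inverse map
  set Dset : ℝ → Set (Fin (n+1) → ℝ) := fun b =>
    {w | (∀ i : Fin n, 0 ≤ w i.castSucc) ∧ (∑ i : Fin n, w i.castSucc) ≤ w (Fin.last n)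
      ∧ w (Fin.last n) ≤ b} with hDdef
  set hmap : (Fin (n+1) → ℝ) → (Fin (n+1) → ℝ) := fun x j =>
    if j = Fin.last n then ∑ j', (pseudoInv (williamson (n+1) γ) (x j')).toReal
    else (pseudoInv (williamson (n+1) γ) (x j)).toReal with hmapdef
  set box : ℕ → Set (Fin (n+1) → ℝ) := fun k =>
    univ.pi fun _ : Fin (n+1) => Icc (williamson (n+1) γ (bseq k)) 1 with hboxdef
  -- key inclusion
  have hincl : ∀ k, (PhiMap n (williamson (n+1) γ) ⁻¹' N) ∩ Dset (bseq k)
      ⊆ hmap '' (N ∩ box k) := by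
    intro k w hw
    obtain ⟨hwN, hw0, hwsum, hwlast⟩ := hw
    have hwcast_le : ∀ i : Fin n, w i.castSucc ≤ bseq k := by
      intro i
      calc w i.castSucc ≤ ∑ i' : Fin n, w i'.castSucc :=
            Finset.single_le_sum (fun i' _ => hw0 i') (Finset.mem_univ i)
        _ ≤ w (Fin.last n) := hwsum
        _ ≤ bseq k := hwlast
    have hlast_arg_mem : 0 ≤ w (Fin.last n) - ∑ i : Fin n, w i.castSucc ∧
        w (Fin.last n) - ∑ i : Fin n, w i.castSucc ≤ bseq k := by
      constructor
      · linarith [hwsum]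
      · have h1 : 0 ≤ ∑ i : Fin n, w i.castSucc :=
          Finset.sum_nonneg fun i _ => hw0 i
        linarith
    -- coordinates of Phi w
    have hcoord_cast : ∀ i : Fin n,
        PhiMap n (williamson (n+1) γ) w i.castSucc = williamson (n+1) γ (w i.castSucc) := by
      intro i
      simp only [PhiMap, if_neg (Fin.castSucc_lt_last i).ne]
    have hcoord_last : PhiMap n (williamson (n+1) γ) w (Fin.last n)
        = williamson (n+1) γ (w (Fin.last n) - ∑ i : Fin n, w i.castSucc) := by
      simp only [PhiMap, if_pos rfl, if_true]
    -- Phi w is in the box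
    have hbox_mem : PhiMap n (williamson (n+1) γ) w ∈ box k := by
      rw [hboxdef]
      intro j _
      rcases Fin.eq_castSucc_or_eq_last j with ⟨i, rfl⟩ | rfl
      · rw [hcoord_cast i]
        constructor
        · exact psi_anti h0 (n+1) (hw0 i) (hwcast_le i)
        · rw [← psi_zero (γ := γ) (n+1)]
          exact psi_anti h0 (n+1) le_rfl (hw0 i)
      · rw [hcoord_last]
        constructor
        · exact psi_anti h0 (n+1) hlast_arg_mem.1 hlast_arg_mem.2
        · rw [← psi_zero (γ := γ) (n+1)]
          exact psi_anti h0 (n+1) le_rfl hlast_arg_mem.1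
    -- pseudoInv recovers the coordinates
    have hrec_cast : ∀ i : Fin n,
        (pseudoInv (williamson (n+1) γ) (PhiMap n (williamson (n+1) γ) w i.castSucc)).toReal
          = w i.castSucc := by
      intro i
      rw [hcoord_cast i]
      have hpos : 0 < williamson (n+1) γ (w i.castSucc) :=
        lt_of_lt_of_le (hψbpos k) (psi_anti h0 (n+1) (hw0 i) (hwcast_le i))
      rw [pseudoInv_psi_eq h0 hz hd (hw0 i) hpos, ENNReal.toReal_ofReal (hw0 i)]
    have hrec_last :
        (pseudoInv (williamson (n+1) γ) (PhiMap n (williamson (n+1) γ) w (Fin.last n))).toReal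
          = w (Fin.last n) - ∑ i : Fin n, w i.castSucc := by
      rw [hcoord_last]
      have hpos : 0 < williamson (n+1) γ (w (Fin.last n) - ∑ i : Fin n, w i.castSucc) :=
        lt_of_lt_of_le (hψbpos k) (psi_anti h0 (n+1) hlast_arg_mem.1 hlast_arg_mem.2)
      rw [pseudoInv_psi_eq h0 hz hd hlast_arg_mem.1 hpos,
        ENNReal.toReal_ofReal hlast_arg_mem.1]
    refine ⟨PhiMap n (williamson (n+1) γ) w, ⟨hwN, hbox_mem⟩, ?_⟩
    funext j
    rw [hmapdef]
    by_cases hj : j = Fin.last n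
    · subst hj
      simp only [if_pos rfl, if_true]
      rw [Fin.sum_univ_castSucc]
      have hsum_cast : ∑ i : Fin n,
          (pseudoInv (williamson (n+1) γ) (PhiMap n (williamson (n+1) γ) w i.castSucc)).toReal
          = ∑ i : Fin n, w i.castSucc :=
        Finset.sum_congr rfl fun i _ => hrec_cast i
      rw [hsum_cast, hrec_last]
      ring
    · simp only [if_neg hj]
      obtain ⟨i, rfl⟩ := (Fin.eq_castSucc_or_eq_last j).resolve_right hj
      exact hrec_cast i
  -- Lipschitz bound for hmap on the box
  have hlipbox : ∀ k, ∃ K : ℝ≥0, LipschitzOnWith K hmap (box k) := by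
    intro k
    obtain ⟨K0, hK0⟩ := pseudoInv_lipschitz h0 hz hd (hbpos k) (hψbpos k)
    refine ⟨(n+1) * K0, ?_⟩
    rw [lipschitzOnWith_iff_dist_le_mul]
    intro x hx x' hx'
    have hK0' := lipschitzOnWith_iff_dist_le_mul.mp hK0
    have hcoord : ∀ j : Fin (n+1),
        dist ((pseudoInv (williamson (n+1) γ) (x j)).toReal)
          ((pseudoInv (williamson (n+1) γ) (x' j)).toReal) ≤ K0 * dist x x' := by
      intro j
      calc dist ((pseudoInv (williamson (n+1) γ) (x j)).toReal)
            ((pseudoInv (williamson (n+1) γ) (x' j)).toReal)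
          ≤ K0 * dist (x j) (x' j) := hK0' (x j) (hx j (mem_univ j)) (x' j) (hx' j (mem_univ j))
        _ ≤ K0 * dist x x' := by
            apply mul_le_mul_of_nonneg_left (dist_le_pi_dist x x' j) K0.coe_nonneg
    rw [dist_pi_le_iff (by positivity)]
    intro j
    rw [hmapdef]
    by_cases hj : j = Fin.last n
    · simp only [if_pos hj]
      rw [Real.dist_eq]
      have h1 : |∑ j', (pseudoInv (williamson (n+1) γ) (x j')).toReal
          - ∑ j', (pseudoInv (williamson (n+1) γ) (x' j')).toReal|
          ≤ ∑ j', |(pseudoInv (williamson (n+1) γ) (x j')).toReal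
            - (pseudoInv (williamson (n+1) γ) (x' j')).toReal| := by
        rw [← Finset.sum_sub_distrib]
        exact Finset.abs_sum_le_sum_abs _ _
      have h2 : ∑ j' : Fin (n+1), |(pseudoInv (williamson (n+1) γ) (x j')).toReal
            - (pseudoInv (williamson (n+1) γ) (x' j')).toReal|
          ≤ ∑ j' : Fin (n+1), (K0 : ℝ) * dist x x' := by
        apply Finset.sum_le_sum
        intro j' _
        have := hcoord j'
        rwa [Real.dist_eq] at this
      have h3 : ∑ j' : Fin (n+1), (K0 : ℝ) * dist x x' = (n+1) * (K0 : ℝ) * dist x x' := by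
        rw [Finset.sum_const, Finset.card_univ, Fintype.card_fin]
        push_cast
        ring
      calc |∑ j', (pseudoInv (williamson (n+1) γ) (x j')).toReal
          - ∑ j', (pseudoInv (williamson (n+1) γ) (x' j')).toReal|
          ≤ (n+1) * (K0 : ℝ) * dist x x' := by linarith [h1, h2, h3.symm.le, h3.le]
        _ = ((((n:ℝ≥0)+1) * K0 : ℝ≥0) : ℝ) * dist x x' := by push_cast; ring
    · simp only [if_neg hj]
      calc dist ((pseudoInv (williamson (n+1) γ) (x j)).toReal)
            ((pseudoInv (williamson (n+1) γ) (x' j)).toReal)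
          ≤ (K0:ℝ) * dist x x' := hcoord j
        _ ≤ ((((n:ℝ≥0)+1) * K0 : ℝ≥0) : ℝ) * dist x x' := by
            have hd0 : 0 ≤ dist x x' := dist_nonneg
            have : (K0:ℝ) ≤ (((n:ℝ≥0)+1) * K0 : ℝ≥0) := by
              push_cast
              nlinarith [K0.coe_nonneg, Nat.cast_nonneg (α := ℝ) n]
            nlinarith [K0.coe_nonneg]
  -- images are null
  have himgnull : ∀ k, volume (hmap '' (N ∩ box k)) = 0 := by
    intro k
    obtain ⟨K, hK⟩ := hlipbox k
    have hNb : volume (N ∩ box k) = 0 := measure_mono_null inter_subset_left hNvol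
    have hKb := (hK.mono (inter_subset_right : N ∩ box k ⊆ box k)).hausdorffMeasure_image_le
      (show (0:ℝ) ≤ (Fintype.card (Fin (n+1)) : ℝ) by positivity)
    rw [show ((μH[(Fintype.card (Fin (n+1)) : ℝ)] : Measure (Fin (n+1) → ℝ))) = volume from
      MeasureTheory.hausdorffMeasure_pi_real] at hKb
    rw [hNb, mul_zero] at hKb
    exact nonpos_iff_eq_zero.mp hKb
  -- a.e. the W-image is in one of the D sets
  have hcover : (γ.prod (simplexMeasure n))
      {p : ℝ × (Fin n → ℝ) | ¬ Wmap n p ∈ ⋃ k, Dset (bseq k)} = 0 := by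
    have hbadT : γ {t : ℝ | ¬(0 < t ∧ ENNReal.ofReal t⁻¹ < pseudoInv (williamson (n+1) γ) 0)}
        = 0 := by
      have := gamma_ae_good h0 hz hd hac
      rwa [ae_iff] at this
    have hbadS : simplexMeasure n ((simplexSet n)ᶜ) = 0 := by
      rw [simplexMeasure_apply n (simplexSet_measurable n).compl, compl_inter_self,
        measure_empty, mul_zero]
    have hsub : {p : ℝ × (Fin n → ℝ) | ¬ Wmap n p ∈ ⋃ k, Dset (bseq k)}
        ⊆ ({t : ℝ | ¬(0 < t ∧ ENNReal.ofReal t⁻¹ < pseudoInv (williamson (n+1) γ) 0)} ×ˢ univ)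
          ∪ (univ ×ˢ (simplexSet n)ᶜ) := by
      rintro ⟨t, s⟩ hp
      simp only [mem_setOf_eq] at hp
      rw [mem_union]
      by_cases hgood : (0 < t ∧ ENNReal.ofReal t⁻¹ < pseudoInv (williamson (n+1) γ) 0)
      · by_cases hS : s ∈ simplexSet n
        · exfalso
          apply hp
          obtain ⟨ht, htinv⟩ := hgood
          obtain ⟨k, hk⟩ := hbcover t⁻¹ (by positivity) htinv
          rw [mem_iUnion]
          refine ⟨k, ?_, ?_, ?_⟩
          · intro i
            rw [Wmap_castSucc]
            exact div_nonneg (hS.1 i) ht.le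
          · rw [Wmap_last]
            have hsum : ∑ i : Fin n, Wmap n (t, s) i.castSucc = (∑ i, s i) / t := by
              calc ∑ i : Fin n, Wmap n (t, s) i.castSucc = ∑ i : Fin n, s i / t :=
                    Finset.sum_congr rfl fun i _ => Wmap_castSucc n (t, s) i
                _ = (∑ i, s i) / t := by rw [Finset.sum_div]
            rw [hsum]
            have hdiv : (∑ i, s i) / t ≤ 1 / t := by
              gcongr
              exact hS.2
            rw [one_div] at hdiv
            exact hdiv
          · rw [Wmap_last]; exact hk
        · exact Or.inr ⟨mem_univ _, hS⟩
      · exact Or.inl ⟨hgood, mem_univ _⟩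
    refine measure_mono_null hsub ?_
    refine measure_union_null ?_ ?_
    · rw [Measure.prod_prod, hbadT, zero_mul]
    · rw [Measure.prod_prod, hbadS, mul_zero]
  -- the preimage identity
  have hXpre : Xmap n (williamson (n+1) γ) ⁻¹' N
      = Wmap n ⁻¹' (PhiMap n (williamson (n+1) γ) ⁻¹' N) := rfl
  -- each term is null
  have hterm : ∀ k, (γ.prod (simplexMeasure n))
      (Wmap n ⁻¹' ((PhiMap n (williamson (n+1) γ) ⁻¹' N) ∩ Dset (bseq k))) = 0 := by
    intro k
    obtain ⟨M', hsub', hM'm, hM'null⟩ := exists_measurable_superset_of_null (himgnull k)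
    have h1 : (PhiMap n (williamson (n+1) γ) ⁻¹' N) ∩ Dset (bseq k) ⊆ M' :=
      (hincl k).trans hsub'
    refine le_antisymm ?_ (zero_le)
    calc (γ.prod (simplexMeasure n))
          (Wmap n ⁻¹' ((PhiMap n (williamson (n+1) γ) ⁻¹' N) ∩ Dset (bseq k)))
        ≤ (γ.prod (simplexMeasure n)) (Wmap n ⁻¹' M') :=
          measure_mono (preimage_mono h1)
      _ = 0 := Wmap_null n γ h0 hz hac hM'm hM'null
  -- put everything together
  set G : Set (ℝ × (Fin n → ℝ)) := {p | Wmap n p ∈ ⋃ k, Dset (bseq k)} with hGdef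
  have hdiff : (γ.prod (simplexMeasure n))
      ((Xmap n (williamson (n+1) γ) ⁻¹' N) \ G) = 0 := by
    refine measure_mono_null ?_ hcover
    intro p hp
    exact hp.2
  have hinter : (γ.prod (simplexMeasure n))
      ((Xmap n (williamson (n+1) γ) ⁻¹' N) ∩ G) = 0 := by
    have hsub2 : (Xmap n (williamson (n+1) γ) ⁻¹' N) ∩ G
        ⊆ ⋃ k, Wmap n ⁻¹' ((PhiMap n (williamson (n+1) γ) ⁻¹' N) ∩ Dset (bseq k)) := by
      rintro p ⟨hp1, hp2⟩
      rw [hGdef, mem_setOf_eq, mem_iUnion] at hp2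
      obtain ⟨k, hk⟩ := hp2
      rw [hXpre] at hp1
      exact mem_iUnion.mpr ⟨k, mem_preimage.mpr ⟨hp1, hk⟩⟩
    exact measure_mono_null hsub2 (measure_iUnion_null hterm)
  refine le_antisymm ?_ (zero_le)
  calc (γ.prod (simplexMeasure n)) (Xmap n (williamson (n+1) γ) ⁻¹' N)
      = (γ.prod (simplexMeasure n))
        (((Xmap n (williamson (n+1) γ) ⁻¹' N) ∩ G)
          ∪ ((Xmap n (williamson (n+1) γ) ⁻¹' N) \ G)) := by
        rw [inter_union_diff]
    _ ≤ (γ.prod (simplexMeasure n)) ((Xmap n (williamson (n+1) γ) ⁻¹' N) ∩ G)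
        + (γ.prod (simplexMeasure n)) ((Xmap n (williamson (n+1) γ) ⁻¹' N) \ G) :=
        measure_union_le _ _
    _ = 0 := by rw [hinter, hdiff, add_zero]

end NuAC
section Final

lemma isCountablySpanning_range_Iic : IsCountablySpanning (range (Iic : ℝ → Set ℝ)) := by
  refine ⟨fun n => Iic (n : ℝ), fun n => ⟨n, rfl⟩, ?_⟩
  ext x
  simp only [mem_iUnion, mem_Iic, mem_univ, iff_true]
  exact exists_nat_ge x

lemma ext_boxes {k : ℕ} {μ ν : Measure (Fin k → ℝ)}
    [IsProbabilityMeasure μ] [IsProbabilityMeasure ν]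
    (hμ1 : μ (univ.pi fun _ => Icc (0:ℝ) 1) = 1) (hν1 : ν (univ.pi fun _ => Icc (0:ℝ) 1) = 1)
    (h : ∀ x : Fin k → ℝ, (∀ i, x i ∈ Icc (0:ℝ) 1) →
      μ (univ.pi fun i => Icc 0 (x i)) = ν (univ.pi fun i => Icc 0 (x i))) : μ = ν := by
  have cubeM : MeasurableSet (univ.pi fun _ : Fin k => Icc (0:ℝ) 1) :=
    MeasurableSet.univ_pi fun _ => measurableSet_Icc
  have trick : ∀ (ρ : Measure (Fin k → ℝ)), IsProbabilityMeasure ρ →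
      ρ (univ.pi fun _ : Fin k => Icc (0:ℝ) 1) = 1 →
      ∀ s : Set (Fin k → ℝ), ρ s = ρ (s ∩ univ.pi fun _ : Fin k => Icc (0:ℝ) 1) := by
    intro ρ hρP hρ s
    have hcompl : ρ ((univ.pi fun _ : Fin k => Icc (0:ℝ) 1)ᶜ) = 0 := by
      rw [measure_compl cubeM (measure_ne_top _ _), hρ, measure_univ, tsub_self]
    refine le_antisymm ?_ (measure_mono inter_subset_left)
    have h3 : ρ (s \ (univ.pi fun _ : Fin k => Icc (0:ℝ) 1)) = 0 :=
      measure_mono_null (fun y hy => hy.2) hcompl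
    calc ρ s = ρ ((s ∩ (univ.pi fun _ : Fin k => Icc (0:ℝ) 1))
          ∪ (s \ (univ.pi fun _ : Fin k => Icc (0:ℝ) 1))) := by rw [inter_union_diff]
      _ ≤ ρ (s ∩ (univ.pi fun _ : Fin k => Icc (0:ℝ) 1))
          + ρ (s \ (univ.pi fun _ : Fin k => Icc (0:ℝ) 1)) := measure_union_le _ _
      _ = ρ (s ∩ (univ.pi fun _ : Fin k => Icc (0:ℝ) 1)) := by rw [h3, add_zero]
  have hIic : ∀ x : Fin k → ℝ,
      μ (univ.pi fun i => Iic (x i)) = ν (univ.pi fun i => Iic (x i)) := by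
    intro x
    by_cases hx : ∀ i, 0 ≤ x i
    · set x' : Fin k → ℝ := fun i => min (x i) 1 with hx'
      have hx'm : ∀ i, x' i ∈ Icc (0:ℝ) 1 := fun i => ⟨le_min (hx i) zero_le_one, min_le_right _ _⟩
      have hinter : (univ.pi fun i => Iic (x i)) ∩ (univ.pi fun _ : Fin k => Icc (0:ℝ) 1)
          = univ.pi fun i => Icc 0 (x' i) := by
        ext y
        simp only [mem_inter_iff, Set.mem_pi, mem_univ, true_implies, mem_Iic, mem_Icc,
          hx', le_min_iff]
        constructor
        · rintro ⟨h1, h2⟩ i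
          exact ⟨(h2 i).1, h1 i, (h2 i).2⟩
        · intro h1
          exact ⟨fun i => (h1 i).2.1, fun i => ⟨(h1 i).1, (h1 i).2.2⟩⟩
      rw [trick μ inferInstance hμ1, trick ν inferInstance hν1, hinter, h x' hx'm]
    · push_neg at hx
      obtain ⟨i0, hi0⟩ := hx
      have hempty : (univ.pi fun i => Iic (x i)) ∩ (univ.pi fun _ : Fin k => Icc (0:ℝ) 1)
          = (∅ : Set (Fin k → ℝ)) := by
        ext y
        simp only [mem_inter_iff, Set.mem_pi, mem_univ, true_implies, mem_Iic, mem_Icc,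
          mem_empty_iff_false, iff_false, not_and]
        intro h1 h2
        have := h1 i0
        have := (h2 i0).1
        linarith
      rw [trick μ inferInstance hμ1, trick ν inferInstance hν1, hempty, measure_empty, measure_empty]
  refine ext_of_generate_finite
    (Set.pi univ '' Set.pi univ fun _ : Fin k => range (Iic : ℝ → Set ℝ)) ?_ ?_ ?_ ?_
  · exact (generateFrom_eq_pi
      (fun _ => ((BorelSpace.measurable_eq (α := ℝ)).trans (borel_eq_generateFrom_Iic ℝ)).symm)
      (fun _ => isCountablySpanning_range_Iic)).symm
  · exact IsPiSystem.pi fun _ => isPiSystem_Iic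
  · rintro s ⟨g, hg, rfl⟩
    choose xf hxf using fun i => hg i (mem_univ i)
    have hgi : Set.pi univ g = univ.pi fun i => Iic (xf i) := by
      apply Set.pi_congr rfl
      intro i _
      exact (hxf i).symm
    rw [hgi]
    exact hIic xf
  · rw [measure_univ, measure_univ]

lemma nu_prob (n : ℕ) (γ : Measure ℝ) [IsProbabilityMeasure γ] :
    IsProbabilityMeasure (nuMeasure n (williamson (n+1) γ) γ) := by
  rw [nuMeasure]
  exact Measure.isProbabilityMeasure_map
    (Xmap_measurable n (psi_williamson_measurable _ γ)).aemeasurable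

lemma arch_apply_one (γ : Measure ℝ) [IsProbabilityMeasure γ]
    (h0 : γ (Iio 0) = 0) (hz : γ {0} = 0) {d : ℕ} (hd : 3 ≤ d) :
    archCopula d (williamson d γ) (fun _ => 1) = 1 := by
  rw [archCopula]
  have h1 : (∑ j : Fin d, pseudoInv (williamson d γ) ((fun _ => (1:ℝ)) j)) = 0 := by
    simp [pseudoInv_one h0 hz hd]
  rw [h1, psiExt, if_neg (by simp : (0:ℝ≥0∞) ≠ ∞), ENNReal.toReal_zero, psi_zero]

lemma nu_bad_null (n : ℕ) (γ : Measure ℝ) [IsProbabilityMeasure γ] :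
    nuMeasure n (williamson (n+1) γ) γ {y : Fin (n+1) → ℝ | ¬ ∀ j, 0 ≤ y j} = 0 := by
  have hψm : Measurable (williamson (n+1) γ) := psi_williamson_measurable (n+1) γ
  have hsm : MeasurableSet {y : Fin (n+1) → ℝ | ¬ ∀ j, 0 ≤ y j} := by
    have : {y : Fin (n+1) → ℝ | ¬ ∀ j, 0 ≤ y j} = (⋂ j, {y : Fin (n+1) → ℝ | 0 ≤ y j})ᶜ := by
      ext y; simp
    rw [this]
    exact (MeasurableSet.iInter fun j =>
      measurableSet_le measurable_const (measurable_pi_apply j)).compl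
  rw [nuMeasure, Measure.map_apply (Xmap_measurable n hψm) hsm]
  have hempty : Xmap n (williamson (n+1) γ) ⁻¹' {y : Fin (n+1) → ℝ | ¬ ∀ j, 0 ≤ y j}
      = (∅ : Set (ℝ × (Fin n → ℝ))) := by
    ext p
    simp only [mem_preimage, mem_setOf_eq, mem_empty_iff_false, iff_false, not_not]
    intro j
    rcases Fin.eq_castSucc_or_eq_last j with ⟨i, rfl⟩ | rfl
    · rw [Xmap_castSucc]; exact psi_nonneg _ _
    · rw [Xmap_last]; exact psi_nonneg _ _
  rw [hempty, measure_empty]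

lemma nu_box (n : ℕ) (hn : 2 ≤ n) (γ : Measure ℝ) [IsProbabilityMeasure γ]
    (h0 : γ (Iio 0) = 0) (hz : γ {0} = 0)
    (x : Fin (n+1) → ℝ) (hx : ∀ j, x j ∈ Icc (0:ℝ) 1) :
    nuMeasure n (williamson (n+1) γ) γ (univ.pi fun j => Icc 0 (x j))
      = ENNReal.ofReal (archCopula (n+1) (williamson (n+1) γ) x) := by
  have hIic := nu_Iic n hn γ h0 hz x hx
  have hbad := nu_bad_null n γ
  refine le_antisymm ?_ ?_
  · rw [← hIic]
    exact measure_mono fun y hy j hj => (hy j hj).2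
  · rw [← hIic]
    have hsub : (univ.pi fun j => Iic (x j))
        ⊆ (univ.pi fun j => Icc 0 (x j)) ∪ {y : Fin (n+1) → ℝ | ¬ ∀ j, 0 ≤ y j} := by
      intro y hy
      by_cases hnn : ∀ j, 0 ≤ y j
      · exact Or.inl fun j hj => ⟨hnn j, hy j hj⟩
      · exact Or.inr hnn
    calc nuMeasure n (williamson (n+1) γ) γ (univ.pi fun j => Iic (x j))
        ≤ nuMeasure n (williamson (n+1) γ) γ ((univ.pi fun j => Icc 0 (x j))
            ∪ {y : Fin (n+1) → ℝ | ¬ ∀ j, 0 ≤ y j}) := measure_mono hsub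
      _ ≤ nuMeasure n (williamson (n+1) γ) γ (univ.pi fun j => Icc 0 (x j))
          + nuMeasure n (williamson (n+1) γ) γ {y : Fin (n+1) → ℝ | ¬ ∀ j, 0 ≤ y j} :=
          measure_union_le _ _
      _ = nuMeasure n (williamson (n+1) γ) γ (univ.pi fun j => Icc 0 (x j)) := by
          rw [hbad, add_zero]

end Final
/-- If `γ ∈ P_{W_d}` is absolutely continuous w.r.t. Lebesgue measure,
then the measure `μ_C` of the Archimedean copula `C = C_{W_d γ}` is absolutely
continuous w.r.t. Lebesgue measure on `[0,1]^d`. -/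
theorem archCopula_absolutelyContinuous_of_williamson_ac
    (d : ℕ) (hd : 3 ≤ d) (γ : Measure ℝ) (hγ : memPW d γ) (hac : γ ≪ volume)
    (μ : Measure (Fin d → ℝ)) (hprob : IsProbabilityMeasure μ)
    (hμ : ∀ x : Fin d → ℝ, (∀ i, x i ∈ Icc (0 : ℝ) 1) →
      μ (Set.univ.pi fun i => Icc 0 (x i)) =
        ENNReal.ofReal (archCopula d (williamson d γ) x)) :
    μ ≪ volume := by
  obtain ⟨hprobγ, h0, hz, -⟩ := hγ
  obtain ⟨n, rfl⟩ : ∃ n, d = n + 1 := ⟨d - 1, by omega⟩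
  have hn : 2 ≤ n := by omega
  haveI := nu_prob n γ
  have hμcube : μ (univ.pi fun _ : Fin (n+1) => Icc (0:ℝ) 1) = 1 := by
    have h1 := hμ (fun _ => 1) (fun i => ⟨zero_le_one, le_rfl⟩)
    rw [h1, arch_apply_one γ h0 hz (by omega), ENNReal.ofReal_one]
  have hνcube : nuMeasure n (williamson (n+1) γ) γ (univ.pi fun _ : Fin (n+1) => Icc (0:ℝ) 1)
      = 1 := by
    have h1 := nu_box n hn γ h0 hz (fun _ => 1) (fun i => ⟨zero_le_one, le_rfl⟩)
    rw [h1, arch_apply_one γ h0 hz (by omega), ENNReal.ofReal_one]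
  have heq : μ = nuMeasure n (williamson (n+1) γ) γ := by
    apply ext_boxes hμcube hνcube
    intro x hx
    rw [hμ x hx, nu_box n hn γ h0 hz x hx]
  rw [heq]
  exact nu_ac n hn γ h0 hz hac
end
end
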